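/- arXiv:1307.3355 — 12 statements merged into one kernel-verified Lean document; each statement's English description precedes it below -/
import Mathlib

section
/- Let K₂ : ℝ × ℝ → ℝ be continuously differentiable and symmetric, i.e. K₂(s₁,s₂) = K₂(s₂,s₁) for all s₁,s₂. Define f(t,ω) = ∫_{t-ω}^{t} ∫_{t-ω}^{t} K₂(s₁,s₂) ds₁ ds₂. Then for all 0 < ω < t, the mixed second partial derivatives of f exist and K₂(t, t-ω) = ( ∂²f/∂t∂ω (t,ω) + ∂²f/∂ω² (t,ω) ) / 2. -/
open intervalIntegral

section Helpers
open MeasureTheory Set intervalIntegral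

private lemma hasFDerivAt_of_partials (g g₁ g₂ : ℝ × ℝ → ℝ)
    (hc : Continuous g₁)
    (h₁ : ∀ p : ℝ × ℝ, HasDerivAt (fun x => g (x, p.2)) (g₁ p) p.1)
    (h₂ : ∀ p : ℝ × ℝ, HasDerivAt (fun y => g (p.1, y)) (g₂ p) p.2)
    (p : ℝ × ℝ) :
    HasFDerivAt g (g₁ p • ContinuousLinearMap.fst ℝ ℝ ℝ
      + g₂ p • ContinuousLinearMap.snd ℝ ℝ ℝ) p := by
  rw [hasFDerivAt_iff_isLittleO_nhds_zero, Asymptotics.isLittleO_iff]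
  intro c hc0
  -- continuity of g₁ at p
  obtain ⟨δ, hδ0, hδ⟩ := Metric.continuousAt_iff.mp hc.continuousAt (c / 2) (by positivity)
  -- second partial at p, as little-o
  have h2o : ∀ᶠ y in nhds p.2,
      ‖g (p.1, y) - g (p.1, p.2) - (y - p.2) • g₂ p‖ ≤ c / 2 * ‖y - p.2‖ :=
    Asymptotics.isLittleO_iff.mp (hasDerivAt_iff_isLittleO.mp (h₂ p)) (by positivity)
  have h2o' : ∀ᶠ q : ℝ × ℝ in nhds (0 : ℝ × ℝ),
      ‖g (p.1, p.2 + q.2) - g (p.1, p.2) - q.2 • g₂ p‖ ≤ c / 2 * ‖q.2‖ := by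
    have ht : Filter.Tendsto (fun q : ℝ × ℝ => p.2 + q.2) (nhds 0) (nhds p.2) := by
      have : Filter.Tendsto (fun q : ℝ × ℝ => p.2 + q.2) (nhds 0) (nhds (p.2 + (0:ℝ×ℝ).2)) :=
        (continuous_const.add continuous_snd).tendsto 0
      simpa using this
    filter_upwards [ht.eventually h2o] with q hq
    simpa using hq
  have hball : ∀ᶠ q : ℝ × ℝ in nhds (0 : ℝ × ℝ), ‖q‖ < δ :=
    Metric.eventually_nhds_iff.mpr ⟨δ, hδ0, fun {q} hq => by
      simpa [dist_eq_norm] using hq⟩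
  filter_upwards [h2o', hball] with q hq2 hqδ
  set x := p.1 + q.1 with hx
  set y := p.2 + q.2 with hy
  have hnq : ‖q‖ = max |q.1| |q.2| := by
    rw [Prod.norm_def]; simp [Real.norm_eq_abs]
  -- first bracket: FTC along first variable
  have hcont1 : Continuous fun u => g₁ (u, y) :=
    hc.comp (continuous_id.prodMk continuous_const)
  have hft : ∫ u in p.1..x, g₁ (u, y) = g (x, y) - g (p.1, y) :=
    intervalIntegral.integral_eq_sub_of_hasDerivAt (f := fun u => g (u, y)) (fun u _ => h₁ (u, y))
      (hcont1.intervalIntegrable _ _)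
  have hA : g (x, y) - g (p.1, y) - g₁ p * q.1 = ∫ u in p.1..x, (g₁ (u, y) - g₁ p) := by
    rw [intervalIntegral.integral_sub (hcont1.intervalIntegrable _ _)
      (intervalIntegrable_const), hft, intervalIntegral.integral_const]
    simp [hx, smul_eq_mul]
    ring
  have hAbound : ‖g (x, y) - g (p.1, y) - g₁ p * q.1‖ ≤ c / 2 * |q.1| := by
    rw [hA]
    have : ∀ u ∈ Set.uIoc p.1 x, ‖g₁ (u, y) - g₁ p‖ ≤ c / 2 := by
      intro u hu
      have hu' : |u - p.1| ≤ |q.1| := by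
        rcases le_total p.1 x with h | h
        · rw [Set.uIoc_of_le h] at hu
          have h1 : p.1 < u := hu.1
          have h2 : u ≤ x := hu.2
          rw [abs_of_nonneg (by linarith)]
          calc u - p.1 ≤ x - p.1 := by linarith
            _ = q.1 := by rw [hx]; ring
            _ ≤ |q.1| := le_abs_self _
        · rw [Set.uIoc_of_ge h] at hu
          have h1 : x < u := hu.1
          have h2 : u ≤ p.1 := hu.2
          rw [abs_of_nonpos (by linarith), neg_sub]
          calc p.1 - u ≤ p.1 - x := by linarith
            _ = -q.1 := by rw [hx]; ring
            _ ≤ |q.1| := neg_le_abs _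
      have hd : dist (u, y) p < δ := by
        rw [Prod.dist_eq]
        have h1 : dist u p.1 < δ := by
          rw [Real.dist_eq]
          calc |u - p.1| ≤ |q.1| := hu'
            _ ≤ ‖q‖ := by rw [hnq]; exact le_max_left _ _
            _ < δ := hqδ
        have h2 : dist y p.2 < δ := by
          rw [Real.dist_eq, hy]
          calc |p.2 + q.2 - p.2| = |q.2| := by ring_nf
            _ ≤ ‖q‖ := by rw [hnq]; exact le_max_right _ _
            _ < δ := hqδ
        exact max_lt h1 h2
      have := hδ hd
      rw [Real.dist_eq] at this
      rw [Real.norm_eq_abs]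
      exact this.le
    calc ‖∫ u in p.1..x, (g₁ (u, y) - g₁ p)‖ ≤ c / 2 * |x - p.1| :=
          intervalIntegral.norm_integral_le_of_norm_le_const this
      _ = c / 2 * |q.1| := by rw [hx]; ring_nf
  -- combine
  have hsum : g (p + q) - g p - (g₁ p • ContinuousLinearMap.fst ℝ ℝ ℝ
      + g₂ p • ContinuousLinearMap.snd ℝ ℝ ℝ) q
      = (g (x, y) - g (p.1, y) - g₁ p * q.1)
        + (g (p.1, y) - g (p.1, p.2) - q.2 • g₂ p) := by
    have hpq : p + q = (x, y) := by rw [hx, hy]; rfl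
    have hp : p = (p.1, p.2) := rfl
    rw [hpq]
    simp [smul_eq_mul]
    ring
  rw [hsum]
  calc ‖(g (x, y) - g (p.1, y) - g₁ p * q.1)
        + (g (p.1, y) - g (p.1, p.2) - q.2 • g₂ p)‖
      ≤ ‖g (x, y) - g (p.1, y) - g₁ p * q.1‖
        + ‖g (p.1, y) - g (p.1, p.2) - q.2 • g₂ p‖ := norm_add_le _ _
    _ ≤ c / 2 * |q.1| + c / 2 * ‖q.2‖ := add_le_add hAbound hq2
    _ ≤ c / 2 * ‖q‖ + c / 2 * ‖q‖ := by
        apply add_le_add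
        · apply mul_le_mul_of_nonneg_left _ (by positivity)
          rw [hnq]; exact le_max_left _ _
        · apply mul_le_mul_of_nonneg_left _ (by positivity)
          rw [hnq, Real.norm_eq_abs]; exact le_max_right _ _
    _ = c * ‖q‖ := by ring

/-- Differentiation under the interval integral for continuous `G` with continuous
partial derivative `G'` in the parameter. -/
private lemma hasDerivAt_param (G G' : ℝ × ℝ → ℝ) (hG : Continuous G) (hG' : Continuous G')
    (hd : ∀ p : ℝ × ℝ, HasDerivAt (fun x => G (x, p.2)) (G' p) p.1)
    (c x₀ y : ℝ) :
    HasDerivAt (fun x => ∫ s in c..y, G (x, s)) (∫ s in c..y, G' (x₀, s)) x₀ := by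
  obtain ⟨C, hC⟩ : ∃ C, ∀ q ∈ Icc (x₀ - 1) (x₀ + 1) ×ˢ uIcc c y, ‖G' q‖ ≤ C :=
    (isCompact_Icc.prod isCompact_uIcc).exists_bound_of_continuousOn hG'.continuousOn
  refine (intervalIntegral.hasDerivAt_integral_of_dominated_loc_of_deriv_le
    (F := fun x t => G (x, t)) (F' := fun x t => G' (x, t)) (bound := fun _ => C)
    (Metric.ball_mem_nhds x₀ one_pos) ?_ ?_ ?_ ?_ ?_ ?_).2
  · exact Filter.Eventually.of_forall fun x =>
      (hG.comp (continuous_const.prodMk continuous_id)).aestronglyMeasurable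
  · exact (hG.comp (continuous_const.prodMk continuous_id)).intervalIntegrable _ _
  · exact (hG'.comp (continuous_const.prodMk continuous_id)).aestronglyMeasurable
  · refine Filter.Eventually.of_forall fun t ht x hx => hC (x, t) ⟨?_, Set.uIoc_subset_uIcc ht⟩
    rw [Metric.mem_ball, Real.dist_eq] at hx
    obtain ⟨h1, h2⟩ := abs_sub_lt_iff.mp hx
    exact ⟨by linarith, by linarith⟩
  · exact intervalIntegrable_const
  · exact Filter.Eventually.of_forall fun t _ x _ => hd (x, t)

private noncomputable def Pf (K : ℝ × ℝ → ℝ) (p : ℝ × ℝ) : ℝ :=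
  ∫ s in (0:ℝ)..p.2, K (p.1, s)

private noncomputable def DK (K : ℝ × ℝ → ℝ) (p : ℝ × ℝ) : ℝ := fderiv ℝ K p (1, 0)

private noncomputable def DP (K : ℝ × ℝ → ℝ) (p : ℝ × ℝ) : ℝ :=
  ∫ s in (0:ℝ)..p.2, DK K (p.1, s)

private noncomputable def Phi (K : ℝ × ℝ → ℝ) (p : ℝ × ℝ) : ℝ :=
  ∫ s in (0:ℝ)..p.1, Pf K (s, p.2)

private lemma continuous_Pf (K : ℝ × ℝ → ℝ) (hK : Continuous K) : Continuous (Pf K) :=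
  intervalIntegral.continuous_parametric_intervalIntegral_of_continuous
    (f := fun (p : ℝ × ℝ) t => K (p.1, t))
    (hK.comp (continuous_fst.fst.prodMk continuous_snd)) continuous_snd

private lemma continuous_DK (K : ℝ × ℝ → ℝ) (hK : ContDiff ℝ 1 K) : Continuous (DK K) := by
  have h := hK.continuous_fderiv one_ne_zero
  exact h.clm_apply continuous_const

private lemma hasDerivAt_DK (K : ℝ × ℝ → ℝ) (hK : ContDiff ℝ 1 K) (p : ℝ × ℝ) :
    HasDerivAt (fun x => K (x, p.2)) (DK K p) p.1 := by
  have h := (hK.differentiable one_ne_zero (p.1, p.2)).hasFDerivAt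
  have hγ : HasDerivAt (fun x : ℝ => (x, p.2)) ((1:ℝ), (0:ℝ)) p.1 :=
    (hasDerivAt_id p.1).prodMk (hasDerivAt_const p.1 p.2)
  have := h.comp_hasDerivAt p.1 hγ
  exact this

private lemma continuous_DP (K : ℝ × ℝ → ℝ) (hK : ContDiff ℝ 1 K) : Continuous (DP K) :=
  intervalIntegral.continuous_parametric_intervalIntegral_of_continuous
    (f := fun (p : ℝ × ℝ) t => DK K (p.1, t))
    ((continuous_DK K hK).comp (continuous_fst.fst.prodMk continuous_snd)) continuous_snd

private lemma hasDerivAt_Pf_fst (K : ℝ × ℝ → ℝ) (hK : ContDiff ℝ 1 K) (p : ℝ × ℝ) :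
    HasDerivAt (fun x => Pf K (x, p.2)) (DP K p) p.1 :=
  hasDerivAt_param K (DK K) hK.continuous (continuous_DK K hK) (hasDerivAt_DK K hK) 0 p.1 p.2

private lemma hasDerivAt_Pf_snd (K : ℝ × ℝ → ℝ) (hK : Continuous K) (p : ℝ × ℝ) :
    HasDerivAt (fun y => Pf K (p.1, y)) (K p) p.2 := by
  have hc : Continuous fun s : ℝ => K (p.1, s) :=
    hK.comp (continuous_const.prodMk continuous_id)
  have := (hc.integral_hasStrictDerivAt 0 p.2).hasDerivAt
  simpa [Pf] using this

private lemma hasFDerivAt_Pf (K : ℝ × ℝ → ℝ) (hK : ContDiff ℝ 1 K) (p : ℝ × ℝ) :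
    HasFDerivAt (Pf K) (DP K p • ContinuousLinearMap.fst ℝ ℝ ℝ
      + K p • ContinuousLinearMap.snd ℝ ℝ ℝ) p :=
  hasFDerivAt_of_partials (Pf K) (DP K) K (continuous_DP K hK)
    (hasDerivAt_Pf_fst K hK) (hasDerivAt_Pf_snd K hK.continuous) p

private lemma hasFDerivAt_Phi (K : ℝ × ℝ → ℝ) (hK : ContDiff ℝ 1 K)
    (hsymm : ∀ s₁ s₂ : ℝ, K (s₁, s₂) = K (s₂, s₁)) (p : ℝ × ℝ) :
    HasFDerivAt (Phi K) (Pf K p • ContinuousLinearMap.fst ℝ ℝ ℝ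
      + Pf K (p.2, p.1) • ContinuousLinearMap.snd ℝ ℝ ℝ) p := by
  refine hasFDerivAt_of_partials (Phi K) (Pf K) (fun q => Pf K (q.2, q.1))
    (continuous_Pf K hK.continuous) ?_ ?_ p
  · intro q
    have := ((continuous_Pf K hK.continuous).comp
      (continuous_id.prodMk continuous_const : Continuous fun s : ℝ => (s, q.2))
      |>.integral_hasStrictDerivAt (a := 0) (b := q.1)).hasDerivAt
    simpa [Phi] using this
  · intro q
    have hG : Continuous fun r : ℝ × ℝ => Pf K (r.2, r.1) :=
      (continuous_Pf K hK.continuous).comp (continuous_snd.prodMk continuous_fst)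
    have hG' : Continuous fun r : ℝ × ℝ => K (r.2, r.1) :=
      hK.continuous.comp (continuous_snd.prodMk continuous_fst)
    have hd : ∀ r : ℝ × ℝ, HasDerivAt (fun y => Pf K (r.2, y)) (K (r.2, r.1)) r.1 :=
      fun r => hasDerivAt_Pf_snd K hK.continuous (r.2, r.1)
    have := hasDerivAt_param (fun r : ℝ × ℝ => Pf K (r.2, r.1))
      (fun r : ℝ × ℝ => K (r.2, r.1)) hG hG' hd 0 q.2 q.1
    have heq : (∫ s in (0:ℝ)..q.1, K ((q.2, s).2, (q.2, s).1)) = Pf K (q.2, q.1) := by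
      rw [Pf]
      exact intervalIntegral.integral_congr fun s _ => hsymm s q.2
    rw [heq] at this
    exact this

end Helpers

/-- Inversion formula for the quadratic Volterra kernel:
`K₂(t, t-ω) = (f''_{tω}(t,ω) + f''_{ωω}(t,ω)) / 2`, where `f(t,ω)` is the double
integral of the symmetric kernel `K₂` over the square `[t-ω,t] × [t-ω,t]`. -/
theorem stmt0 (K₂ : ℝ × ℝ → ℝ) (hK : ContDiff ℝ 1 K₂)
    (hsymm : ∀ s₁ s₂ : ℝ, K₂ (s₁, s₂) = K₂ (s₂, s₁))
    (f : ℝ → ℝ → ℝ)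
    (hf : ∀ t ω : ℝ, f t ω = ∫ s₁ in (t - ω)..t, ∫ s₂ in (t - ω)..t, K₂ (s₁, s₂))
    (t ω : ℝ) (hω : 0 < ω) (hωt : ω < t) :
    DifferentiableAt ℝ (fun t' => deriv (fun ω' => f t' ω') ω) t ∧
    DifferentiableAt ℝ (fun ω' => deriv (fun ω'' => f t ω'') ω') ω ∧
    K₂ (t, t - ω) =
      (deriv (fun t' => deriv (fun ω' => f t' ω') ω) t +
        deriv (fun ω' => deriv (fun ω'' => f t ω'') ω') ω) / 2 := by
  have hKc := hK.continuous
  have hPc := continuous_Pf K₂ hKc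
  have hsplit : ∀ (g : ℝ → ℝ), Continuous g → ∀ a b : ℝ,
      (∫ s in a..b, g s) = (∫ s in (0:ℝ)..b, g s) - ∫ s in (0:ℝ)..a, g s :=
    fun g hg a b => (intervalIntegral.integral_interval_sub_left
      (hg.intervalIntegrable _ _) (hg.intervalIntegrable _ _)).symm
  -- express f through Phi
  have hfΦ : ∀ t' ω' : ℝ, f t' ω' = Phi K₂ (t', t') - Phi K₂ (t' - ω', t')
      - Phi K₂ (t', t' - ω') + Phi K₂ (t' - ω', t' - ω') := by
    intro t' ω'
    have hrow : ∀ y : ℝ, Continuous fun s : ℝ => Pf K₂ (s, y) :=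
      fun y => hPc.comp (continuous_id.prodMk continuous_const)
    rw [hf]
    have h1 : ∀ s₁ : ℝ, (∫ s₂ in (t' - ω')..t', K₂ (s₁, s₂))
        = Pf K₂ (s₁, t') - Pf K₂ (s₁, t' - ω') :=
      fun s₁ => hsplit (fun s₂ => K₂ (s₁, s₂))
        (hKc.comp (continuous_const.prodMk continuous_id)) _ _
    rw [intervalIntegral.integral_congr (g := fun s₁ =>
      Pf K₂ (s₁, t') - Pf K₂ (s₁, t' - ω')) (fun s₁ _ => h1 s₁)]
    rw [intervalIntegral.integral_sub ((hrow t').intervalIntegrable _ _)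
      ((hrow (t' - ω')).intervalIntegrable _ _)]
    rw [hsplit (fun s => Pf K₂ (s, t')) (hrow t') (t' - ω') t',
        hsplit (fun s => Pf K₂ (s, t' - ω')) (hrow (t' - ω')) (t' - ω') t']
    simp only [Phi]
    ring
  have hΦ := hasFDerivAt_Phi K₂ hK hsymm
  -- first derivative in ω
  have hH : ∀ t' ω'' : ℝ, HasDerivAt (fun ω' => f t' ω')
      (2 * Pf K₂ (t' - ω'', t') - 2 * Pf K₂ (t' - ω'', t' - ω'')) ω'' := by
    intro t' ω''
    have hfun : (fun ω' => f t' ω') = fun ω' => Phi K₂ (t', t') - Phi K₂ (t' - ω', t')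
        - Phi K₂ (t', t' - ω') + Phi K₂ (t' - ω', t' - ω') := funext fun ω' => hfΦ t' ω'
    rw [hfun]
    have hγ1 : HasDerivAt (fun ω' : ℝ => (t' - ω', t')) ((-1 : ℝ), (0:ℝ)) ω'' :=
      ((hasDerivAt_id ω'').const_sub t').prodMk (hasDerivAt_const _ _)
    have hγ2 : HasDerivAt (fun ω' : ℝ => (t', t' - ω')) ((0 : ℝ), (-1:ℝ)) ω'' :=
      (hasDerivAt_const _ _).prodMk ((hasDerivAt_id ω'').const_sub t')
    have hγ3 : HasDerivAt (fun ω' : ℝ => (t' - ω', t' - ω')) ((-1 : ℝ), (-1:ℝ)) ω'' :=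
      ((hasDerivAt_id ω'').const_sub t').prodMk ((hasDerivAt_id ω'').const_sub t')
    have h1 : HasDerivAt (fun ω' => Phi K₂ (t' - ω', t'))
        (-Pf K₂ (t' - ω'', t')) ω'' := by
      have := (hΦ (t' - ω'', t')).comp_hasDerivAt ω'' hγ1
      simp only [Function.comp_def] at this
      refine this.congr_deriv ?_
      simp
    have h2 : HasDerivAt (fun ω' => Phi K₂ (t', t' - ω'))
        (-Pf K₂ (t' - ω'', t')) ω'' := by
      have := (hΦ (t', t' - ω'')).comp_hasDerivAt ω'' hγ2
      simp only [Function.comp_def] at this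
      refine this.congr_deriv ?_
      simp
    have h3 : HasDerivAt (fun ω' => Phi K₂ (t' - ω', t' - ω'))
        (-Pf K₂ (t' - ω'', t' - ω'') - Pf K₂ (t' - ω'', t' - ω'')) ω'' := by
      have := (hΦ (t' - ω'', t' - ω'')).comp_hasDerivAt ω'' hγ3
      simp only [Function.comp_def] at this
      refine this.congr_deriv ?_
      simp [sub_eq_add_neg]
    have hsum := (((hasDerivAt_const ω'' (Phi K₂ (t', t'))).sub h1).sub h2).add h3
    refine hsum.congr_deriv ?_
    ring
  have hPF := hasFDerivAt_Pf K₂ hK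
  -- second derivative in t
  have hγt1 : HasDerivAt (fun t' : ℝ => (t' - ω, t')) ((1:ℝ), (1:ℝ)) t :=
    ((hasDerivAt_id t).sub_const ω).prodMk (hasDerivAt_id t)
  have hγt2 : HasDerivAt (fun t' : ℝ => (t' - ω, t' - ω)) ((1:ℝ), (1:ℝ)) t :=
    ((hasDerivAt_id t).sub_const ω).prodMk ((hasDerivAt_id t).sub_const ω)
  have k1 : HasDerivAt (fun t' => Pf K₂ (t' - ω, t'))
      (DP K₂ (t - ω, t) + K₂ (t - ω, t)) t := by
    have := HasFDerivAt.comp_hasDerivAt (f := fun t' : ℝ => (t' - ω, t'))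
      t (hPF (t - ω, t)) hγt1
    simp only [Function.comp_def] at this
    refine this.congr_deriv ?_
    simp
  have k2 : HasDerivAt (fun t' => Pf K₂ (t' - ω, t' - ω))
      (DP K₂ (t - ω, t - ω) + K₂ (t - ω, t - ω)) t := by
    have := HasFDerivAt.comp_hasDerivAt (f := fun t' : ℝ => (t' - ω, t' - ω))
      t (hPF (t - ω, t - ω)) hγt2
    simp only [Function.comp_def] at this
    refine this.congr_deriv ?_
    simp
  have hT : HasDerivAt (fun t' => 2 * Pf K₂ (t' - ω, t') - 2 * Pf K₂ (t' - ω, t' - ω))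
      (2 * (DP K₂ (t - ω, t) + K₂ (t - ω, t))
        - 2 * (DP K₂ (t - ω, t - ω) + K₂ (t - ω, t - ω))) t :=
    (k1.const_mul 2).sub (k2.const_mul 2)
  -- second derivative in ω
  have hγw1 : HasDerivAt (fun ω' : ℝ => (t - ω', t)) ((-1:ℝ), (0:ℝ)) ω :=
    ((hasDerivAt_id ω).const_sub t).prodMk (hasDerivAt_const _ _)
  have hγw2 : HasDerivAt (fun ω' : ℝ => (t - ω', t - ω')) ((-1:ℝ), (-1:ℝ)) ω :=
    ((hasDerivAt_id ω).const_sub t).prodMk ((hasDerivAt_id ω).const_sub t)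
  have m1 : HasDerivAt (fun ω' => Pf K₂ (t - ω', t)) (-DP K₂ (t - ω, t)) ω := by
    have := (hPF (t - ω, t)).comp_hasDerivAt ω hγw1
    simp only [Function.comp_def] at this
    refine this.congr_deriv ?_
    simp
  have m2 : HasDerivAt (fun ω' => Pf K₂ (t - ω', t - ω'))
      (-DP K₂ (t - ω, t - ω) - K₂ (t - ω, t - ω)) ω := by
    have := (hPF (t - ω, t - ω)).comp_hasDerivAt ω hγw2
    simp only [Function.comp_def] at this
    refine this.congr_deriv ?_
    simp [sub_eq_add_neg]
  have hW : HasDerivAt (fun ω' => 2 * Pf K₂ (t - ω', t) - 2 * Pf K₂ (t - ω', t - ω'))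
      (2 * (-DP K₂ (t - ω, t))
        - 2 * (-DP K₂ (t - ω, t - ω) - K₂ (t - ω, t - ω))) ω :=
    (m1.const_mul 2).sub (m2.const_mul 2)
  -- identify the first-derivative functions
  have e1 : (fun t' => deriv (fun ω' => f t' ω') ω)
      = fun t' => 2 * Pf K₂ (t' - ω, t') - 2 * Pf K₂ (t' - ω, t' - ω) :=
    funext fun t' => (hH t' ω).deriv
  have e2 : (fun ω' => deriv (fun ω'' => f t ω'') ω')
      = fun ω' => 2 * Pf K₂ (t - ω', t) - 2 * Pf K₂ (t - ω', t - ω') :=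
    funext fun ω' => (hH t ω').deriv
  refine ⟨?_, ?_, ?_⟩
  · rw [e1]; exact hT.differentiableAt
  · rw [e2]; exact hW.differentiableAt
  · rw [e1, e2, hT.deriv, hW.deriv, hsymm t (t - ω)]
    ring
end

section
/- Let λ ≠ 0 be real and let y : [0,T] → ℝ be continuously differentiable with y(0) = 0 and 1 + 4λ·y(t) > 0 for all t ∈ [0,T]. Then the function x*(t) = y'(t) / √(1 + 4λ·y(t)) is continuous on [0,T] and is the unique continuous function x on [0,T] satisfying the quadratic Volterra equation of the first kind ∫₀ᵗ x(s) ds + λ·(∫₀ᵗ x(s) ds)² = y(t) for all t ∈ [0,T]. -/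
open Set intervalIntegral

/-- For `λ ≠ 0` and `y ∈ C¹[0,T]` with `y 0 = 0` and `1 + 4λ y(t) > 0` on `[0,T]`,
the function `x*(t) = y'(t)/√(1+4λ y(t))` is continuous on `[0,T]` and is the unique
continuous solution of `∫₀ᵗ x + λ (∫₀ᵗ x)² = y(t)` on `[0,T]`. -/
theorem stmt1 (T lam : ℝ) (hT : 0 < T) (hlam : lam ≠ 0)
    (y y' : ℝ → ℝ) (hy0 : y 0 = 0)
    (hy' : ∀ t ∈ Icc (0:ℝ) T, HasDerivWithinAt y (y' t) (Icc 0 T) t)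
    (hy'c : ContinuousOn y' (Icc 0 T))
    (hpos : ∀ t ∈ Icc (0:ℝ) T, 0 < 1 + 4 * lam * y t) :
    ContinuousOn (fun t => y' t / Real.sqrt (1 + 4 * lam * y t)) (Icc 0 T) ∧
    (∀ t ∈ Icc (0:ℝ) T,
      (∫ s in (0:ℝ)..t, y' s / Real.sqrt (1 + 4 * lam * y s)) +
        lam * (∫ s in (0:ℝ)..t, y' s / Real.sqrt (1 + 4 * lam * y s)) ^ 2 = y t) ∧
    (∀ x : ℝ → ℝ, ContinuousOn x (Icc 0 T) →
      (∀ t ∈ Icc (0:ℝ) T, (∫ s in (0:ℝ)..t, x s) + lam * (∫ s in (0:ℝ)..t, x s) ^ 2 = y t) →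
      ∀ t ∈ Icc (0:ℝ) T, x t = y' t / Real.sqrt (1 + 4 * lam * y t)) := by
  set xs : ℝ → ℝ := fun t => y' t / Real.sqrt (1 + 4 * lam * y t) with hxs
  set g : ℝ → ℝ := fun t => (Real.sqrt (1 + 4 * lam * y t) - 1) / (2 * lam) with hgdef
  have hyc : ContinuousOn y (Icc 0 T) := fun t ht => (hy' t ht).continuousWithinAt
  have hsq_pos : ∀ t ∈ Icc (0:ℝ) T, 0 < Real.sqrt (1 + 4 * lam * y t) :=
    fun t ht => Real.sqrt_pos.2 (hpos t ht)
  have huc : ContinuousOn (fun t => 1 + 4 * lam * y t) (Icc 0 T) :=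
    (continuousOn_const.add (continuousOn_const.mul hyc))
  have hsc : ContinuousOn (fun t => Real.sqrt (1 + 4 * lam * y t)) (Icc 0 T) :=
    Real.continuous_sqrt.comp_continuousOn huc
  have hxc : ContinuousOn xs (Icc 0 T) :=
    hy'c.div hsc (fun t ht => (hsq_pos t ht).ne')
  -- derivative of g within Icc
  have hgd : ∀ t ∈ Icc (0:ℝ) T, HasDerivWithinAt g (xs t) (Icc 0 T) t := by
    intro t ht
    have h1 : HasDerivWithinAt (fun s => 1 + 4 * lam * y s) (4 * lam * y' t) (Icc 0 T) t := by
      simpa using ((hy' t ht).const_mul (4 * lam)).const_add 1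
    have h2 : HasDerivWithinAt (fun s => Real.sqrt (1 + 4 * lam * y s))
        (1 / (2 * Real.sqrt (1 + 4 * lam * y t)) * (4 * lam * y' t)) (Icc 0 T) t :=
      (Real.hasDerivAt_sqrt (hpos t ht).ne').comp_hasDerivWithinAt t h1
    have h3 := (h2.sub_const 1).div_const (2 * lam)
    refine h3.congr_deriv ?_
    have hs := (hsq_pos t ht).ne'
    show _ = y' t / Real.sqrt (1 + 4 * lam * y t)
    field_simp
    ring
  have hgc : ContinuousOn g (Icc 0 T) := (hsc.sub continuousOn_const).div_const _
  have hg0 : g 0 = 0 := by simp [hgdef, hy0]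
  -- key algebraic identity: g + lam g^2 = y
  have halg : ∀ t ∈ Icc (0:ℝ) T, g t + lam * g t ^ 2 = y t := by
    intro t ht
    have hsq : Real.sqrt (1 + 4 * lam * y t) ^ 2 = 1 + 4 * lam * y t :=
      Real.sq_sqrt (hpos t ht).le
    simp only [hgdef]
    field_simp
    nlinarith [hsq]
  -- FTC: ∫₀ᵗ xs = g t
  have key : ∀ t ∈ Icc (0:ℝ) T, (∫ s in (0:ℝ)..t, xs s) = g t := by
    intro t ht
    have hsub : Icc (0:ℝ) t ⊆ Icc 0 T := Icc_subset_Icc le_rfl ht.2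
    have := intervalIntegral.integral_eq_sub_of_hasDeriv_right_of_le ht.1
      (hgc.mono hsub)
      (fun s hs => ((hgd s ⟨hs.1.le, hs.2.le.trans ht.2⟩).mono
        (Icc_subset_Icc le_rfl ht.2)).mono_of_mem_nhdsWithin ?_)
      ((hxc.mono hsub).intervalIntegrable_of_Icc ht.1)
    · rw [this, hg0, sub_zero]
    · exact Icc_mem_nhdsGT_of_mem ⟨hs.1.le, hs.2⟩
  refine ⟨hxc, fun t ht => by rw [key t ht]; exact halg t ht, ?_⟩
  -- uniqueness
  intro x hxcont hsol t ht
  set F : ℝ → ℝ := fun t => ∫ s in (0:ℝ)..t, x s with hF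
  have hFc : ContinuousOn F (Icc 0 T) := by
    have : MeasureTheory.IntegrableOn x (Icc 0 T) := hxcont.integrableOn_Icc
    have h2 := intervalIntegral.continuousOn_primitive_interval
      (a := (0:ℝ)) (b := T) (by rwa [uIcc_of_le hT.le])
    rwa [uIcc_of_le hT.le] at h2
  have hF0 : F 0 = 0 := by simp [hF]
  -- (1+2 lam F)^2 = 1 + 4 lam y
  have hFsq : ∀ s ∈ Icc (0:ℝ) T, (1 + 2 * lam * F s) ^ 2 = 1 + 4 * lam * y s := by
    intro s hs
    have h2 : F s + lam * F s ^ 2 = y s := hsol s hs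
    linear_combination 4 * lam * h2
  have hFne : ∀ s ∈ Icc (0:ℝ) T, 1 + 2 * lam * F s ≠ 0 := by
    intro s hs h
    have := hFsq s hs
    rw [h] at this
    have := hpos s hs
    nlinarith
  -- positivity by IVT
  have hFpos : ∀ s ∈ Icc (0:ℝ) T, 0 < 1 + 2 * lam * F s := by
    intro s hs
    by_contra h
    push_neg at h
    have hlt : 1 + 2 * lam * F s < 0 := lt_of_le_of_ne h (hFne s hs)
    have hc : ContinuousOn (fun u => 1 + 2 * lam * F u) (Icc 0 s) :=
      (continuousOn_const.add (continuousOn_const.mul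
        (hFc.mono (Icc_subset_Icc le_rfl hs.2))))
    have h0 : (0:ℝ) ∈ Icc (1 + 2 * lam * F s) (1 + 2 * lam * F 0) := by
      constructor
      · exact hlt.le
      · rw [hF0]; norm_num
    obtain ⟨u, hu, hu0⟩ := intermediate_value_Icc' hs.1 hc h0
    exact hFne u ⟨hu.1, hu.2.trans hs.2⟩ hu0
  -- solve: F = g on Icc
  have hFg : ∀ s ∈ Icc (0:ℝ) T, F s = g s := by
    intro s hs
    have h1 : Real.sqrt (1 + 4 * lam * y s) = 1 + 2 * lam * F s := by
      rw [← hFsq s hs]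
      exact Real.sqrt_sq (hFpos s hs).le
    simp only [hgdef, h1]
    field_simp
    ring
  -- derivative uniqueness
  rcases eq_or_lt_of_le ht.2 with htT | htT
  · -- t = T : left derivative
    subst htT
    have hint : IntervalIntegrable x MeasureTheory.volume 0 t :=
      hxcont.intervalIntegrable_of_Icc ht.1
    have hmeas : StronglyMeasurableAtFilter x (nhdsWithin t (Iic t)) := by
      refine ⟨Icc 0 t, ?_, hxcont.aestronglyMeasurable measurableSet_Icc⟩
      exact Icc_mem_nhdsLE_of_mem ⟨hT, le_rfl⟩
    have hcw : ContinuousWithinAt x (Iic t) t := by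
      have h := hxcont t ht
      rwa [ContinuousWithinAt, nhdsWithin_Icc_eq_nhdsLE hT] at h
    have hFd : HasDerivWithinAt F (x t) (Iic t) t :=
      intervalIntegral.integral_hasDerivWithinAt_right hint hmeas hcw
    have hFd' : HasDerivWithinAt F (x t) (Icc 0 t) t := hFd.mono Icc_subset_Iic_self
    have hFd'' : HasDerivWithinAt F (xs t) (Icc 0 t) t :=
      (hgd t ht).congr (fun u hu => hFg u hu) (hFg t ht)
    have hud : UniqueDiffWithinAt ℝ (Icc (0:ℝ) t) t :=
      (uniqueDiffOn_Icc hT) t ht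
    have := hFd'.derivWithin hud
    have h2 := hFd''.derivWithin hud
    rw [this] at h2
    exact h2
  · -- t < T : right derivative
    have hint : IntervalIntegrable x MeasureTheory.volume 0 t :=
      (hxcont.mono (Icc_subset_Icc le_rfl ht.2)).intervalIntegrable_of_Icc ht.1
    have hmeas : StronglyMeasurableAtFilter x (nhdsWithin t (Ioi t)) := by
      refine ⟨Icc t T, ?_, (hxcont.mono (Icc_subset_Icc ht.1 le_rfl)).aestronglyMeasurable
        measurableSet_Icc⟩
      exact Icc_mem_nhdsGT_of_mem ⟨le_rfl, htT⟩
    have hcw : ContinuousWithinAt x (Ioi t) t := by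
      have h : ContinuousWithinAt x (Icc t T) t :=
        (hxcont t ht).mono (Icc_subset_Icc ht.1 le_rfl)
      have h2 : ContinuousWithinAt x (Ici t) t := by
        rwa [ContinuousWithinAt, nhdsWithin_Icc_eq_nhdsGE htT] at h
      exact h2.mono Ioi_subset_Ici_self
    have hFd : HasDerivWithinAt F (x t) (Ici t) t :=
      intervalIntegral.integral_hasDerivWithinAt_right hint hmeas hcw
    have hFd' : HasDerivWithinAt F (x t) (Icc t T) t := hFd.mono Icc_subset_Ici_self
    have hFd'' : HasDerivWithinAt F (xs t) (Icc t T) t :=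
      ((hgd t ht).mono (Icc_subset_Icc ht.1 le_rfl)).congr
        (fun u hu => hFg u ⟨ht.1.trans hu.1, hu.2⟩) (hFg t ht)
    have hud : UniqueDiffWithinAt ℝ (Icc t T) t :=
      (uniqueDiffOn_Icc htT) t ⟨le_rfl, htT.le⟩
    have := hFd'.derivWithin hud
    have h2 := hFd''.derivWithin hud
    rw [this] at h2
    exact h2
end

section
/- Let T > 0 and let K₁(t,s) and K₂(t,s₁,s₂) be continuous on {0 ≤ s ≤ t ≤ T} and {0 ≤ s₁,s₂ ≤ t ≤ T} respectively, with continuous partial derivatives with respect to t, K₁(t,t) = 1 for all t ∈ [0,T], and K₂ symmetric in (s₁,s₂). Let y : [0,T] → ℝ be continuously differentiable with y(0) = 0, and let x : [0,T] → ℝ be continuous. Then x satisfies the quadratic Volterra equation of the first kind ∫₀ᵗ K₁(t,s)x(s) ds + ∫₀ᵗ∫₀ᵗ K₂(t,s₁,s₂)x(s₁)x(s₂) ds₁ds₂ = y(t) for all t ∈ [0,T] if and only if x satisfies the Volterra equation of the second kind x(t) + 2x(t)·∫₀ᵗ K₂(t,t,s)x(s) ds + ∫₀ᵗ ∂K₁/∂t(t,s)·x(s)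 ds + ∫₀ᵗ∫₀ᵗ ∂K₂/∂t(t,s₁,s₂)·x(s₁)x(s₂) ds₁ds₂ = y'(t) for all t ∈ [0,T]. -/
open Set intervalIntegral

open MeasureTheory

private lemma lemA (T a : ℝ) (ha0 : 0 ≤ a) (haT : a ≤ T)
    (f ft : ℝ → ℝ → ℝ)
    (hf : Continuous fun p : ℝ × ℝ => f p.1 p.2)
    (hftc : Continuous fun p : ℝ × ℝ => ft p.1 p.2)
    (hd : ∀ s t : ℝ, 0 ≤ s → s ≤ t → a ≤ t → t ≤ T →
      HasDerivWithinAt (fun τ => f τ s) (ft t s) (Icc (max s a) T) t)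
    (t : ℝ) (ht : t ∈ Icc a T) :
    HasDerivWithinAt (fun τ => ∫ s in (0:ℝ)..τ, f τ s)
      (f t t + ∫ s in (0:ℝ)..t, ft t s) (Icc a T) t := by
  have ht0 : 0 ≤ t := ha0.trans ht.1
  have hf1 : ∀ u : ℝ, Continuous fun s => f u s := fun u => hf.comp (Continuous.prodMk_right u)
  have hf2 : ∀ s : ℝ, Continuous fun u => f u s :=
    fun s => hf.comp (continuous_id.prodMk continuous_const)
  have hft1 : ∀ u : ℝ, Continuous fun s => ft u s := fun u => hftc.comp (Continuous.prodMk_right u)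
  have hft2 : ∀ s : ℝ, Continuous fun u => ft u s :=
    fun s => hftc.comp (continuous_id.prodMk continuous_const)
  -- FTC for `f` in the first variable
  have ftc : ∀ s t₁ t₂ : ℝ, 0 ≤ s → max s a ≤ t₁ → t₁ ≤ t₂ → t₂ ≤ T →
      (∫ u in t₁..t₂, ft u s) = f t₂ s - f t₁ s := by
    intro s t₁ t₂ hs h1 h12 h2
    refine integral_eq_sub_of_hasDeriv_right_of_le h12 (hf2 s).continuousOn ?_
      ((hft2 s).intervalIntegrable _ _)
    intro u hu
    have huT : u < T := lt_of_lt_of_le hu.2 h2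
    have h1u : max s a ≤ u := h1.trans hu.1.le
    refine (hd s u hs ((le_max_left s a).trans h1u) ((le_max_right s a).trans h1u)
      huT.le).mono_of_mem_nhdsWithin ?_
    rw [mem_nhdsWithin]
    exact ⟨Iio T, isOpen_Iio, huT, fun v hv => ⟨h1u.trans hv.2.le, hv.1.le⟩⟩
  have ftc' : ∀ s τ : ℝ, 0 ≤ s → s ≤ min τ t → τ ∈ Icc a T →
      (∫ u in t..τ, ft u s) = f τ s - f t s := by
    intro s τ hs hsm hτ
    rcases le_total t τ with h | h
    · exact ftc s t τ hs (max_le (hsm.trans (min_le_right τ t)) ht.1) h hτ.2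
    · rw [intervalIntegral.integral_symm,
        ftc s τ t hs (max_le (hsm.trans (min_le_left τ t)) hτ.1) h ht.2]
      ring
  -- bound for `ft` on the square
  obtain ⟨C, hC⟩ := (isCompact_Icc.prod isCompact_Icc).exists_bound_of_continuousOn
    (s := Icc (0:ℝ) T ×ˢ Icc (0:ℝ) T) hftc.continuousOn
  have hC0 : 0 ≤ C := le_trans (norm_nonneg _)
    (hC (0, 0) ⟨⟨le_refl 0, ha0.trans haT⟩, ⟨le_refl 0, ha0.trans haT⟩⟩)
  -- uniform continuity on the square
  have hucf := Metric.uniformContinuousOn_iff.mp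
    ((isCompact_Icc.prod isCompact_Icc).uniformContinuousOn_of_continuous
      (s := Icc (0:ℝ) T ×ˢ Icc (0:ℝ) T) hf.continuousOn)
  have hucft := Metric.uniformContinuousOn_iff.mp
    ((isCompact_Icc.prod isCompact_Icc).uniformContinuousOn_of_continuous
      (s := Icc (0:ℝ) T ×ˢ Icc (0:ℝ) T) hftc.continuousOn)
  rw [hasDerivWithinAt_iff_tendsto_slope, Metric.tendsto_nhdsWithin_nhds]
  intro ε hε
  have hT2 : 0 < T + 2 := by linarith [ha0.trans haT]
  set ε' : ℝ := ε / (2 * (T + 2)) with hε'def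
  have hε' : 0 < ε' := by positivity
  obtain ⟨δ₁, hδ₁, H₁⟩ := hucf ε' hε'
  obtain ⟨δ₂, hδ₂, H₂⟩ := hucft ε' hε'
  refine ⟨min (min δ₁ δ₂) (ε / (2 * (C + 1))), by positivity, ?_⟩
  intro τ hτmem hτdist
  have hτIcc : τ ∈ Icc a T := hτmem.1
  have hτne : τ ≠ t := by simpa using hτmem.2
  have hτ0 : 0 ≤ τ := ha0.trans hτIcc.1
  rw [Real.dist_eq] at hτdist
  have hd1 : |τ - t| < δ₁ := lt_of_lt_of_le hτdist ((min_le_left _ _).trans (min_le_left _ _))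
  have hd2 : |τ - t| < δ₂ := lt_of_lt_of_le hτdist ((min_le_left _ _).trans (min_le_right _ _))
  have hd3 : |τ - t| < ε / (2 * (C + 1)) := lt_of_lt_of_le hτdist (min_le_right _ _)
  set m : ℝ := min τ t with hmdef
  have hm0 : 0 ≤ m := le_min hτ0 ht0
  have hmτ : m ≤ τ := min_le_left _ _
  have hmt : m ≤ t := min_le_right _ _
  have hmT : m ≤ T := hmt.trans ht.2
  -- pointwise bound coming from the FTC
  have hsb : ∀ s : ℝ, 0 ≤ s → s ≤ m → |f τ s - f t s - (τ - t) * ft t s| ≤ ε' * |τ - t| := by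
    intro s hs hsm
    have hkey : f τ s - f t s - (τ - t) * ft t s = ∫ u in t..τ, (ft u s - ft t s) := by
      rw [intervalIntegral.integral_sub ((hft2 s).intervalIntegrable _ _)
        intervalIntegrable_const, intervalIntegral.integral_const, ftc' s τ hs hsm hτIcc,
        smul_eq_mul]
    rw [hkey]
    have hb := intervalIntegral.norm_integral_le_of_norm_le_const (C := ε')
      (f := fun u => ft u s - ft t s) (a := t) (b := τ) ?_
    · simpa [Real.norm_eq_abs] using hb
    · intro u hu
      have humem : u ∈ Ioc (min t τ) (max t τ) := hu
      have hut : |u - t| ≤ |τ - t| := by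
        rcases le_total t τ with h | h
        · rw [min_eq_left h, max_eq_right h] at humem
          rw [abs_of_nonneg (by linarith [humem.1] : (0:ℝ) ≤ u - t),
            abs_of_nonneg (by linarith : (0:ℝ) ≤ τ - t)]
          linarith [humem.2]
        · rw [min_eq_right h, max_eq_left h] at humem
          rw [abs_of_nonpos (by linarith [humem.2] : u - t ≤ 0),
            abs_of_nonpos (by linarith : τ - t ≤ 0)]
          linarith [humem.1]
      have hu0 : 0 ≤ u := le_trans (le_min hτ0 ht0) (le_of_lt (by
        rcases le_total t τ with h | h
        · rw [min_eq_left h] at humem; exact lt_of_le_of_lt (min_le_right τ t) humem.1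
        · rw [min_eq_right h] at humem; exact lt_of_le_of_lt (min_le_left τ t) humem.1))
      have huT : u ≤ T := le_trans humem.2 (max_le ht.2 hτIcc.2)
      have hsT : s ≤ T := hsm.trans hmT
      have := H₂ (u, s) ⟨⟨hu0, huT⟩, hs, hsT⟩ (t, s) ⟨⟨ht0, ht.2⟩, hs, hsT⟩
        (by rw [Prod.dist_eq]; simp [Real.dist_eq]
            exact lt_of_le_of_lt hut hd2)
      rw [Real.dist_eq] at this
      simpa [Real.norm_eq_abs] using this.le
  -- decomposition of the difference quotient numerator
  have hIf : ∀ u v : ℝ, IntervalIntegrable (fun s => f τ s - f t s - (τ - t) * ft t s)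
      volume u v := fun u v =>
    (((hf1 τ).sub (hf1 t)).sub (continuous_const.mul (hft1 t))).intervalIntegrable _ _
  have I1 : (∫ s in (0:ℝ)..m, (f τ s - f t s - (τ - t) * ft t s)) =
      (∫ s in (0:ℝ)..m, f τ s) - (∫ s in (0:ℝ)..m, f t s) -
        (τ - t) * ∫ s in (0:ℝ)..m, ft t s := by
    rw [intervalIntegral.integral_sub (f := fun s => f τ s - f t s)
        (g := fun s => (τ - t) * ft t s) (((hf1 τ).sub (hf1 t)).intervalIntegrable _ _)
        ((continuous_const.mul (hft1 t)).intervalIntegrable _ _),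
      intervalIntegral.integral_sub ((hf1 τ).intervalIntegrable _ _)
        ((hf1 t).intervalIntegrable _ _), intervalIntegral.integral_const_mul]
  have I2 : (∫ s in t..m, ft t s) =
      (∫ s in (0:ℝ)..m, ft t s) - ∫ s in (0:ℝ)..t, ft t s :=
    (intervalIntegral.integral_interval_sub_left ((hft1 t).intervalIntegrable _ _)
      ((hft1 t).intervalIntegrable _ _)).symm
  have I3 : (∫ s in m..τ, (f τ s - f t t)) =
      (∫ s in (0:ℝ)..τ, f τ s) - (∫ s in (0:ℝ)..m, f τ s) - (τ - m) * f t t := by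
    rw [intervalIntegral.integral_sub ((hf1 τ).intervalIntegrable _ _)
        intervalIntegrable_const, intervalIntegral.integral_const, smul_eq_mul,
      ← intervalIntegral.integral_interval_sub_left ((hf1 τ).intervalIntegrable _ _)
        ((hf1 τ).intervalIntegrable _ _)]
  have I4 : (∫ s in m..t, (f t s - f t t)) =
      (∫ s in (0:ℝ)..t, f t s) - (∫ s in (0:ℝ)..m, f t s) - (t - m) * f t t := by
    rw [intervalIntegral.integral_sub ((hf1 t).intervalIntegrable _ _)
        intervalIntegrable_const, intervalIntegral.integral_const, smul_eq_mul,
      ← intervalIntegral.integral_interval_sub_left ((hf1 t).intervalIntegrable _ _)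
        ((hf1 t).intervalIntegrable _ _)]
  have hE : (∫ s in (0:ℝ)..τ, f τ s) - (∫ s in (0:ℝ)..t, f t s) -
      (τ - t) * (f t t + ∫ s in (0:ℝ)..t, ft t s) =
      (∫ s in (0:ℝ)..m, (f τ s - f t s - (τ - t) * ft t s)) +
        (τ - t) * (∫ s in t..m, ft t s) +
        (∫ s in m..τ, (f τ s - f t t)) - (∫ s in m..t, (f t s - f t t)) := by
    rw [I1, I2, I3, I4]; ring
  have hmt_abs : |m - t| ≤ |τ - t| := by
    rcases le_total t τ with h | h
    · rw [hmdef, min_eq_right h, sub_self, abs_zero]; exact abs_nonneg _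
    · rw [hmdef, min_eq_left h]
  have hτm_abs : |τ - m| ≤ |τ - t| := by
    rcases le_total t τ with h | h
    · rw [hmdef, min_eq_right h]
    · rw [hmdef, min_eq_left h, sub_self, abs_zero]; exact abs_nonneg _
  -- bounds for the four pieces
  have B1 : |∫ s in (0:ℝ)..m, (f τ s - f t s - (τ - t) * ft t s)| ≤ ε' * |τ - t| * T := by
    have hb := intervalIntegral.norm_integral_le_of_norm_le_const (C := ε' * |τ - t|)
      (f := fun s => f τ s - f t s - (τ - t) * ft t s) (a := (0:ℝ)) (b := m) ?_
    · rw [Real.norm_eq_abs] at hb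
      have hmabs : |m - 0| ≤ T := by rw [sub_zero, abs_of_nonneg hm0]; exact hmT
      exact hb.trans (mul_le_mul_of_nonneg_left hmabs (by positivity))
    · intro s hs
      rw [Set.uIoc_of_le hm0, Set.mem_Ioc] at hs
      simpa [Real.norm_eq_abs] using hsb s hs.1.le hs.2
  have B2 : |∫ s in t..m, ft t s| ≤ C * |τ - t| := by
    have hb := intervalIntegral.norm_integral_le_of_norm_le_const (C := C)
      (f := fun s => ft t s) (a := t) (b := m) ?_
    · rw [Real.norm_eq_abs] at hb
      refine hb.trans ?_
      have : |m - t| ≤ |τ - t| := hmt_abs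
      exact mul_le_mul_of_nonneg_left this hC0
    · intro s hs
      rw [Set.uIoc_comm, Set.uIoc_of_le hmt, Set.mem_Ioc] at hs
      have hs0 : 0 ≤ s := le_of_lt (lt_of_le_of_lt hm0 hs.1)
      have hsT : s ≤ T := hs.2.trans ht.2
      simpa [Real.norm_eq_abs] using hC (t, s) ⟨⟨ht0, ht.2⟩, hs0, hsT⟩
  have B3 : |∫ s in m..τ, (f τ s - f t t)| ≤ ε' * |τ - t| := by
    have hb := intervalIntegral.norm_integral_le_of_norm_le_const (C := ε')
      (f := fun s => f τ s - f t t) (a := m) (b := τ) ?_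
    · rw [Real.norm_eq_abs] at hb
      exact hb.trans (mul_le_mul_of_nonneg_left hτm_abs hε'.le)
    · intro s hs
      rw [Set.uIoc_of_le hmτ, Set.mem_Ioc] at hs
      have hs0 : 0 ≤ s := le_of_lt (lt_of_le_of_lt hm0 hs.1)
      have hsT : s ≤ T := hs.2.trans hτIcc.2
      have hst : |s - t| ≤ |τ - t| := by
        rcases le_total t τ with h | h
        · rw [hmdef, min_eq_right h] at hs
          rw [abs_of_nonneg (by linarith [hs.1] : (0:ℝ) ≤ s - t),
            abs_of_nonneg (by linarith : (0:ℝ) ≤ τ - t)]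
          linarith [hs.2]
        · rw [hmdef, min_eq_left h] at hs
          exact absurd (lt_of_lt_of_le hs.1 hs.2) (lt_irrefl _)
      have := H₁ (τ, s) ⟨⟨hτ0, hτIcc.2⟩, hs0, hsT⟩ (t, t) ⟨⟨ht0, ht.2⟩, ht0, ht.2⟩
        (by rw [Prod.dist_eq]
            simp only [Real.dist_eq, sup_lt_iff]
            exact ⟨hd1, lt_of_le_of_lt hst hd1⟩)
      rw [Real.dist_eq] at this
      simpa [Real.norm_eq_abs] using this.le
  have B4 : |∫ s in m..t, (f t s - f t t)| ≤ ε' * |τ - t| := by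
    have hb := intervalIntegral.norm_integral_le_of_norm_le_const (C := ε')
      (f := fun s => f t s - f t t) (a := m) (b := t) ?_
    · rw [Real.norm_eq_abs] at hb
      refine hb.trans ?_
      have : |t - m| ≤ |τ - t| := by rw [abs_sub_comm]; exact hmt_abs
      exact mul_le_mul_of_nonneg_left this hε'.le
    · intro s hs
      rw [Set.uIoc_of_le hmt, Set.mem_Ioc] at hs
      have hs0 : 0 ≤ s := le_of_lt (lt_of_le_of_lt hm0 hs.1)
      have hsT : s ≤ T := hs.2.trans ht.2
      have hst : |s - t| ≤ |τ - t| := by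
        have h3 : |s - t| ≤ |m - t| := by
          rw [abs_of_nonpos (by linarith [hs.2] : s - t ≤ 0),
            abs_of_nonpos (by linarith [hmt] : m - t ≤ 0)]
          linarith [hs.1.le]
        exact h3.trans hmt_abs
      have := H₁ (t, s) ⟨⟨ht0, ht.2⟩, hs0, hsT⟩ (t, t) ⟨⟨ht0, ht.2⟩, ht0, ht.2⟩
        (by rw [Prod.dist_eq]
            simp only [Real.dist_eq, sup_lt_iff]
            exact ⟨by simpa using hδ₁, lt_of_le_of_lt hst hd1⟩)
      rw [Real.dist_eq] at this
      simpa [Real.norm_eq_abs] using this.le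
  -- put everything together
  have habs : 0 < |τ - t| := abs_pos.2 (sub_ne_zero.2 hτne)
  have hCd : C * |τ - t| < ε / 2 := by
    have h1 : C * |τ - t| ≤ C * (ε / (2 * (C + 1))) :=
      mul_le_mul_of_nonneg_left hd3.le hC0
    have h2 : C * (ε / (2 * (C + 1))) < ε / 2 := by
      rw [mul_div_assoc']
      rw [div_lt_div_iff₀ (by positivity) (by norm_num : (0:ℝ) < 2)]
      nlinarith
    linarith
  have hB2' : |(τ - t) * (∫ s in t..m, ft t s)| ≤ |τ - t| * (C * |τ - t|) := by
    rw [abs_mul]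
    exact mul_le_mul_of_nonneg_left B2 (abs_nonneg _)
  have hEbound : |(∫ s in (0:ℝ)..τ, f τ s) - (∫ s in (0:ℝ)..t, f t s) -
      (τ - t) * (f t t + ∫ s in (0:ℝ)..t, ft t s)| ≤
      ε' * |τ - t| * T + |τ - t| * (C * |τ - t|) + ε' * |τ - t| + ε' * |τ - t| := by
    rw [hE]
    set A1 := ∫ s in (0:ℝ)..m, (f τ s - f t s - (τ - t) * ft t s) with hA1
    set A2 := (τ - t) * (∫ s in t..m, ft t s) with hA2
    set A3 := ∫ s in m..τ, (f τ s - f t t) with hA3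
    set A4 := ∫ s in m..t, (f t s - f t t) with hA4
    have h0 : A1 + A2 + A3 - A4 = A1 + A2 + A3 + -A4 := by ring
    rw [h0]
    have h1 := abs_add_le (A1 + A2 + A3) (-A4)
    have h2 := abs_add_le (A1 + A2) A3
    have h3 := abs_add_le A1 A2
    rw [abs_neg] at h1
    linarith [B1, hB2', B3, B4]
  have hslope : slope (fun τ => ∫ s in (0:ℝ)..τ, f τ s) t τ -
      (f t t + ∫ s in (0:ℝ)..t, ft t s) =
      ((∫ s in (0:ℝ)..τ, f τ s) - (∫ s in (0:ℝ)..t, f t s) -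
        (τ - t) * (f t t + ∫ s in (0:ℝ)..t, ft t s)) / (τ - t) := by
    have hne : τ - t ≠ 0 := sub_ne_zero.2 hτne
    rw [slope_def_field]
    field_simp
  rw [Real.dist_eq, hslope, abs_div]
  rw [div_lt_iff₀ habs]
  have heps : ε' * (T + 2) = ε / 2 := by
    rw [hε'def]; field_simp
  have hsum : ε' * (T + 2) + C * |τ - t| < ε := by rw [heps]; linarith
  have hmul : |τ - t| * (ε' * (T + 2) + C * |τ - t|) < |τ - t| * ε :=
    mul_lt_mul_of_pos_left hsum habs
  calc |(∫ s in (0:ℝ)..τ, f τ s) - (∫ s in (0:ℝ)..t, f t s) -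
      (τ - t) * (f t t + ∫ s in (0:ℝ)..t, ft t s)|
      ≤ ε' * |τ - t| * T + |τ - t| * (C * |τ - t|) + ε' * |τ - t| + ε' * |τ - t| := hEbound
    _ = |τ - t| * (ε' * (T + 2) + C * |τ - t|) := by ring
    _ < |τ - t| * ε := hmul
    _ = ε * |τ - t| := by ring

private def clp (T s : ℝ) : ℝ := min (max s 0) T

private lemma clp_mem {T : ℝ} (hT : 0 ≤ T) (s : ℝ) : clp T s ∈ Icc (0:ℝ) T :=
  ⟨le_min (le_max_right s 0) hT, min_le_right _ _⟩

private lemma clp_eq {T s : ℝ} (hs : s ∈ Icc (0:ℝ) T) : clp T s = s := by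
  rw [clp, max_eq_left hs.1, min_eq_left hs.2]

private lemma clp_cont (T : ℝ) : Continuous (clp T) :=
  (continuous_id.max continuous_const).min continuous_const

private def K1e (K : ℝ → ℝ → ℝ) (T t s : ℝ) : ℝ :=
  K (min (max t (clp T s)) T) (clp T s)

private lemma K1e_cont {K : ℝ → ℝ → ℝ} {T : ℝ} (hT : 0 ≤ T)
    (hK : ContinuousOn (fun p : ℝ × ℝ => K p.1 p.2) {p | 0 ≤ p.2 ∧ p.2 ≤ p.1 ∧ p.1 ≤ T}) :
    Continuous fun p : ℝ × ℝ => K1e K T p.1 p.2 := by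
  have hmap : Continuous fun p : ℝ × ℝ => ((min (max p.1 (clp T p.2)) T, clp T p.2) : ℝ × ℝ) :=
    ((continuous_fst.max ((clp_cont T).comp continuous_snd)).min continuous_const).prodMk
      ((clp_cont T).comp continuous_snd)
  exact hK.comp_continuous hmap fun p =>
    ⟨(clp_mem hT p.2).1, le_min (le_max_right _ _) (clp_mem hT p.2).2, min_le_right _ _⟩

private lemma K1e_eq {K : ℝ → ℝ → ℝ} {T t s : ℝ} (hs : 0 ≤ s) (hst : s ≤ t) (htT : t ≤ T) :
    K1e K T t s = K t s := by
  rw [K1e, clp_eq ⟨hs, hst.trans htT⟩, max_eq_left hst, min_eq_left htT]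

private def K2e (K : ℝ → ℝ → ℝ → ℝ) (T t s₁ s₂ : ℝ) : ℝ :=
  K (min (max t (max (clp T s₁) (clp T s₂))) T) (clp T s₁) (clp T s₂)

private lemma K2e_cont {K : ℝ → ℝ → ℝ → ℝ} {T : ℝ} (hT : 0 ≤ T)
    (hK : ContinuousOn (fun p : ℝ × ℝ × ℝ => K p.1 p.2.1 p.2.2)
      {p | 0 ≤ p.2.1 ∧ 0 ≤ p.2.2 ∧ p.2.1 ≤ p.1 ∧ p.2.2 ≤ p.1 ∧ p.1 ≤ T}) :
    Continuous fun p : ℝ × ℝ × ℝ => K2e K T p.1 p.2.1 p.2.2 := by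
  have hmap' : Continuous fun p : ℝ × ℝ × ℝ =>
      ((min (max p.1 (max (clp T p.2.1) (clp T p.2.2))) T,
        clp T p.2.1, clp T p.2.2) : ℝ × ℝ × ℝ) :=
    ((continuous_fst.max (((clp_cont T).comp (continuous_fst.comp continuous_snd)).max
      ((clp_cont T).comp (continuous_snd.comp continuous_snd)))).min
        continuous_const).prodMk
      (((clp_cont T).comp (continuous_fst.comp continuous_snd)).prodMk
        ((clp_cont T).comp (continuous_snd.comp continuous_snd)))
  refine hK.comp_continuous hmap' fun p => ?_
  refine ⟨(clp_mem hT p.2.1).1, (clp_mem hT p.2.2).1, ?_, ?_, min_le_right _ _⟩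
  · exact le_min ((le_max_left _ _).trans (le_max_right _ _)) (clp_mem hT p.2.1).2
  · exact le_min ((le_max_right _ _).trans (le_max_right _ _)) (clp_mem hT p.2.2).2

private lemma K2e_eq {K : ℝ → ℝ → ℝ → ℝ} {T t s₁ s₂ : ℝ} (hs₁ : 0 ≤ s₁) (hs₂ : 0 ≤ s₂)
    (h₁t : s₁ ≤ t) (h₂t : s₂ ≤ t) (htT : t ≤ T) :
    K2e K T t s₁ s₂ = K t s₁ s₂ := by
  rw [K2e, clp_eq ⟨hs₁, h₁t.trans htT⟩, clp_eq ⟨hs₂, h₂t.trans htT⟩,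
    max_eq_left (max_le h₁t h₂t), min_eq_left htT]

/-- Equivalence of the quadratic Volterra equation of the first kind with the
Volterra equation of the second kind obtained by differentiation, given
`K₁(t,t) = 1` and the symmetry of `K₂` in `(s₁,s₂)`. -/
theorem stmt2 (T : ℝ) (hT : 0 < T)
    (K₁ K₁t : ℝ → ℝ → ℝ) (K₂ K₂t : ℝ → ℝ → ℝ → ℝ)
    (hK₁ : ContinuousOn (fun p : ℝ × ℝ => K₁ p.1 p.2) {p | 0 ≤ p.2 ∧ p.2 ≤ p.1 ∧ p.1 ≤ T})
    (hK₁d : ∀ s t : ℝ, 0 ≤ s → s ≤ t → t ≤ T →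
      HasDerivWithinAt (fun τ => K₁ τ s) (K₁t t s) (Icc s T) t)
    (hK₁tc : ContinuousOn (fun p : ℝ × ℝ => K₁t p.1 p.2) {p | 0 ≤ p.2 ∧ p.2 ≤ p.1 ∧ p.1 ≤ T})
    (hK₂ : ContinuousOn (fun p : ℝ × ℝ × ℝ => K₂ p.1 p.2.1 p.2.2)
      {p | 0 ≤ p.2.1 ∧ 0 ≤ p.2.2 ∧ p.2.1 ≤ p.1 ∧ p.2.2 ≤ p.1 ∧ p.1 ≤ T})
    (hK₂d : ∀ s₁ s₂ t : ℝ, 0 ≤ s₁ → 0 ≤ s₂ → s₁ ≤ t → s₂ ≤ t → t ≤ T →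
      HasDerivWithinAt (fun τ => K₂ τ s₁ s₂) (K₂t t s₁ s₂) (Icc (max s₁ s₂) T) t)
    (hK₂tc : ContinuousOn (fun p : ℝ × ℝ × ℝ => K₂t p.1 p.2.1 p.2.2)
      {p | 0 ≤ p.2.1 ∧ 0 ≤ p.2.2 ∧ p.2.1 ≤ p.1 ∧ p.2.2 ≤ p.1 ∧ p.1 ≤ T})
    (hdiag : ∀ t ∈ Icc (0:ℝ) T, K₁ t t = 1)
    (hsymm : ∀ t s₁ s₂ : ℝ, K₂ t s₁ s₂ = K₂ t s₂ s₁)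
    (y y' : ℝ → ℝ) (hy0 : y 0 = 0)
    (hy' : ∀ t ∈ Icc (0:ℝ) T, HasDerivWithinAt y (y' t) (Icc 0 T) t)
    (hy'c : ContinuousOn y' (Icc 0 T))
    (x : ℝ → ℝ) (hx : ContinuousOn x (Icc 0 T)) :
    (∀ t ∈ Icc (0:ℝ) T,
        (∫ s in (0:ℝ)..t, K₁ t s * x s) +
          (∫ s₁ in (0:ℝ)..t, ∫ s₂ in (0:ℝ)..t, K₂ t s₁ s₂ * x s₁ * x s₂) = y t) ↔
    (∀ t ∈ Icc (0:ℝ) T,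
        x t + 2 * x t * (∫ s in (0:ℝ)..t, K₂ t t s * x s) +
          (∫ s in (0:ℝ)..t, K₁t t s * x s) +
          (∫ s₁ in (0:ℝ)..t, ∫ s₂ in (0:ℝ)..t, K₂t t s₁ s₂ * x s₁ * x s₂) = y' t) := by
  have hT0 : (0:ℝ) ≤ T := hT.le
  set xe : ℝ → ℝ := fun s => x (clp T s) with hxe
  have hxec : Continuous xe := hx.comp_continuous (clp_cont T) (clp_mem hT0)
  have hxeeq : ∀ s ∈ Icc (0:ℝ) T, xe s = x s := fun s hs => by
    rw [hxe]; simp only; rw [clp_eq hs]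
  have hK1ec := K1e_cont hT0 hK₁
  have hK1tec := K1e_cont hT0 hK₁tc
  have hK2ec := K2e_cont hT0 hK₂
  have hK2tec := K2e_cont hT0 hK₂tc
  -- derivative of the single-integral part
  have h1 : ∀ t ∈ Icc (0:ℝ) T,
      HasDerivWithinAt (fun τ => ∫ s in (0:ℝ)..τ, K1e K₁ T τ s * xe s)
        (K1e K₁ T t t * xe t + ∫ s in (0:ℝ)..t, K1e K₁t T t s * xe s) (Icc 0 T) t := by
    intro t ht
    refine lemA T 0 le_rfl hT0 (fun τ s => K1e K₁ T τ s * xe s)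
      (fun τ s => K1e K₁t T τ s * xe s) ?_ ?_ ?_ t ht
    · exact hK1ec.mul (hxec.comp continuous_snd)
    · exact hK1tec.mul (hxec.comp continuous_snd)
    intro s u hs hsu _ huT
    rw [max_eq_left hs]
    show HasDerivWithinAt (fun τ => K1e K₁ T τ s * xe s)
      (K1e K₁t T u s * xe s) (Icc s T) u
    have hb : HasDerivWithinAt (fun τ => K1e K₁ T τ s) (K₁t u s) (Icc s T) u :=
      (hK₁d s u hs hsu huT).congr (fun τ hτ => K1e_eq hs hτ.1 hτ.2) (K1e_eq hs hsu huT)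
    have h2 := hb.mul_const (xe s)
    rw [K1e_eq hs hsu huT]
    exact h2
  -- the inner integral of the double-integral part
  set g : ℝ → ℝ → ℝ := fun τ s₁ => ∫ s₂ in (0:ℝ)..τ, K2e K₂ T τ s₁ s₂ * xe s₁ * xe s₂ with hg
  set gt : ℝ → ℝ → ℝ := fun τ s₁ =>
    K2e K₂ T τ s₁ τ * xe s₁ * xe τ +
      ∫ s₂ in (0:ℝ)..τ, K2e K₂t T τ s₁ s₂ * xe s₁ * xe s₂ with hgt
  have hgc : Continuous fun p : ℝ × ℝ => g p.1 p.2 := by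
    rw [hg]
    exact intervalIntegral.continuous_parametric_intervalIntegral_of_continuous
      (f := fun (p : ℝ × ℝ) s₂ => K2e K₂ T p.1 p.2 s₂ * xe p.2 * xe s₂)
      (((hK2ec.comp ((continuous_fst.comp continuous_fst).prodMk
        ((continuous_snd.comp continuous_fst).prodMk continuous_snd))).mul
        (hxec.comp (continuous_snd.comp continuous_fst))).mul
        (hxec.comp continuous_snd)) continuous_fst
  have hgtc : Continuous fun p : ℝ × ℝ => gt p.1 p.2 := by
    rw [hgt]
    refine Continuous.add ?_ ?_
    · exact ((hK2ec.comp (continuous_fst.prodMk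
        (continuous_snd.prodMk continuous_fst))).mul
        (hxec.comp continuous_snd)).mul (hxec.comp continuous_fst)
    · exact intervalIntegral.continuous_parametric_intervalIntegral_of_continuous
        (f := fun (p : ℝ × ℝ) s₂ => K2e K₂t T p.1 p.2 s₂ * xe p.2 * xe s₂)
        (((hK2tec.comp ((continuous_fst.comp continuous_fst).prodMk
          ((continuous_snd.comp continuous_fst).prodMk continuous_snd))).mul
          (hxec.comp (continuous_snd.comp continuous_fst))).mul
          (hxec.comp continuous_snd)) continuous_fst
  have hgd : ∀ s₁ u : ℝ, 0 ≤ s₁ → s₁ ≤ u → 0 ≤ u → u ≤ T →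
      HasDerivWithinAt (fun τ => g τ s₁) (gt u s₁) (Icc (max s₁ 0) T) u := by
    intro s₁ u hs₁ hsu _ huT
    rw [max_eq_left hs₁]
    refine lemA T s₁ hs₁ (hsu.trans huT)
      (fun τ s₂ => K2e K₂ T τ s₁ s₂ * xe s₁ * xe s₂)
      (fun τ s₂ => K2e K₂t T τ s₁ s₂ * xe s₁ * xe s₂)
      (((hK2ec.comp (continuous_fst.prodMk
        (continuous_const.prodMk continuous_snd))).mul continuous_const).mul
        (hxec.comp continuous_snd))
      (((hK2tec.comp (continuous_fst.prodMk
        (continuous_const.prodMk continuous_snd))).mul continuous_const).mul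
        (hxec.comp continuous_snd)) ?_ u ⟨hsu, huT⟩
    intro s₂ v hs₂ hs₂v hs₁v hvT
    rw [max_comm]
    show HasDerivWithinAt (fun τ => K2e K₂ T τ s₁ s₂ * xe s₁ * xe s₂)
      (K2e K₂t T v s₁ s₂ * xe s₁ * xe s₂) (Icc (max s₁ s₂) T) v
    have hb : HasDerivWithinAt (fun τ => K2e K₂ T τ s₁ s₂) (K₂t v s₁ s₂)
        (Icc (max s₁ s₂) T) v :=
      (hK₂d s₁ s₂ v hs₁ hs₂ hs₁v hs₂v hvT).congr
        (fun τ hτ => K2e_eq hs₁ hs₂ ((le_max_left _ _).trans hτ.1)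
          ((le_max_right _ _).trans hτ.1) hτ.2)
        (K2e_eq hs₁ hs₂ hs₁v hs₂v hvT)
    have h2 := (hb.mul_const (xe s₁)).mul_const (xe s₂)
    rw [K2e_eq hs₁ hs₂ hs₁v hs₂v hvT]
    exact h2
  have h2 : ∀ t ∈ Icc (0:ℝ) T,
      HasDerivWithinAt (fun τ => ∫ s₁ in (0:ℝ)..τ, g τ s₁)
        (g t t + ∫ s₁ in (0:ℝ)..t, gt t s₁) (Icc 0 T) t :=
    fun t ht => lemA T 0 le_rfl hT0 g gt hgc hgtc hgd t ht
  -- the combined derivative statement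
  have main : ∀ t ∈ Icc (0:ℝ) T, HasDerivWithinAt
      (fun τ => (∫ s in (0:ℝ)..τ, K₁ τ s * x s) +
        ∫ s₁ in (0:ℝ)..τ, ∫ s₂ in (0:ℝ)..τ, K₂ τ s₁ s₂ * x s₁ * x s₂)
      (x t + 2 * x t * (∫ s in (0:ℝ)..t, K₂ t t s * x s) +
        (∫ s in (0:ℝ)..t, K₁t t s * x s) +
        ∫ s₁ in (0:ℝ)..t, ∫ s₂ in (0:ℝ)..t, K₂t t s₁ s₂ * x s₁ * x s₂) (Icc 0 T) t := by
    intro t ht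
    have hadd := (h1 t ht).add (h2 t ht)
    have hfun : ∀ τ ∈ Icc (0:ℝ) T,
        ((∫ s in (0:ℝ)..τ, K₁ τ s * x s) +
          ∫ s₁ in (0:ℝ)..τ, ∫ s₂ in (0:ℝ)..τ, K₂ τ s₁ s₂ * x s₁ * x s₂)
        = (∫ s in (0:ℝ)..τ, K1e K₁ T τ s * xe s) + ∫ s₁ in (0:ℝ)..τ, g τ s₁ := by
      intro τ hτ
      have e1 : (∫ s in (0:ℝ)..τ, K₁ τ s * x s) = ∫ s in (0:ℝ)..τ, K1e K₁ T τ s * xe s := by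
        refine intervalIntegral.integral_congr fun s hs => ?_
        rw [Set.uIcc_of_le hτ.1] at hs
        rw [K1e_eq hs.1 hs.2 hτ.2, hxeeq s ⟨hs.1, hs.2.trans hτ.2⟩]
      have e2 : (∫ s₁ in (0:ℝ)..τ, ∫ s₂ in (0:ℝ)..τ, K₂ τ s₁ s₂ * x s₁ * x s₂)
          = ∫ s₁ in (0:ℝ)..τ, g τ s₁ := by
        refine intervalIntegral.integral_congr fun s₁ hs₁ => ?_
        rw [Set.uIcc_of_le hτ.1] at hs₁
        rw [hg]
        refine intervalIntegral.integral_congr fun s₂ hs₂ => ?_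
        rw [Set.uIcc_of_le hτ.1] at hs₂
        rw [K2e_eq hs₁.1 hs₂.1 hs₁.2 hs₂.2 hτ.2,
          hxeeq s₁ ⟨hs₁.1, hs₁.2.trans hτ.2⟩, hxeeq s₂ ⟨hs₂.1, hs₂.2.trans hτ.2⟩]
      rw [e1, e2]
    have v1 : K1e K₁ T t t * xe t = x t := by
      rw [K1e_eq ht.1 le_rfl ht.2, hdiag t ht, hxeeq t ht, one_mul]
    have v2 : (∫ s in (0:ℝ)..t, K1e K₁t T t s * xe s) = ∫ s in (0:ℝ)..t, K₁t t s * x s := by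
      refine intervalIntegral.integral_congr fun s hs => ?_
      rw [Set.uIcc_of_le ht.1] at hs
      rw [K1e_eq hs.1 hs.2 ht.2, hxeeq s ⟨hs.1, hs.2.trans ht.2⟩]
    have v3 : g t t = x t * ∫ s in (0:ℝ)..t, K₂ t t s * x s := by
      have e : g t t = ∫ s₂ in (0:ℝ)..t, x t * (K₂ t t s₂ * x s₂) := by
        rw [hg]
        refine intervalIntegral.integral_congr fun s₂ hs₂ => ?_
        rw [Set.uIcc_of_le ht.1] at hs₂
        rw [K2e_eq ht.1 hs₂.1 le_rfl hs₂.2 ht.2, hxeeq t ht,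
          hxeeq s₂ ⟨hs₂.1, hs₂.2.trans ht.2⟩]
        ring
      rw [e, intervalIntegral.integral_const_mul]
    have v4 : (∫ s₁ in (0:ℝ)..t, gt t s₁)
        = x t * (∫ s in (0:ℝ)..t, K₂ t t s * x s) +
          ∫ s₁ in (0:ℝ)..t, ∫ s₂ in (0:ℝ)..t, K₂t t s₁ s₂ * x s₁ * x s₂ := by
      have hint1 : IntervalIntegrable (fun s₁ => K2e K₂ T t s₁ t * xe s₁ * xe t)
          volume 0 t :=
        (((hK2ec.comp (continuous_const.prodMk
          (continuous_id.prodMk continuous_const))).mul hxec).mul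
          continuous_const).intervalIntegrable _ _
      have hint2 : IntervalIntegrable
          (fun s₁ => ∫ s₂ in (0:ℝ)..t, K2e K₂t T t s₁ s₂ * xe s₁ * xe s₂) volume 0 t := by
        refine Continuous.intervalIntegrable ?_ _ _
        exact intervalIntegral.continuous_parametric_intervalIntegral_of_continuous'
          (f := fun (s₁ : ℝ) s₂ => K2e K₂t T t s₁ s₂ * xe s₁ * xe s₂)
          (((hK2tec.comp (continuous_const.prodMk
            ((continuous_fst).prodMk continuous_snd))).mul
            (hxec.comp continuous_fst)).mul (hxec.comp continuous_snd)) _ _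
      have e0 : (∫ s₁ in (0:ℝ)..t, gt t s₁)
          = (∫ s₁ in (0:ℝ)..t, K2e K₂ T t s₁ t * xe s₁ * xe t) +
            ∫ s₁ in (0:ℝ)..t, ∫ s₂ in (0:ℝ)..t, K2e K₂t T t s₁ s₂ * xe s₁ * xe s₂ := by
        rw [hgt]
        exact intervalIntegral.integral_add hint1 hint2
      rw [e0]
      congr 1
      · rw [← intervalIntegral.integral_const_mul]
        refine intervalIntegral.integral_congr fun s₁ hs₁ => ?_
        rw [Set.uIcc_of_le ht.1] at hs₁
        rw [K2e_eq hs₁.1 ht.1 hs₁.2 le_rfl ht.2, hsymm t s₁ t,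
          hxeeq s₁ ⟨hs₁.1, hs₁.2.trans ht.2⟩, hxeeq t ht]
        ring
      · refine intervalIntegral.integral_congr fun s₁ hs₁ => ?_
        rw [Set.uIcc_of_le ht.1] at hs₁
        refine intervalIntegral.integral_congr fun s₂ hs₂ => ?_
        rw [Set.uIcc_of_le ht.1] at hs₂
        rw [K2e_eq hs₁.1 hs₂.1 hs₁.2 hs₂.2 ht.2,
          hxeeq s₁ ⟨hs₁.1, hs₁.2.trans ht.2⟩, hxeeq s₂ ⟨hs₂.1, hs₂.2.trans ht.2⟩]
    have hval : (K1e K₁ T t t * xe t + ∫ s in (0:ℝ)..t, K1e K₁t T t s * xe s) +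
        (g t t + ∫ s₁ in (0:ℝ)..t, gt t s₁)
        = x t + 2 * x t * (∫ s in (0:ℝ)..t, K₂ t t s * x s) +
          (∫ s in (0:ℝ)..t, K₁t t s * x s) +
          ∫ s₁ in (0:ℝ)..t, ∫ s₂ in (0:ℝ)..t, K₂t t s₁ s₂ * x s₁ * x s₂ := by
      rw [v1, v2, v3, v4]; ring
    have H := hadd.congr (fun τ hτ => hfun τ hτ) (hfun t ht)
    rwa [hval] at H
  -- the equivalence
  constructor
  · intro hI t ht
    have hyd : HasDerivWithinAt y
        (x t + 2 * x t * (∫ s in (0:ℝ)..t, K₂ t t s * x s) +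
          (∫ s in (0:ℝ)..t, K₁t t s * x s) +
          ∫ s₁ in (0:ℝ)..t, ∫ s₂ in (0:ℝ)..t, K₂t t s₁ s₂ * x s₁ * x s₂) (Icc 0 T) t :=
      (main t ht).congr (fun τ hτ => (hI τ hτ).symm) (hI t ht).symm
    have hu := (uniqueDiffOn_Icc hT) t ht
    exact (hyd.derivWithin hu).symm.trans ((hy' t ht).derivWithin hu)
  · intro hII t ht
    have hFd : ∀ u ∈ Icc (0:ℝ) T, HasDerivWithinAt
        (fun τ => ((∫ s in (0:ℝ)..τ, K₁ τ s * x s) +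
          ∫ s₁ in (0:ℝ)..τ, ∫ s₂ in (0:ℝ)..τ, K₂ τ s₁ s₂ * x s₁ * x s₂) - y τ)
        0 (Icc 0 T) u := by
      intro u hu
      have h := (main u hu).sub (hy' u hu)
      rwa [hII u hu, sub_self] at h
    have hcont : ContinuousOn
        (fun τ => ((∫ s in (0:ℝ)..τ, K₁ τ s * x s) +
          ∫ s₁ in (0:ℝ)..τ, ∫ s₂ in (0:ℝ)..τ, K₂ τ s₁ s₂ * x s₁ * x s₂) - y τ)
        (Icc 0 T) := fun u hu => (hFd u hu).continuousWithinAt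
    have hzero := constant_of_has_deriv_right_zero hcont (fun u hu => by
      refine (hFd u ⟨hu.1, hu.2.le⟩).mono_of_mem_nhdsWithin ?_
      rw [mem_nhdsWithin]
      exact ⟨Ioo (u - 1) T, isOpen_Ioo, ⟨by linarith [hu.1], hu.2⟩,
        fun v hv => ⟨hu.1.trans hv.2, hv.1.2.le⟩⟩)
    have hft := hzero t ht
    simp only [intervalIntegral.integral_same, hy0, add_zero, sub_zero, zero_add, zero_sub,
      sub_self] at hft
    -- hft : LHS t - y t = 0 (hopefully)
    linarith [hft]
end

section
/- For every real y with |y| < 1/e, the series g(y) = Σ_{k=1}^{∞} ((-k)^{k-1} / k!) · y^k converges absolutely, and its sum satisfies g(y)·e^{g(y)} = y. -/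
open Finset
open scoped NNReal ENNReal

lemma alt_sum : ∀ M : ℕ, ∀ j : ℕ, j < M →
    ∑ k ∈ range (M + 1), (-1 : ℝ) ^ k * (M.choose k) * (k : ℝ) ^ j = 0 := by
  intro M
  induction M with
  | zero => intro j hj; omega
  | succ M' ih =>
    intro j hj
    match j with
    | 0 =>
      have h := Int.alternating_sum_range_choose (n := M' + 1)
      simp only [Nat.succ_ne_zero, if_false] at h
      have : ((∑ i ∈ range (M' + 1 + 1), (-1 : ℤ) ^ i * ((M' + 1).choose i) : ℤ) : ℝ) = 0 := by
        rw [h]; norm_num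
      push_cast at this
      simpa using this
    | j' + 1 =>
      rw [Finset.sum_range_succ']
      have h0 : (-1 : ℝ) ^ 0 * ((M' + 1).choose 0) * ((0 : ℕ) : ℝ) ^ (j' + 1) = 0 := by simp
      rw [h0, add_zero]
      have key : ∀ i : ℕ, (-1 : ℝ) ^ (i + 1) * (((M' + 1).choose (i + 1) : ℕ) : ℝ)
            * ((i + 1 : ℕ) : ℝ) ^ (j' + 1)
          = ∑ t ∈ range (j' + 1), (-(((M' : ℝ) + 1) * (j'.choose t)))
              * ((-1 : ℝ) ^ i * (M'.choose i) * (i : ℝ) ^ t) := by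
        intro i
        have hC : (((M' + 1).choose (i + 1) : ℕ) : ℝ) * ((i : ℝ) + 1)
            = ((M' : ℝ) + 1) * (M'.choose i) := by
          have h : ((M' + 1).choose (i + 1)) * (i + 1) = (M' + 1) * M'.choose i :=
            (Nat.add_one_mul_choose_eq M' i).symm
          exact_mod_cast congrArg (Nat.cast (R := ℝ)) h
        have hpow : ((i : ℝ) + 1) ^ j' = ∑ t ∈ range (j' + 1), (i : ℝ) ^ t * (j'.choose t) := by
          rw [add_pow]
          exact Finset.sum_congr rfl fun t _ => by push_cast; ring
        have step : (-1 : ℝ) ^ (i + 1) * (((M' + 1).choose (i + 1) : ℕ) : ℝ)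
              * ((i + 1 : ℕ) : ℝ) ^ (j' + 1)
            = ((-1 : ℝ) ^ (i + 1) * ((i : ℝ) + 1) ^ j') * ((((M' + 1).choose (i + 1) : ℕ) : ℝ) * ((i : ℝ) + 1)) := by
          push_cast
          ring
        rw [step, hC, hpow, Finset.mul_sum, Finset.sum_mul]
        exact Finset.sum_congr rfl fun t _ => by ring
      calc ∑ i ∈ range (M' + 1), (-1 : ℝ) ^ (i + 1) * (((M' + 1).choose (i + 1) : ℕ) : ℝ)
              * ((i + 1 : ℕ) : ℝ) ^ (j' + 1)
          = ∑ i ∈ range (M' + 1), ∑ t ∈ range (j' + 1), (-(((M' : ℝ) + 1) * (j'.choose t)))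
              * ((-1 : ℝ) ^ i * (M'.choose i) * (i : ℝ) ^ t) :=
            Finset.sum_congr rfl fun i _ => key i
        _ = ∑ t ∈ range (j' + 1), ∑ i ∈ range (M' + 1), (-(((M' : ℝ) + 1) * (j'.choose t)))
              * ((-1 : ℝ) ^ i * (M'.choose i) * (i : ℝ) ^ t) := Finset.sum_comm
        _ = 0 := by
            apply Finset.sum_eq_zero
            intro t ht
            rw [← Finset.mul_sum, ih t (by simp at ht; omega), mul_zero]

lemma S_eq {m : ℕ} (hm : 1 ≤ m) :
    ∑ k ∈ range (m + 1), (-1 : ℝ) ^ k * ((k : ℝ) + 1) ^ m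
      / ((Nat.factorial (k + 1) : ℝ) * (Nat.factorial (m - k) : ℝ)) = 0 := by
  have h := alt_sum (m + 1) m (by omega)
  rw [Finset.sum_range_succ'] at h
  have h0 : (-1 : ℝ) ^ 0 * ((m + 1).choose 0 : ℝ) * ((0 : ℕ) : ℝ) ^ m = 0 := by
    have : ((0 : ℕ) : ℝ) ^ m = 0 := by
      rw [Nat.cast_zero, zero_pow (by omega)]
    rw [this, mul_zero]
  rw [h0, add_zero] at h
  -- h : ∑ i ∈ range (m+1), (-1)^(i+1) * C(m+1,i+1) * (i+1)^m = 0
  have key : ∀ k ∈ range (m + 1), (-1 : ℝ) ^ k * ((k : ℝ) + 1) ^ m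
      / ((Nat.factorial (k + 1) : ℝ) * (Nat.factorial (m - k) : ℝ))
      = (-(1 : ℝ) / (Nat.factorial (m + 1) : ℝ)) *
        ((-1 : ℝ) ^ (k + 1) * (((m + 1).choose (k + 1) : ℕ) : ℝ) * ((k + 1 : ℕ) : ℝ) ^ m) := by
    intro k hk
    have hk' : k ≤ m := by simp at hk; omega
    have hfac : (((m + 1).choose (k + 1) : ℕ) : ℝ) * (Nat.factorial (k + 1) : ℝ)
        * (Nat.factorial (m - k) : ℝ) = (Nat.factorial (m + 1) : ℝ) := by
      have := Nat.choose_mul_factorial_mul_factorial (by omega : k + 1 ≤ m + 1)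
      rw [Nat.succ_sub_succ] at this
      exact_mod_cast congrArg (Nat.cast (R := ℝ)) this
    have hf1 : (0 : ℝ) < (Nat.factorial (k + 1) : ℝ) := by
      exact_mod_cast Nat.factorial_pos _
    have hf2 : (0 : ℝ) < (Nat.factorial (m - k) : ℝ) := by
      exact_mod_cast Nat.factorial_pos _
    have hf3 : (0 : ℝ) < (Nat.factorial (m + 1) : ℝ) := by
      exact_mod_cast Nat.factorial_pos _
    rw [pow_succ]
    push_cast
    field_simp
    linear_combination (-1 : ℝ) * hfac
  rw [Finset.sum_congr rfl key, ← Finset.mul_sum, h, mul_zero]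

noncomputable def aa (k : ℕ) : ℝ := (-(k + 1 : ℝ)) ^ k / (Nat.factorial (k + 1) : ℝ)

lemma abs_aa_le (k : ℕ) : |aa k| ≤ Real.exp 1 ^ (k + 1) := by
  have h1 : |aa k| = ((k : ℝ) + 1) ^ k / (Nat.factorial (k + 1) : ℝ) := by
    rw [aa, abs_div, abs_pow, abs_neg, abs_of_nonneg (by positivity),
      abs_of_nonneg (by positivity)]
  have hfp : (0 : ℝ) < (Nat.factorial (k + 1) : ℝ) := by exact_mod_cast Nat.factorial_pos _
  have h2 : ((k : ℝ) + 1) ^ k ≤ ((k : ℝ) + 1) ^ (k + 1) := by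
    apply pow_le_pow_right₀ (by linarith [Nat.cast_nonneg (α := ℝ) k]) (by omega)
  have h3 : ((k : ℝ) + 1) ^ (k + 1) / (Nat.factorial (k + 1) : ℝ) ≤ Real.exp ((k : ℝ) + 1) :=
    Real.pow_div_factorial_le_exp (x := (k : ℝ) + 1) (by positivity) (k + 1)
  have h4 : Real.exp ((k : ℝ) + 1) = Real.exp 1 ^ (k + 1) := by
    rw [← Real.exp_nat_mul]; push_cast; ring_nf
  rw [h1, ← h4]
  calc ((k : ℝ) + 1) ^ k / (Nat.factorial (k + 1) : ℝ)
      ≤ ((k : ℝ) + 1) ^ (k + 1) / (Nat.factorial (k + 1) : ℝ) := by gcongr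
    _ ≤ Real.exp ((k : ℝ) + 1) := h3

lemma summable_abs_aa {t : ℝ} (ht : Real.exp 1 * |t| < 1) :
    Summable fun k : ℕ => |aa k * t ^ (k + 1)| := by
  have h0 : (0 : ℝ) ≤ Real.exp 1 * |t| := by positivity
  have hg : Summable fun k : ℕ => (Real.exp 1 * |t|) ^ (k + 1) :=
    ((summable_geometric_of_lt_one h0 ht).mul_right (Real.exp 1 * |t|)).congr
      fun k => (pow_succ _ _).symm
  refine Summable.of_nonneg_of_le (fun k => abs_nonneg _) (fun k => ?_) hg
  rw [abs_mul, abs_pow, mul_pow]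
  exact mul_le_mul_of_nonneg_right (abs_aa_le k) (by positivity)

lemma exp_tsum (t : ℝ) : Real.exp t = ∑' n : ℕ, t ^ n / (Nat.factorial n : ℝ) := by
  rw [Real.exp_eq_exp_ℝ, NormedSpace.exp_eq_tsum_div]

noncomputable def G (y : ℝ) : ℝ := ∑' k : ℕ, aa k * y ^ (k + 1)

noncomputable def bb (x : ℝ) (p : ℕ × ℕ) : ℝ :=
  aa p.1 * x ^ (p.1 + 1) * (((p.1 : ℝ) + 1) * x) ^ p.2 / (Nat.factorial p.2 : ℝ)

lemma abs_bb (x : ℝ) (k n : ℕ) : |bb x (k, n)| =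
    (|aa k| * |x| ^ (k + 1)) * ((((k : ℝ) + 1) * |x|) ^ n / (Nat.factorial n : ℝ)) := by
  have h1 : |((k : ℝ) + 1)| = (k : ℝ) + 1 := abs_of_nonneg (by positivity)
  simp only [bb, abs_div, abs_mul, abs_pow, Nat.abs_cast, h1]
  ring

lemma innerSumEq (x : ℝ) (m : ℕ) :
    ∑ q ∈ Finset.HasAntidiagonal.antidiagonal m, bb x q = if m = 0 then x else 0 := by
  rw [Finset.Nat.sum_antidiagonal_eq_sum_range_succ_mk]
  rcases Nat.eq_zero_or_pos m with hm | hm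
  · subst hm
    simp [bb, aa]
  · rw [if_neg (by omega)]
    have key : ∀ k ∈ range (m + 1), bb x (k, m - k) =
        ((-1 : ℝ) ^ k * ((k : ℝ) + 1) ^ m
          / ((Nat.factorial (k + 1) : ℝ) * (Nat.factorial (m - k) : ℝ))) * x ^ (m + 1) := by
      intro k hk
      have hk' : k ≤ m := by simp at hk; omega
      have h5 : k + (m - k) = m := by omega
      have h6 : (k + 1) + (m - k) = m + 1 := by omega
      have e4 : ((k : ℝ) + 1) ^ k * x ^ (k + 1) * (((k : ℝ) + 1) ^ (m - k) * x ^ (m - k))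
          = ((k : ℝ) + 1) ^ m * x ^ (m + 1) := by
        rw [mul_mul_mul_comm, ← pow_add, ← pow_add, h5, h6]
      have lhs_eq : bb x (k, m - k)
          = ((-1 : ℝ) ^ k * (((k : ℝ) + 1) ^ k * x ^ (k + 1)
              * (((k : ℝ) + 1) ^ (m - k) * x ^ (m - k))))
            / ((Nat.factorial (k + 1) : ℝ) * (Nat.factorial (m - k) : ℝ)) := by
        simp only [bb, aa]
        rw [neg_pow, mul_pow]
        ring
      rw [lhs_eq, e4]
      ring
    rw [Finset.sum_congr rfl key, ← Finset.sum_mul, S_eq hm, zero_mul]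

lemma G_comp {x : ℝ} (hx : |x| ≤ 1 / 10) : G (x * Real.exp x) = x := by
  have he : Real.exp 1 < 2.7182818286 := Real.exp_one_lt_d9
  have hx0 : (0 : ℝ) ≤ |x| := abs_nonneg x
  have hex : Real.exp |x| ≤ Real.exp 1 := Real.exp_le_exp.mpr (le_trans hx (by norm_num))
  have hbase : Real.exp 1 * |x| * Real.exp |x| ≤ 9 / 10 := by
    have hex2 : Real.exp |x| ≤ 2.7182818286 := hex.trans he.le
    calc Real.exp 1 * |x| * Real.exp |x|
        ≤ 2.7182818286 * (1 / 10) * 2.7182818286 := by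
          have h1 := Real.exp_pos 1
          have h2 := Real.exp_pos |x|
          gcongr <;> first
            | exact he.le
            | exact hx
            | exact hex2
      _ ≤ 9 / 10 := by norm_num
  have hbase0 : (0 : ℝ) ≤ Real.exp 1 * |x| * Real.exp |x| := by positivity
  -- rows are absolutely summable
  have hrowabs : ∀ k : ℕ, Summable fun n => |bb x (k, n)| := by
    intro k
    simp only [abs_bb]
    exact (Real.summable_pow_div_factorial (((k : ℝ) + 1) * |x|)).mul_left _
  -- value of row abs sums
  have hrowval : ∀ k : ℕ, ∑' n, |bb x (k, n)|
      = (|aa k| * |x| ^ (k + 1)) * Real.exp (((k : ℝ) + 1) * |x|) := by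
    intro k
    simp only [abs_bb]
    rw [tsum_mul_left, ← exp_tsum]
  -- bound on row abs sums
  have hrowbound : ∀ k : ℕ, ∑' n, |bb x (k, n)| ≤ (9 / 10 : ℝ) ^ (k + 1) := by
    intro k
    rw [hrowval k]
    have h1 : Real.exp (((k : ℝ) + 1) * |x|) = Real.exp |x| ^ (k + 1) := by
      rw [← Real.exp_nat_mul]; push_cast; ring_nf
    rw [h1]
    calc |aa k| * |x| ^ (k + 1) * Real.exp |x| ^ (k + 1)
        ≤ Real.exp 1 ^ (k + 1) * |x| ^ (k + 1) * Real.exp |x| ^ (k + 1) := by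
          have := abs_aa_le k
          gcongr
      _ = (Real.exp 1 * |x| * Real.exp |x|) ^ (k + 1) := by rw [← mul_pow, ← mul_pow]
      _ ≤ (9 / 10 : ℝ) ^ (k + 1) := pow_le_pow_left₀ hbase0 hbase _
  -- full absolute summability on ℕ × ℕ
  have habs : Summable fun p : ℕ × ℕ => |bb x p| := by
    rw [summable_prod_of_nonneg (fun p => abs_nonneg _)]
    refine ⟨fun k => hrowabs k, ?_⟩
    have hg : Summable fun k : ℕ => (9 / 10 : ℝ) ^ (k + 1) :=
      ((summable_geometric_of_lt_one (by norm_num) (by norm_num)).mul_right _).congr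
        fun k => (pow_succ _ _).symm
    exact Summable.of_nonneg_of_le
      (fun k => tsum_nonneg fun n => abs_nonneg _) (fun k => hrowbound k) hg
  have hb : Summable (bb x) := habs.of_abs
  -- rows summable
  have hrow : ∀ k : ℕ, Summable fun n => bb x (k, n) := fun k => (hrowabs k).of_abs
  -- step 1 : each term is a row sum
  have step1 : ∀ k : ℕ, aa k * (x * Real.exp x) ^ (k + 1) = ∑' n, bb x (k, n) := by
    intro k
    have h1 : (x * Real.exp x) ^ (k + 1) = x ^ (k + 1) * Real.exp (((k : ℝ) + 1) * x) := by
      rw [mul_pow, ← Real.exp_nat_mul]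
      push_cast
      ring_nf
    rw [h1, exp_tsum (((k : ℝ) + 1) * x), ← mul_assoc, ← tsum_mul_left]
    exact tsum_congr fun n => by simp only [bb]; ring
  -- assemble
  have hsig : Summable fun σ : (Σ m : ℕ, (Finset.HasAntidiagonal.antidiagonal m : Finset (ℕ × ℕ))) =>
      bb x (Finset.HasAntidiagonal.sigmaAntidiagonalEquivProd σ) :=
    Finset.HasAntidiagonal.sigmaAntidiagonalEquivProd.summable_iff.mpr hb
  have h2 : ∑' σ : (Σ m : ℕ, (Finset.HasAntidiagonal.antidiagonal m : Finset (ℕ × ℕ))),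
      bb x (Finset.HasAntidiagonal.sigmaAntidiagonalEquivProd σ) = ∑' p : ℕ × ℕ, bb x p :=
    Finset.HasAntidiagonal.sigmaAntidiagonalEquivProd.tsum_eq (bb x)
  have h3 : ∑' σ : (Σ m : ℕ, (Finset.HasAntidiagonal.antidiagonal m : Finset (ℕ × ℕ))),
      bb x (Finset.HasAntidiagonal.sigmaAntidiagonalEquivProd σ)
      = ∑' m : ℕ, ∑' q : (Finset.HasAntidiagonal.antidiagonal m : Finset (ℕ × ℕ)),
          bb x (Finset.HasAntidiagonal.sigmaAntidiagonalEquivProd ⟨m, q⟩) :=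
    Summable.tsum_sigma' (fun m => Summable.of_finite) hsig
  have h4 : ∀ m : ℕ, ∑' q : (Finset.HasAntidiagonal.antidiagonal m : Finset (ℕ × ℕ)),
      bb x (Finset.HasAntidiagonal.sigmaAntidiagonalEquivProd ⟨m, q⟩)
      = ∑ q ∈ Finset.HasAntidiagonal.antidiagonal m, bb x q := fun m => Finset.tsum_subtype _ _
  calc G (x * Real.exp x) = ∑' k : ℕ, ∑' n : ℕ, bb x (k, n) := tsum_congr step1
    _ = ∑' p : ℕ × ℕ, bb x p := (Summable.tsum_prod' hb hrow).symm
    _ = ∑' m : ℕ, ∑ q ∈ Finset.HasAntidiagonal.antidiagonal m, bb x q := by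
        rw [← h2, h3]
        exact tsum_congr h4
    _ = ∑' m : ℕ, if m = 0 then x else 0 := tsum_congr fun m => innerSumEq x m
    _ = x := by rw [tsum_eq_single 0 (fun m hm => if_neg hm)]; simp

noncomputable def cc : ℕ → ℝ := fun n => match n with
  | 0 => 0
  | k + 1 => aa k

lemma abs_cc_le (n : ℕ) : |cc n| ≤ Real.exp 1 ^ n := by
  match n with
  | 0 => simp [cc]
  | k + 1 => exact abs_aa_le k

noncomputable def pp : FormalMultilinearSeries ℝ ℝ ℝ := FormalMultilinearSeries.ofScalars ℝ cc

lemma coe_lt_inv_exp {t : ℝ≥0} (ht : (t : ℝ≥0∞) < ENNReal.ofReal (1 / Real.exp 1)) :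
    (t : ℝ) < 1 / Real.exp 1 := by
  rw [ENNReal.ofReal, ENNReal.coe_lt_coe] at ht
  have := Real.coe_toNNReal (1 / Real.exp 1) (by positivity)
  exact_mod_cast this ▸ (NNReal.coe_lt_coe.mpr ht)

lemma mul_exp_lt_one {t : ℝ} (_h0 : 0 ≤ t) (ht : t < 1 / Real.exp 1) : Real.exp 1 * t < 1 := by
  have he := Real.exp_pos 1
  rw [lt_div_iff₀ he] at ht
  linarith

lemma hasFP : HasFPowerSeriesOnBall G pp 0 (ENNReal.ofReal (1 / Real.exp 1)) := by
  constructor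
  · refine ENNReal.le_of_forall_nnreal_lt fun r hr => ?_
    apply FormalMultilinearSeries.le_radius_of_summable_norm
    have hr1 : Real.exp 1 * (r : ℝ) < 1 := mul_exp_lt_one r.coe_nonneg (coe_lt_inv_exp hr)
    have hg : Summable fun n : ℕ => (Real.exp 1 * (r : ℝ)) ^ n :=
      summable_geometric_of_lt_one (by positivity) hr1
    refine Summable.of_nonneg_of_le (fun n => by positivity) (fun n => ?_) hg
    rw [pp, FormalMultilinearSeries.ofScalars_norm, Real.norm_eq_abs, mul_pow]
    exact mul_le_mul_of_nonneg_right (abs_cc_le n) (by positivity)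
  · exact ENNReal.ofReal_pos.mpr (by positivity)
  · intro z hz
    rw [mem_emetric_ball_zero_iff] at hz
    have hz' : |z| < 1 / Real.exp 1 := by
      have := coe_lt_inv_exp hz
      rwa [← Real.norm_eq_abs, ← coe_nnnorm]
    have hs : Summable fun k : ℕ => aa k * z ^ (k + 1) :=
      (summable_abs_aa (mul_exp_lt_one (abs_nonneg z) hz')).of_abs
    have h1 : HasSum (fun k : ℕ => aa k * z ^ (k + 1)) (G z) := hs.hasSum
    have h2 : HasSum (fun n : ℕ => cc (n + 1) * z ^ (n + 1))
        ((G z) - ∑ i ∈ Finset.range 1, cc i * z ^ i) := by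
      simpa [cc] using h1
    have h3 := (hasSum_nat_add_iff' (f := fun n : ℕ => cc n * z ^ n) 1).mp h2
    have h4 : (fun n : ℕ => pp n fun _ : Fin n => z) = fun n : ℕ => cc n * z ^ n := by
      funext n
      rw [pp, FormalMultilinearSeries.ofScalars_apply_eq, smul_eq_mul]
    rw [zero_add, h4]
    exact h3

lemma G_analytic : AnalyticOnNhd ℝ G (Metric.ball 0 (1 / Real.exp 1)) := by
  have h := hasFP.analyticOnNhd
  rwa [Metric.emetric_ball] at h

lemma phi_eventually : (fun y => G y * Real.exp (G y) - y) =ᶠ[nhds 0] 0 := by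
  have hc : Continuous fun x : ℝ => x * Real.exp x := continuous_id.mul Real.continuous_exp
  have h1 : (-(1 / 10) : ℝ) * Real.exp (-(1 / 10)) < 0 := by
    nlinarith [Real.exp_pos (-(1 / 10) : ℝ)]
  have h2 : (0 : ℝ) < (1 / 10 : ℝ) * Real.exp (1 / 10) := by positivity
  filter_upwards [Ioo_mem_nhds h1 h2] with y hy
  have hsub : y ∈ Set.Icc ((-(1 / 10) : ℝ) * Real.exp (-(1 / 10)))
      ((1 / 10 : ℝ) * Real.exp (1 / 10)) := Set.mem_Icc.mpr ⟨hy.1.le, hy.2.le⟩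
  obtain ⟨x, hx, hfx⟩ := intermediate_value_Icc (by norm_num : (-(1 / 10) : ℝ) ≤ 1 / 10)
    hc.continuousOn (by simpa using hsub)
  have hxabs : |x| ≤ 1 / 10 := abs_le.mpr ⟨hx.1, hx.2⟩
  have hG := G_comp hxabs
  simp only at hfx
  rw [hfx] at hG
  show G y * Real.exp (G y) - y = 0
  rw [hG, hfx]
  ring

lemma phi_eqOn : Set.EqOn (fun y => G y * Real.exp (G y) - y) 0
    (Metric.ball 0 (1 / Real.exp 1)) := by
  have hG := G_analytic
  have hphi : AnalyticOnNhd ℝ (fun y => G y * Real.exp (G y) - y)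
      (Metric.ball 0 (1 / Real.exp 1)) :=
    (hG.mul fun z hz => (hG z hz).rexp).sub analyticOnNhd_id
  exact hphi.eqOn_zero_of_preconnected_of_eventuallyEq_zero
    (convex_ball _ _).isPreconnected (Metric.mem_ball_self (by positivity)) phi_eventually

/-- The power series `Σ_{k≥1} ((-k)^{k-1}/k!) yᵏ` of the main branch of the Lambert
function converges absolutely for `|y| < 1/e` and its sum `g` satisfies `g e^g = y`. -/
theorem stmt7 (y : ℝ) (hy : |y| < 1 / Real.exp 1) :
    Summable (fun k : ℕ =>
      |(-(k + 1 : ℝ)) ^ k / ((Nat.factorial (k + 1) : ℝ)) * y ^ (k + 1)|) ∧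
    (∑' k : ℕ, (-(k + 1 : ℝ)) ^ k / ((Nat.factorial (k + 1) : ℝ)) * y ^ (k + 1)) *
        Real.exp (∑' k : ℕ,
          (-(k + 1 : ℝ)) ^ k / ((Nat.factorial (k + 1) : ℝ)) * y ^ (k + 1)) = y := by
  have hy1 : Real.exp 1 * |y| < 1 := mul_exp_lt_one (abs_nonneg y) hy
  constructor
  · exact summable_abs_aa hy1
  · have hmem : y ∈ Metric.ball (0 : ℝ) (1 / Real.exp 1) := by
      rw [Metric.mem_ball, Real.dist_eq, sub_zero]; exact hy
    have h := phi_eqOn hmem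
    simp only [Pi.zero_apply] at h
    exact sub_eq_zero.mp h
end

section
/- Let y : [0,T] → ℝ be continuous with y(0) = 0 and y(t) > -1/e for all t ∈ [0,T]. If Θ : [0,T] → ℝ is continuous with Θ(0) = 0 and Θ(t)·e^{Θ(t)} = y(t) for all t ∈ [0,T], then Θ(t) > -1 for all t ∈ [0,T]; consequently any two continuous functions Θ₁, Θ₂ on [0,T] with Θᵢ(0) = 0 and Θᵢ(t)·e^{Θᵢ(t)} = y(t) coincide. -/
open Set

/-- `x ↦ x * exp x` is strictly monotone on `[-1, ∞)`. -/
lemma xexpx_strictMonoOn : StrictMonoOn (fun x : ℝ => x * Real.exp x) (Ici (-1)) := by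
  apply strictMonoOn_of_deriv_pos (convex_Ici _)
  · exact (continuous_id.mul Real.continuous_exp).continuousOn
  · intro x hx
    rw [interior_Ici] at hx
    have hd : deriv (fun x : ℝ => x * Real.exp x) x = (x + 1) * Real.exp x := by
      have h1 : HasDerivAt (fun x : ℝ => x * Real.exp x)
          (1 * Real.exp x + x * Real.exp x) x :=
        (hasDerivAt_id x).mul (Real.hasDerivAt_exp x)
      rw [h1.deriv]; ring
    rw [hd]
    have : (0:ℝ) < x + 1 := by linarith [mem_Ioi.mp hx]
    positivity

/-- If `y` is continuous on `[0,T]` with `y 0 = 0` and `y(t) > -1/e`, then every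
continuous `Θ` with `Θ 0 = 0` and `Θ(t) e^{Θ(t)} = y(t)` satisfies `Θ(t) > -1`
(i.e. `Θ = W₀ ∘ y`), and consequently any two such `Θ` coincide on `[0,T]`. -/
theorem stmt9 (T : ℝ) (hT : 0 ≤ T)
    (y : ℝ → ℝ) (hy : ContinuousOn y (Icc 0 T)) (hy0 : y 0 = 0)
    (hyb : ∀ t ∈ Icc (0:ℝ) T, -(1 / Real.exp 1) < y t) :
    (∀ Θ : ℝ → ℝ, ContinuousOn Θ (Icc 0 T) → Θ 0 = 0 →
      (∀ t ∈ Icc (0:ℝ) T, Θ t * Real.exp (Θ t) = y t) →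
      ∀ t ∈ Icc (0:ℝ) T, -1 < Θ t) ∧
    (∀ Θ₁ Θ₂ : ℝ → ℝ,
      ContinuousOn Θ₁ (Icc 0 T) → Θ₁ 0 = 0 →
      (∀ t ∈ Icc (0:ℝ) T, Θ₁ t * Real.exp (Θ₁ t) = y t) →
      ContinuousOn Θ₂ (Icc 0 T) → Θ₂ 0 = 0 →
      (∀ t ∈ Icc (0:ℝ) T, Θ₂ t * Real.exp (Θ₂ t) = y t) →
      ∀ t ∈ Icc (0:ℝ) T, Θ₁ t = Θ₂ t) := by
  have key : ∀ Θ : ℝ → ℝ, ContinuousOn Θ (Icc 0 T) → Θ 0 = 0 →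
      (∀ t ∈ Icc (0:ℝ) T, Θ t * Real.exp (Θ t) = y t) →
      ∀ t ∈ Icc (0:ℝ) T, -1 < Θ t := by
    intro Θ hΘc hΘ0 hΘy t ht
    -- Θ never equals -1
    have hne : ∀ s ∈ Icc (0:ℝ) T, Θ s ≠ -1 := by
      intro s hs heq
      have := hΘy s hs
      rw [heq] at this
      have he : (-1 : ℝ) * Real.exp (-1) = -(1 / Real.exp 1) := by
        rw [Real.exp_neg]; ring
      have := hyb s hs
      rw [← hΘy s hs, heq, he] at this
      exact lt_irrefl _ this
    by_contra h
    push_neg at h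
    have hlt : Θ t < -1 := lt_of_le_of_ne h (hne t ht)
    -- IVT on [0, t]
    have ht0 : (0:ℝ) ≤ t := ht.1
    have hsub : Icc (0:ℝ) t ⊆ Icc 0 T := Icc_subset_Icc le_rfl ht.2
    have := intermediate_value_Icc' ht0 (hΘc.mono hsub)
    have hmem : (-1:ℝ) ∈ Icc (Θ t) (Θ 0) := by
      constructor
      · linarith
      · rw [hΘ0]; linarith
    obtain ⟨c, hc, hceq⟩ := this hmem
    exact hne c (hsub hc) hceq
  refine ⟨key, ?_⟩
  intro Θ₁ Θ₂ h1c h10 h1y h2c h20 h2y t ht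
  have hb1 : -1 < Θ₁ t := key Θ₁ h1c h10 h1y t ht
  have hb2 : -1 < Θ₂ t := key Θ₂ h2c h20 h2y t ht
  have : Θ₁ t * Real.exp (Θ₁ t) = Θ₂ t * Real.exp (Θ₂ t) := by
    rw [h1y t ht, h2y t ht]
  exact xexpx_strictMonoOn.injOn (le_of_lt hb1) (le_of_lt hb2) this
end

section
/- Let L₁ > 0, λ > 0, 𝓕 > 0, and let Θ : [0,T] → ℝ be differentiable with Θ(0) = 0, 1 - 2λ·Θ(t) > 0 for all t ∈ [0,T], and Θ'(t) = (𝓕 + L₁·Θ(t)) / (1 - 2λ·Θ(t)) for all t ∈ [0,T]. Then for every t ∈ [0,T], ((L₁ + 2λ𝓕)/L₁²)·ln(1 + L₁·Θ(t)/𝓕) - (2λ/L₁)·Θ(t) = t. -/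
open Set

/-- The solution of the Cauchy problem `Θ' = (𝓕 + L₁Θ)/(1 - 2λΘ)`, `Θ(0) = 0`,
satisfies the implicit first integral
`((L₁ + 2λ𝓕)/L₁²) ln(1 + L₁Θ(t)/𝓕) - (2λ/L₁)Θ(t) = t`. -/
theorem stmt10 (T L₁ lam 𝓕 : ℝ) (hT : 0 ≤ T)
    (hL : 0 < L₁) (hlam : 0 < lam) (h𝓕 : 0 < 𝓕)
    (Θ : ℝ → ℝ) (hΘ0 : Θ 0 = 0)
    (hden : ∀ t ∈ Icc (0:ℝ) T, 0 < 1 - 2 * lam * Θ t)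
    (hode : ∀ t ∈ Icc (0:ℝ) T,
      HasDerivWithinAt Θ ((𝓕 + L₁ * Θ t) / (1 - 2 * lam * Θ t)) (Icc 0 T) t) :
    ∀ t ∈ Icc (0:ℝ) T,
      ((L₁ + 2 * lam * 𝓕) / L₁ ^ 2) * Real.log (1 + L₁ * Θ t / 𝓕) -
        (2 * lam / L₁) * Θ t = t := by
  -- continuity of Θ
  have hΘcont : ContinuousOn Θ (Icc (0:ℝ) T) :=
    fun t ht => (hode t ht).continuousWithinAt
  set u : ℝ → ℝ := fun t => 𝓕 + L₁ * Θ t with hu_def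
  have hucont : ContinuousOn u (Icc (0:ℝ) T) :=
    (continuousOn_const.add (continuousOn_const.mul hΘcont))
  -- positivity of u on [0, T]
  have hupos : ∀ t ∈ Icc (0:ℝ) T, 0 < u t := by
    by_contra hcon
    push_neg at hcon
    obtain ⟨t₀, ht₀, ht₀u⟩ := hcon
    set S : Set ℝ := {t ∈ Icc (0:ℝ) T | u t ≤ 0} with hS_def
    have hSne : S.Nonempty := ⟨t₀, ht₀, ht₀u⟩
    have hSclosed : IsClosed S := by
      have : S = Icc (0:ℝ) T ∩ u ⁻¹' Iic 0 := by
        ext x; simp [hS_def, Set.mem_setOf_eq]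
      rw [this]
      exact hucont.preimage_isClosed_of_isClosed isClosed_Icc isClosed_Iic
    have hSbdd : BddBelow S := ⟨0, fun x hx => hx.1.1⟩
    set ts := sInf S with hts_def
    have htsS : ts ∈ S := hSclosed.csInf_mem hSne hSbdd
    have htsIcc : ts ∈ Icc (0:ℝ) T := htsS.1
    have hu0 : u 0 = 𝓕 := by simp [hu_def, hΘ0]
    have hts_pos : 0 < ts := by
      rcases lt_or_eq_of_le htsIcc.1 with h | h
      · exact h
      · exfalso
        have := htsS.2
        rw [← h, hu0] at this
        linarith
    -- on [0, ts), u is positive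
    have hlt : ∀ s ∈ Ico (0:ℝ) ts, 0 < u s := by
      intro s hs
      by_contra h
      push_neg at h
      have hsS : s ∈ S := ⟨⟨hs.1, le_trans hs.2.le htsIcc.2⟩, h⟩
      exact absurd (csInf_le hSbdd hsS) (not_le.mpr hs.2)
    -- u is monotone on [0, ts]
    have hsub : Icc (0:ℝ) ts ⊆ Icc 0 T := Icc_subset_Icc le_rfl htsIcc.2
    have humono : MonotoneOn u (Icc (0:ℝ) ts) := by
      apply monotoneOn_of_hasDerivWithinAt_nonneg (convex_Icc 0 ts)
        (hucont.mono hsub)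
        (f' := fun t => L₁ * ((𝓕 + L₁ * Θ t) / (1 - 2 * lam * Θ t)))
      · intro x hx
        rw [interior_Icc] at hx
        have hxT : x ∈ Icc (0:ℝ) T := hsub (Ioo_subset_Icc_self hx)
        rw [interior_Icc]
        exact (((hode x hxT).const_mul L₁).const_add 𝓕).mono
          (fun y hy => hsub (Ioo_subset_Icc_self hy))
      · intro x hx
        rw [interior_Icc] at hx
        have hxT : x ∈ Icc (0:ℝ) T := hsub (Ioo_subset_Icc_self hx)
        have h1 := hlt x ⟨hx.1.le, hx.2⟩
        have h2 := hden x hxT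
        positivity
    have h0 : u 0 ≤ u ts :=
      humono ⟨le_rfl, hts_pos.le⟩ (right_mem_Icc.mpr hts_pos.le) hts_pos.le
    rw [hu0] at h0
    linarith [htsS.2]
  -- the function G
  set G : ℝ → ℝ := fun t =>
    ((L₁ + 2 * lam * 𝓕) / L₁ ^ 2) * Real.log (1 + L₁ * Θ t / 𝓕) -
      (2 * lam / L₁) * Θ t - t with hG_def
  have hGderiv : ∀ x ∈ Icc (0:ℝ) T, HasDerivWithinAt G 0 (Icc 0 T) x := by
    intro x hx
    have hd := hden x hx
    have hup := hupos x hx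
    have harg : (0:ℝ) < 1 + L₁ * Θ x / 𝓕 := by
      have : 1 + L₁ * Θ x / 𝓕 = u x / 𝓕 := by
        field_simp [hu_def]; rfl
      rw [this]; positivity
    have hΘ' := hode x hx
    have hinner : HasDerivWithinAt (fun t => 1 + L₁ * Θ t / 𝓕)
        (L₁ * ((𝓕 + L₁ * Θ x) / (1 - 2 * lam * Θ x)) / 𝓕) (Icc 0 T) x := by
      simpa using (((hΘ'.const_mul L₁)).div_const 𝓕).const_add 1
    have hlog := hinner.log (ne_of_gt harg)
    have h1 := (hlog.const_mul ((L₁ + 2 * lam * 𝓕) / L₁ ^ 2)).sub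
      (hΘ'.const_mul (2 * lam / L₁))
    have h2 := h1.sub (hasDerivWithinAt_id x (Icc (0:ℝ) T))
    have h3 : HasDerivWithinAt G _ (Icc 0 T) x := h2
    convert h3 using 1
    have hux : 1 + L₁ * Θ x / 𝓕 = (𝓕 + L₁ * Θ x) / 𝓕 := by field_simp
    rw [hux]
    have hune : 𝓕 + L₁ * Θ x ≠ 0 := ne_of_gt hup
    have hdne : 1 - 2 * lam * Θ x ≠ 0 := ne_of_gt hd
    field_simp
    ring
  have hGcont : ContinuousOn G (Icc (0:ℝ) T) :=
    fun x hx => (hGderiv x hx).continuousWithinAt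
  have hconst : ∀ x ∈ Icc (0:ℝ) T, G x = G 0 := by
    apply constant_of_has_deriv_right_zero hGcont
    intro x hx
    exact (hGderiv x (Ico_subset_Icc_self hx)).mono_of_mem_nhdsWithin
      (Filter.mem_of_superset (Icc_mem_nhdsGE_of_mem ⟨le_rfl, hx.2⟩)
        (Icc_subset_Icc hx.1 le_rfl))
  intro t ht
  have h := hconst t ht
  have hG0 : G 0 = 0 := by
    simp [hG_def, hΘ0]
  rw [hG0] at h
  have : ((L₁ + 2 * lam * 𝓕) / L₁ ^ 2) * Real.log (1 + L₁ * Θ t / 𝓕) -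
      (2 * lam / L₁) * Θ t - t = 0 := h
  linarith
end

section
/- Let L₁ > 0, λ > 0, 𝓕 > 0, and let Θ : [0,T] → ℝ be differentiable with Θ(0) = 0, 1 - 2λ·Θ(t) > 0 for all t ∈ [0,T], and Θ'(t) = (𝓕 + L₁·Θ(t)) / (1 - 2λ·Θ(t)) for all t ∈ [0,T]. Then T < T* := ((L₁ + 2λ𝓕)/L₁²)·ln(1 + L₁/(2λ𝓕)) - 1/L₁. -/
open Set

/-- Blow-up bound for the Cauchy problem `Θ' = (𝓕 + L₁Θ)/(1 - 2λΘ)`, `Θ(0) = 0`: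
if the denominator stays positive on `[0,T]`, then
`T < T* = ((L₁ + 2λ𝓕)/L₁²) ln(1 + L₁/(2λ𝓕)) - 1/L₁`. -/
theorem stmt11 (T L₁ lam 𝓕 : ℝ) (hT : 0 ≤ T)
    (hL : 0 < L₁) (hlam : 0 < lam) (h𝓕 : 0 < 𝓕)
    (Θ : ℝ → ℝ) (hΘ0 : Θ 0 = 0)
    (hden : ∀ t ∈ Icc (0:ℝ) T, 0 < 1 - 2 * lam * Θ t)
    (hode : ∀ t ∈ Icc (0:ℝ) T,
      HasDerivWithinAt Θ ((𝓕 + L₁ * Θ t) / (1 - 2 * lam * Θ t)) (Icc 0 T) t) :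
    T < ((L₁ + 2 * lam * 𝓕) / L₁ ^ 2) * Real.log (1 + L₁ / (2 * lam * 𝓕)) - 1 / L₁ := by
  have h0T : (0:ℝ) ∈ Icc (0:ℝ) T := ⟨le_refl 0, hT⟩
  have hTmem : T ∈ Icc (0:ℝ) T := ⟨hT, le_refl T⟩
  have hΘcont : ContinuousOn Θ (Icc 0 T) := fun t ht => (hode t ht).continuousWithinAt
  -- Step 1: 𝓕 + L₁ * Θ t > 0 on [0,T]
  have hnum : ∀ t ∈ Icc (0:ℝ) T, 0 < 𝓕 + L₁ * Θ t := by
    by_contra hc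
    push_neg at hc
    obtain ⟨t₀, ht₀, ht₀le⟩ := hc
    set S : Set ℝ := Icc (0:ℝ) T ∩ (fun t => 𝓕 + L₁ * Θ t) ⁻¹' (Iic 0) with hSdef
    have hSne : S.Nonempty := ⟨t₀, ht₀, by simpa using ht₀le⟩
    have hScl : IsClosed S :=
      (continuousOn_const.add (continuousOn_const.mul hΘcont)).preimage_isClosed_of_isClosed
        isClosed_Icc isClosed_Iic
    have hSbdd : BddBelow S := ⟨0, fun x hx => hx.1.1⟩
    set t₁ := sInf S with ht₁def
    have ht₁S : t₁ ∈ S := hScl.csInf_mem hSne hSbdd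
    have ht₁Icc : t₁ ∈ Icc (0:ℝ) T := ht₁S.1
    have ht₁le : 𝓕 + L₁ * Θ t₁ ≤ 0 := ht₁S.2
    have ht₁pos : 0 < t₁ := by
      rcases lt_or_eq_of_le ht₁Icc.1 with h | h
      · exact h
      · exfalso; rw [← h, hΘ0] at ht₁le; simp at ht₁le; linarith
    -- On [0, t₁), 𝓕 + L₁ Θ > 0
    have hposlt : ∀ s ∈ Icc (0:ℝ) T, s < t₁ → 0 < 𝓕 + L₁ * Θ s := by
      intro s hs hst
      by_contra h
      push_neg at h
      exact absurd (csInf_le hSbdd (⟨hs, by simpa using h⟩ : s ∈ S)) (not_le.mpr hst)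
    -- Θ strictly monotone on [0, t₁]
    have hsub : Icc (0:ℝ) t₁ ⊆ Icc 0 T := Icc_subset_Icc le_rfl ht₁Icc.2
    have hmono : StrictMonoOn Θ (Icc 0 t₁) := by
      apply strictMonoOn_of_hasDerivWithinAt_pos (convex_Icc 0 t₁) (hΘcont.mono hsub)
        (f' := fun t => (𝓕 + L₁ * Θ t) / (1 - 2 * lam * Θ t))
      · intro x hx
        rw [interior_Icc] at hx
        exact ((hode x (hsub (Ioo_subset_Icc_self hx))).mono
          ((Ioo_subset_Icc_self.trans hsub) : Ioo (0:ℝ) t₁ ⊆ Icc 0 T)).mono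
          (subset_refl _) |>.mono (by rw [interior_Icc])
      · intro x hx
        rw [interior_Icc] at hx
        have hxT : x ∈ Icc (0:ℝ) T := hsub (Ioo_subset_Icc_self hx)
        exact div_pos (hposlt x hxT hx.2) (hden x hxT)
    have : Θ 0 < Θ t₁ := hmono ⟨le_rfl, ht₁pos.le⟩ ⟨ht₁pos.le, le_rfl⟩ ht₁pos
    rw [hΘ0] at this
    nlinarith
  -- The antiderivative g
  set C : ℝ := (L₁ + 2 * lam * 𝓕) / L₁ ^ 2 with hC
  set g : ℝ → ℝ := fun θ => C * Real.log (𝓕 + L₁ * θ) - (2 * lam / L₁) * θ with hg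
  have hg' : ∀ θ : ℝ, 0 < 𝓕 + L₁ * θ →
      HasDerivAt g ((1 - 2 * lam * θ) / (𝓕 + L₁ * θ)) θ := by
    intro θ hθ
    have h1 : HasDerivAt (fun θ : ℝ => 𝓕 + L₁ * θ) L₁ θ := by
      simpa using (hasDerivAt_id θ).const_mul L₁ |>.const_add 𝓕
    have h2 : HasDerivAt (fun θ : ℝ => Real.log (𝓕 + L₁ * θ)) (L₁ / (𝓕 + L₁ * θ)) θ := by
      simpa using h1.log hθ.ne'
    have h3 : HasDerivAt g (C * (L₁ / (𝓕 + L₁ * θ)) - (2 * lam / L₁) * 1) θ := by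
      exact (h2.const_mul C).sub ((hasDerivAt_id θ).const_mul (2 * lam / L₁))
    convert h3 using 1
    rw [hC]
    rw [div_eq_iff hθ.ne', sub_mul, mul_assoc ((L₁ + 2 * lam * 𝓕) / L₁ ^ 2), div_mul_cancel₀ _ hθ.ne']
    field_simp
    ring
  -- h t = g (Θ t) - t has derivative 0 on Ico, hence constant
  have hkey : ∀ x ∈ Icc (0:ℝ) T, g (Θ x) - x = g (Θ 0) - 0 := by
    apply constant_of_has_deriv_right_zero
    · exact fun x hx => ((hg' (Θ x) (hnum x hx)).continuousAt.comp_continuousWithinAt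
        (hΘcont x hx)).sub continuousWithinAt_id
    · intro x hx
      have hxI : x ∈ Icc (0:ℝ) T := Ico_subset_Icc_self hx
      have hd : HasDerivWithinAt (fun t => g (Θ t) - t)
          ((1 - 2 * lam * Θ x) / (𝓕 + L₁ * Θ x) * ((𝓕 + L₁ * Θ x) / (1 - 2 * lam * Θ x)) - 1)
          (Icc 0 T) x := by
        exact ((hg' (Θ x) (hnum x hxI)).comp_hasDerivWithinAt x (hode x hxI)).sub
          (hasDerivWithinAt_id x _)
      have heq : (1 - 2 * lam * Θ x) / (𝓕 + L₁ * Θ x) * ((𝓕 + L₁ * Θ x) / (1 - 2 * lam * Θ x))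
          - 1 = 0 := by
        have h1 := (hden x hxI).ne'
        have h2 := (hnum x hxI).ne'
        field_simp
        rw [div_self (by rwa [mul_comm] at h2), sub_self]
      rw [heq] at hd
      exact hd.mono_of_mem_nhdsWithin (Icc_mem_nhdsGE_of_mem hx)
  have hTeq : T = g (Θ T) - g 0 := by
    have := hkey T hTmem
    rw [hΘ0] at this
    linarith
  -- Θ T bounds
  have hΘT0 : 0 ≤ Θ T := by
    rcases eq_or_lt_of_le hT with h | h
    · rw [← h, hΘ0]
    · have hmono : StrictMonoOn Θ (Icc 0 T) := by
        apply strictMonoOn_of_hasDerivWithinAt_pos (convex_Icc 0 T) hΘcont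
          (f' := fun t => (𝓕 + L₁ * Θ t) / (1 - 2 * lam * Θ t))
        · intro x hx
          rw [interior_Icc] at hx
          exact (hode x (Ioo_subset_Icc_self hx)).mono (by rw [interior_Icc]; exact Ioo_subset_Icc_self)
        · intro x hx
          rw [interior_Icc] at hx
          have hxT := Ioo_subset_Icc_self hx
          exact div_pos (hnum x hxT) (hden x hxT)
      have := hmono h0T hTmem h
      rw [hΘ0] at this
      exact this.le
  have hΘTlt : Θ T < 1 / (2 * lam) := by
    have := hden T hTmem
    rw [lt_div_iff₀ (by positivity)]
    nlinarith
  -- g strictly monotone on [0, 1/(2λ)]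
  have hgmono : StrictMonoOn g (Icc 0 (1 / (2 * lam))) := by
    apply strictMonoOn_of_hasDerivWithinAt_pos (convex_Icc _ _)
      (f' := fun θ => (1 - 2 * lam * θ) / (𝓕 + L₁ * θ))
    · intro θ hθ
      have hpos : 0 < 𝓕 + L₁ * θ := by nlinarith [hθ.1]
      exact ((hg' θ hpos).continuousAt).continuousWithinAt
    · intro θ hθ
      rw [interior_Icc] at hθ
      have hpos : 0 < 𝓕 + L₁ * θ := by nlinarith [hθ.1]
      exact ((hg' θ hpos).hasDerivWithinAt)
    · intro θ hθ
      rw [interior_Icc] at hθ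
      have h1 : 0 < 1 - 2 * lam * θ := by
        have := hθ.2
        rw [lt_div_iff₀ (by positivity)] at this
        nlinarith
      have h2 : 0 < 𝓕 + L₁ * θ := by nlinarith [hθ.1]
      exact div_pos h1 h2
  have hglt : g (Θ T) < g (1 / (2 * lam)) := by
    rcases eq_or_lt_of_le hΘTlt.le with h | h
    · exact absurd h (ne_of_lt hΘTlt)
    · exact hgmono ⟨hΘT0, hΘTlt.le⟩ ⟨by positivity, le_rfl⟩ hΘTlt
  -- Compute g (1/(2λ)) - g 0
  have hcomp : g (1 / (2 * lam)) - g 0 =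
      C * Real.log (1 + L₁ / (2 * lam * 𝓕)) - 1 / L₁ := by
    rw [hg]
    simp only
    have h1 : 𝓕 + L₁ * (1 / (2 * lam)) = 𝓕 * (1 + L₁ / (2 * lam * 𝓕)) := by
      field_simp
    have h2 : (0:ℝ) < 1 + L₁ / (2 * lam * 𝓕) := by positivity
    rw [mul_zero, add_zero, mul_zero, sub_zero, h1, Real.log_mul h𝓕.ne' h2.ne']
    field_simp
    ring
  rw [hTeq]
  linarith
end

section
/- Let T > 0 and let K₁(t,s) be defined on Δ = {(t,s) : 0 ≤ s ≤ t ≤ T}, continuous together with its partial derivative ∂K₁/∂t on Δ. Set k = min_{t∈[0,T]} |K₁(t,t)| and L₁ = max_{(t,s)∈Δ} |∂K₁/∂t(t,s)|, and assume k > 0. If x : [0,T] → ℝ is continuous and y : [0,T] → ℝ is differentiable with ∫₀ᵗ K₁(t,s)·x(s) ds = y(t) for all t ∈ [0,T], then max_{t∈[0,T]} |x(t)| ≤ (1/k)·e^{L₁·T/k} · max_{t∈[0,T]} |y'(t)|. -/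
open Set intervalIntegral

open MeasureTheory in

lemma fubini_triangle (F : ℝ → ℝ → ℝ) (hF : Continuous (fun p : ℝ × ℝ => F p.1 p.2))
    {t : ℝ} (ht : 0 ≤ t) :
    (∫ s in (0:ℝ)..t, ∫ τ in s..t, F τ s) = ∫ τ in (0:ℝ)..t, ∫ s in (0:ℝ)..τ, F τ s := by
  set S : Set (ℝ × ℝ) := {p | 0 ≤ p.2 ∧ p.2 ≤ p.1 ∧ p.1 ≤ t} with hS
  have hSc : IsClosed S := by
    apply IsClosed.inter (isClosed_le continuous_const continuous_snd)
    exact IsClosed.inter (isClosed_le continuous_snd continuous_fst)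
      (isClosed_le continuous_fst continuous_const)
  have hSm : MeasurableSet S := hSc.measurableSet
  have hScpt : IsCompact S := by
    refine (isCompact_Icc (a := ((0:ℝ),(0:ℝ))) (b := (t,t))).of_isClosed_subset hSc ?_
    rintro ⟨τ, s⟩ ⟨h1, h2, h3⟩
    exact ⟨⟨h1.trans h2, h1⟩, ⟨h3, h2.trans h3⟩⟩
  set g : ℝ × ℝ → ℝ := fun p => F p.1 p.2 with hg
  have hint : Integrable (S.indicator g) (volume : Measure (ℝ × ℝ)) :=
    (hF.continuousOn.integrableOn_compact hScpt).integrable_indicator hSm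
  have hswap := MeasureTheory.integral_integral_swap
    (f := fun τ s => S.indicator g (τ, s)) (μ := (volume : Measure ℝ)) (ν := (volume : Measure ℝ))
    (by rw [show (Function.uncurry fun τ s => S.indicator g (τ, s)) = S.indicator g from rfl,
          ← MeasureTheory.Measure.volume_eq_prod]; exact hint)
  -- identify LHS of hswap with RHS of the goal
  have hR : (∫ τ : ℝ, ∫ s : ℝ, S.indicator g (τ, s)) = ∫ τ in (0:ℝ)..t, ∫ s in (0:ℝ)..τ, F τ s := by
    have h1 : ∀ τ : ℝ, (∫ s : ℝ, S.indicator g (τ, s))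
        = (Icc (0:ℝ) t).indicator (fun τ => ∫ s in (0:ℝ)..τ, F τ s) τ := by
      intro τ
      by_cases hτ : τ ∈ Icc (0:ℝ) t
      · have : (fun s : ℝ => S.indicator g (τ, s)) = (Icc (0:ℝ) τ).indicator (fun s => F τ s) := by
          funext s
          by_cases hs : s ∈ Icc (0:ℝ) τ
          · rw [Set.indicator_of_mem hs, Set.indicator_of_mem (show (τ, s) ∈ S from ⟨hs.1, hs.2, hτ.2⟩)]
          · rw [Set.indicator_of_notMem hs, Set.indicator_of_notMem]
            intro hmem
            exact hs ⟨hmem.1, hmem.2.1⟩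
        rw [this, MeasureTheory.integral_indicator measurableSet_Icc,
          Set.indicator_of_mem hτ, intervalIntegral.integral_of_le hτ.1,
          MeasureTheory.integral_Icc_eq_integral_Ioc]
      · have : (fun s : ℝ => S.indicator g (τ, s)) = fun _ => (0:ℝ) := by
          funext s
          apply Set.indicator_of_notMem
          intro hmem
          exact hτ ⟨hmem.1.trans hmem.2.1, hmem.2.2⟩
        rw [this, MeasureTheory.integral_zero, Set.indicator_of_notMem hτ]
    simp only [h1]
    rw [MeasureTheory.integral_indicator measurableSet_Icc, intervalIntegral.integral_of_le ht,
      MeasureTheory.integral_Icc_eq_integral_Ioc]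
  have hL : (∫ s : ℝ, ∫ τ : ℝ, S.indicator g (τ, s)) = ∫ s in (0:ℝ)..t, ∫ τ in s..t, F τ s := by
    have h1 : ∀ s : ℝ, (∫ τ : ℝ, S.indicator g (τ, s))
        = (Icc (0:ℝ) t).indicator (fun s => ∫ τ in s..t, F τ s) s := by
      intro s
      by_cases hs : s ∈ Icc (0:ℝ) t
      · have : (fun τ : ℝ => S.indicator g (τ, s)) = (Icc s t).indicator (fun τ => F τ s) := by
          funext τ
          by_cases hτ : τ ∈ Icc s t
          · rw [Set.indicator_of_mem hτ, Set.indicator_of_mem (show (τ, s) ∈ S from ⟨hs.1, hτ.1, hτ.2⟩)]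
          · rw [Set.indicator_of_notMem hτ, Set.indicator_of_notMem]
            intro hmem
            exact hτ ⟨hmem.2.1, hmem.2.2⟩
        rw [this, MeasureTheory.integral_indicator measurableSet_Icc,
          Set.indicator_of_mem hs, intervalIntegral.integral_of_le hs.2,
          MeasureTheory.integral_Icc_eq_integral_Ioc]
      · have : (fun τ : ℝ => S.indicator g (τ, s)) = fun _ => (0:ℝ) := by
          funext τ
          apply Set.indicator_of_notMem
          intro hmem
          exact hs ⟨hmem.1, hmem.2.1.trans hmem.2.2⟩
        rw [this, MeasureTheory.integral_zero, Set.indicator_of_notMem hs]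
    simp only [h1]
    rw [MeasureTheory.integral_indicator measurableSet_Icc, intervalIntegral.integral_of_le ht,
      MeasureTheory.integral_Icc_eq_integral_Ioc]
  exact hL.symm.trans (hswap.symm.trans hR)


/-- Stability estimate for the linear Volterra equation of the first kind:
if `∫₀ᵗ K₁(t,s)x(s)ds = y(t)` on `[0,T]`, `k = min_{[0,T]} |K₁(t,t)| > 0` and
`L₁ = max_Δ |∂K₁/∂t|`, then `max |x| ≤ (1/k) e^{L₁ T/k} max |y'|`. -/
theorem stmt12 (T : ℝ) (hT : 0 < T)
    (K₁ K₁t : ℝ → ℝ → ℝ)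
    (hK₁ : ContinuousOn (fun p : ℝ × ℝ => K₁ p.1 p.2) {p | 0 ≤ p.2 ∧ p.2 ≤ p.1 ∧ p.1 ≤ T})
    (hK₁d : ∀ s t : ℝ, 0 ≤ s → s ≤ t → t ≤ T →
      HasDerivWithinAt (fun τ => K₁ τ s) (K₁t t s) (Icc s T) t)
    (hK₁tc : ContinuousOn (fun p : ℝ × ℝ => K₁t p.1 p.2) {p | 0 ≤ p.2 ∧ p.2 ≤ p.1 ∧ p.1 ≤ T})
    (k L₁ : ℝ)
    (hk : k = sInf ((fun t => |K₁ t t|) '' Icc (0:ℝ) T))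
    (hL : L₁ = sSup ((fun p : ℝ × ℝ => |K₁t p.1 p.2|) '' {p | 0 ≤ p.2 ∧ p.2 ≤ p.1 ∧ p.1 ≤ T}))
    (hkpos : 0 < k)
    (x : ℝ → ℝ) (hx : ContinuousOn x (Icc 0 T))
    (y y' : ℝ → ℝ)
    (hy' : ∀ t ∈ Icc (0:ℝ) T, HasDerivWithinAt y (y' t) (Icc 0 T) t)
    (heq : ∀ t ∈ Icc (0:ℝ) T, (∫ s in (0:ℝ)..t, K₁ t s * x s) = y t) :
    ∀ t ∈ Icc (0:ℝ) T,
      |x t| ≤ (1 / k) * Real.exp (L₁ * T / k) * sSup ((fun τ => |y' τ|) '' Icc (0:ℝ) T) := by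
  -- clamping
  set c : ℝ → ℝ := fun u => min (max u 0) T with hcdef
  have hcc : Continuous c := (continuous_id.max continuous_const).min continuous_const
  have hc0 : ∀ u, 0 ≤ c u := fun u => le_min (le_max_right _ _) hT.le
  have hcT : ∀ u, c u ≤ T := fun u => min_le_right _ _
  have hcid : ∀ u ∈ Icc (0:ℝ) T, c u = u := by
    intro u hu
    simp only [hcdef]
    rw [max_eq_left hu.1, min_eq_left hu.2]
  -- extensions
  set A : ℝ → ℝ → ℝ := fun t s => K₁ (max (c t) (c s)) (c s) with hAdef
  set B : ℝ → ℝ → ℝ := fun t s => K₁t (max (c t) (c s)) (c s) with hBdef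
  set X : ℝ → ℝ := fun s => x (c s) with hXdef
  have hmap : ∀ p : ℝ × ℝ, (max (c p.1) (c p.2), c p.2) ∈
      {p : ℝ × ℝ | 0 ≤ p.2 ∧ p.2 ≤ p.1 ∧ p.1 ≤ T} :=
    fun p => ⟨hc0 _, le_max_right _ _, max_le (hcT _) (hcT _)⟩
  have hmapc : Continuous (fun p : ℝ × ℝ => ((max (c p.1) (c p.2), c p.2) : ℝ × ℝ)) :=
    ((hcc.comp continuous_fst).max (hcc.comp continuous_snd)).prodMk (hcc.comp continuous_snd)
  have hAc : Continuous (fun p : ℝ × ℝ => A p.1 p.2) := hK₁.comp_continuous hmapc hmap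
  have hBc : Continuous (fun p : ℝ × ℝ => B p.1 p.2) := hK₁tc.comp_continuous hmapc hmap
  have hXc : Continuous X := hx.comp_continuous hcc (fun u => ⟨hc0 u, hcT u⟩)
  have hAeq : ∀ s t : ℝ, 0 ≤ s → s ≤ t → t ≤ T → A t s = K₁ t s := by
    intro s t h0 hst htT
    simp only [hAdef]
    rw [hcid s ⟨h0, hst.trans htT⟩, hcid t ⟨h0.trans hst, htT⟩, max_eq_left hst]
  have hBeq : ∀ s t : ℝ, 0 ≤ s → s ≤ t → t ≤ T → B t s = K₁t t s := by
    intro s t h0 hst htT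
    simp only [hBdef]
    rw [hcid s ⟨h0, hst.trans htT⟩, hcid t ⟨h0.trans hst, htT⟩, max_eq_left hst]
  have hXeq : ∀ s ∈ Icc (0:ℝ) T, X s = x s := by
    intro s hs; simp only [hXdef]; rw [hcid s hs]
  -- FTC2 for the kernel
  have hftc : ∀ t ∈ Icc (0:ℝ) T, ∀ s ∈ Icc (0:ℝ) t,
      K₁ t s = K₁ s s + ∫ τ in s..t, B τ s := by
    intro t ht s hs
    have h1 : (∫ τ in s..t, B τ s) = A t s - A s s := by
      apply intervalIntegral.integral_eq_sub_of_hasDeriv_right_of_le hs.2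
      · exact (hAc.comp (continuous_id.prodMk continuous_const)).continuousOn
      · intro τ hτ
        have hd := hK₁d s τ hs.1 hτ.1.le (hτ.2.le.trans ht.2)
        have hd2 : HasDerivWithinAt (fun u => A u s) (K₁t τ s) (Icc s T) τ := by
          refine hd.congr (fun u hu => hAeq s u hs.1 hu.1 hu.2) ?_
          exact hAeq s τ hs.1 hτ.1.le (hτ.2.le.trans ht.2)
        have hmem : Icc s T ∈ nhdsWithin τ (Ioi τ) := by
          refine Filter.mem_of_superset (Ioc_mem_nhdsGT_of_mem
            (⟨le_refl τ, lt_of_lt_of_le hτ.2 ht.2⟩ : τ ∈ Ico τ T)) ?_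
          exact fun u hu => ⟨hτ.1.le.trans hu.1.le, hu.2⟩
        rw [hBeq s τ hs.1 hτ.1.le (hτ.2.le.trans ht.2)]
        exact hd2.mono_of_mem_nhdsWithin hmem
      · exact ((hBc.comp (continuous_id.prodMk continuous_const))).intervalIntegrable _ _
    rw [h1, hAeq s t hs.1 hs.2 ht.2, hAeq s s hs.1 le_rfl (hs.2.trans ht.2)]
    ring
  -- Definition of H and the identity y t = ∫₀ᵗ H
  have hBXc : Continuous (Function.uncurry fun τ s : ℝ => B τ s * X s) :=
    hBc.mul (hXc.comp continuous_snd)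
  have hBXc' : Continuous (Function.uncurry fun s τ : ℝ => B τ s * X s) :=
    (hBc.comp continuous_swap).mul (hXc.comp continuous_fst)
  set H : ℝ → ℝ := fun τ => A τ τ * X τ + ∫ s in (0:ℝ)..τ, B τ s * X s with hHdef
  have hHc : Continuous H := by
    have h2 : Continuous (fun τ : ℝ => ∫ s in (0:ℝ)..τ, B τ s * X s) :=
      intervalIntegral.continuous_parametric_intervalIntegral_of_continuous hBXc continuous_id
    exact ((hAc.comp (continuous_id.prodMk continuous_id)).mul hXc).add h2
    -- identity y t = integral of H
  have hid : ∀ t ∈ Icc (0:ℝ) T, y t = ∫ τ in (0:ℝ)..t, H τ := by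
    intro t ht
    have hcont1 : Continuous (fun s : ℝ => A s s * X s) :=
      (hAc.comp (continuous_id.prodMk continuous_id)).mul hXc
    have hcont2 : Continuous (fun s : ℝ => ∫ τ in s..t, B τ s * X s) := by
      have h0 : Continuous (fun s : ℝ => ∫ τ in t..s, B τ s * X s) :=
        intervalIntegral.continuous_parametric_intervalIntegral_of_continuous hBXc' continuous_id
      have hswitch : (fun s : ℝ => ∫ τ in s..t, B τ s * X s)
          = fun s => -(∫ τ in t..s, B τ s * X s) := by
        funext s; rw [intervalIntegral.integral_symm]
      rw [hswitch]; exact h0.neg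
    have e1 : (∫ s in (0:ℝ)..t, K₁ t s * x s)
        = ∫ s in (0:ℝ)..t, (A s s * X s + ∫ τ in s..t, B τ s * X s) := by
      apply intervalIntegral.integral_congr
      intro s hs
      rw [uIcc_of_le ht.1] at hs
      have hsT : s ∈ Icc (0:ℝ) T := ⟨hs.1, hs.2.trans ht.2⟩
      simp only []
      rw [hftc t ht s hs, hAeq s s hs.1 le_rfl (hs.2.trans ht.2), hXeq s hsT,
        intervalIntegral.integral_mul_const]
      ring
    have e2 : (∫ s in (0:ℝ)..t, (A s s * X s + ∫ τ in s..t, B τ s * X s))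
        = (∫ s in (0:ℝ)..t, A s s * X s) + ∫ s in (0:ℝ)..t, ∫ τ in s..t, B τ s * X s :=
      intervalIntegral.integral_add (hcont1.intervalIntegrable _ _)
        (hcont2.intervalIntegrable _ _)
    have e3 := fubini_triangle (fun τ s => B τ s * X s) (by exact hBXc) ht.1
    have e4 : (∫ τ in (0:ℝ)..t, H τ)
        = (∫ τ in (0:ℝ)..t, A τ τ * X τ) + ∫ τ in (0:ℝ)..t, ∫ s in (0:ℝ)..τ, B τ s * X s := by
      refine intervalIntegral.integral_add (hcont1.intervalIntegrable _ _) ?_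
      exact (intervalIntegral.continuous_parametric_intervalIntegral_of_continuous hBXc
        continuous_id).intervalIntegrable _ _
    rw [← heq t ht, e1, e2, e3, ← e4]
  -- y' = H on [0, T]
  have hyH : ∀ t ∈ Icc (0:ℝ) T, y' t = H t := by
    intro t ht
    have hG : HasDerivAt (fun u => ∫ τ in (0:ℝ)..u, H τ) (H t) t :=
      intervalIntegral.integral_hasDerivAt_right (hHc.intervalIntegrable _ _)
        (hHc.aestronglyMeasurable.stronglyMeasurableAtFilter) hHc.continuousAt
    have h1 : HasDerivWithinAt y (H t) (Icc 0 T) t :=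
      hG.hasDerivWithinAt.congr (fun u hu => hid u hu) (hid t ht)
    have hud : UniqueDiffWithinAt ℝ (Icc (0:ℝ) T) t := (uniqueDiffOn_Icc hT) t ht
    rw [← (hy' t ht).derivWithin hud, h1.derivWithin hud]
  -- bounds from sInf / sSup
  have hkle : ∀ t ∈ Icc (0:ℝ) T, k ≤ |K₁ t t| := by
    intro t ht
    rw [hk]
    refine csInf_le ⟨0, ?_⟩ ⟨t, ht, rfl⟩
    rintro v ⟨u, -, rfl⟩; exact abs_nonneg _
  have hDcl : IsClosed {p : ℝ × ℝ | 0 ≤ p.2 ∧ p.2 ≤ p.1 ∧ p.1 ≤ T} := by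
    apply IsClosed.inter (isClosed_le continuous_const continuous_snd)
    exact IsClosed.inter (isClosed_le continuous_snd continuous_fst)
      (isClosed_le continuous_fst continuous_const)
  have hDcpt : IsCompact {p : ℝ × ℝ | 0 ≤ p.2 ∧ p.2 ≤ p.1 ∧ p.1 ≤ T} := by
    refine (isCompact_Icc (a := ((0:ℝ),(0:ℝ))) (b := (T,T))).of_isClosed_subset hDcl ?_
    rintro ⟨τ, s⟩ ⟨h1, h2, h3⟩
    exact ⟨⟨h1.trans h2, h1⟩, ⟨h3, h2.trans h3⟩⟩
  have hLbd : BddAbove ((fun p : ℝ × ℝ => |K₁t p.1 p.2|) ''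
      {p : ℝ × ℝ | 0 ≤ p.2 ∧ p.2 ≤ p.1 ∧ p.1 ≤ T}) :=
    (hDcpt.image_of_continuousOn hK₁tc.abs).bddAbove
  have hLle : ∀ s t : ℝ, 0 ≤ s → s ≤ t → t ≤ T → |K₁t t s| ≤ L₁ := by
    intro s t h1 h2 h3
    rw [hL]
    exact le_csSup hLbd ⟨(t, s), ⟨h1, h2, h3⟩, rfl⟩
  have hL0 : 0 ≤ L₁ := le_trans (abs_nonneg _) (hLle 0 0 le_rfl le_rfl hT.le)
  set M := sSup ((fun τ => |y' τ|) '' Icc (0:ℝ) T) with hMdef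
  have hMbdd : BddAbove ((fun τ => |y' τ|) '' Icc (0:ℝ) T) := by
    have himg : ((fun τ => |y' τ|) '' Icc (0:ℝ) T) = ((fun τ => |H τ|) '' Icc (0:ℝ) T) :=
      image_congr (fun τ hτ => by rw [hyH τ hτ])
    rw [himg]
    exact (isCompact_Icc.image hHc.abs).bddAbove
  have hMle : ∀ t ∈ Icc (0:ℝ) T, |y' t| ≤ M := fun t ht => le_csSup hMbdd ⟨t, ht, rfl⟩
  have hM0 : 0 ≤ M := (abs_nonneg _).trans (hMle 0 ⟨le_rfl, hT.le⟩)
  -- Gronwall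
  set φ : ℝ → ℝ := fun u => ∫ s in (0:ℝ)..u, |X s| with hphidef
  have hphic : Continuous φ :=
    intervalIntegral.continuous_primitive (fun a b => (hXc.abs).intervalIntegrable a b) 0
  have hphid : ∀ u : ℝ, HasDerivAt φ (|X u|) u := by
    intro u
    exact intervalIntegral.integral_hasDerivAt_right ((hXc.abs).intervalIntegrable _ _)
      ((hXc.abs).aestronglyMeasurable.stronglyMeasurableAtFilter) (hXc.abs).continuousAt
  have hkey : ∀ t ∈ Icc (0:ℝ) T, |x t| ≤ M / k + L₁ / k * φ t := by
    intro t ht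
    have h0 : y' t = K₁ t t * x t + ∫ s in (0:ℝ)..t, B t s * X s := by
      rw [hyH t ht]
      simp only [hHdef]
      rw [hAeq t t ht.1 le_rfl ht.2, hXeq t ht]
    have h2 : |∫ s in (0:ℝ)..t, B t s * X s| ≤ ∫ s in (0:ℝ)..t, |B t s * X s| :=
      intervalIntegral.abs_integral_le_integral_abs ht.1
    have h3 : (∫ s in (0:ℝ)..t, |B t s * X s|) ≤ ∫ s in (0:ℝ)..t, L₁ * |X s| := by
      apply intervalIntegral.integral_mono_on ht.1
      · exact ((hBc.comp (continuous_const.prodMk continuous_id)).mul hXc).abs.intervalIntegrable _ _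
      · exact (continuous_const.mul hXc.abs).intervalIntegrable _ _
      · intro s hs
        rw [abs_mul]
        have hb : |B t s| ≤ L₁ := by
          rw [hBeq s t hs.1 hs.2 ht.2]
          exact hLle s t hs.1 hs.2 ht.2
        exact mul_le_mul_of_nonneg_right hb (abs_nonneg _)
    have h4 : (∫ s in (0:ℝ)..t, L₁ * |X s|) = L₁ * φ t := by
      rw [hphidef]
      exact intervalIntegral.integral_const_mul _ _
    have h5 : k * |x t| ≤ M + L₁ * φ t := by
      calc k * |x t| ≤ |K₁ t t| * |x t| :=
            mul_le_mul_of_nonneg_right (hkle t ht) (abs_nonneg _)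
        _ = |K₁ t t * x t| := (abs_mul _ _).symm
        _ = |y' t - ∫ s in (0:ℝ)..t, B t s * X s| := by rw [h0]; ring_nf
        _ ≤ |y' t| + |∫ s in (0:ℝ)..t, B t s * X s| := by
            rw [sub_eq_add_neg]
            exact (abs_add_le _ _).trans (by rw [abs_neg])
        _ ≤ M + L₁ * φ t := add_le_add (hMle t ht) (h2.trans (h3.trans_eq h4))
    have h6 : |x t| ≤ (M + L₁ * φ t) / k := by
      rw [le_div_iff₀ hkpos]
      linarith
    exact h6.trans_eq (by ring)
  have hgr : ∀ t ∈ Icc (0:ℝ) T, φ t ≤ gronwallBound 0 (L₁ / k) (M / k) (t - 0) := by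
    intro t ht
    have key := norm_le_gronwallBound_of_norm_deriv_right_le (f := φ) (f' := fun u => |X u|)
      (δ := 0) (K := L₁ / k) (ε := M / k) (a := 0) (b := T)
      hphic.continuousOn (fun u _ => (hphid u).hasDerivWithinAt) (by simp [hphidef]) ?_ t ht
    · rw [Real.norm_eq_abs] at key
      exact (le_abs_self _).trans key
    · intro u hu
      have hxu : |X u| ≤ M / k + L₁ / k * φ u := by
        rw [hXeq u ⟨hu.1, hu.2.le⟩]
        exact hkey u ⟨hu.1, hu.2.le⟩
      have hphiu : φ u ≤ ‖φ u‖ := le_abs_self _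
      have hK0 : 0 ≤ L₁ / k := div_nonneg hL0 hkpos.le
      simp only [Real.norm_eq_abs, abs_abs]
      have := mul_le_mul_of_nonneg_left hphiu hK0
      rw [Real.norm_eq_abs] at this
      linarith
  intro t ht
  have h6 := hkey t ht
  have h7 := hgr t ht
  have hK0 : 0 ≤ L₁ / k := div_nonneg hL0 hkpos.le
  rcases eq_or_lt_of_le hL0 with hLz | hLpos
  · rw [← hLz] at h6 ⊢
    have : (0:ℝ) * T / k = 0 := by ring
    rw [this, Real.exp_zero]
    calc |x t| ≤ M / k + 0 / k * φ t := h6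
      _ = 1 / k * 1 * M := by ring
  · have hKpos : 0 < L₁ / k := div_pos hLpos hkpos
    rw [gronwallBound_of_K_ne_0 hKpos.ne'] at h7
    have hphit : φ t ≤ M / k / (L₁ / k) * (Real.exp (L₁ / k * t) - 1) := by
      rw [show t - 0 = t from sub_zero t] at h7
      simp only [] at h7
      linarith [h7]
    have hstep : |x t| ≤ M / k * Real.exp (L₁ / k * t) := by
      have hmul := mul_le_mul_of_nonneg_left hphit hK0
      have hsimp : L₁ / k * (M / k / (L₁ / k) * (Real.exp (L₁ / k * t) - 1))
          = M / k * (Real.exp (L₁ / k * t) - 1) := by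
        field_simp
      rw [hsimp] at hmul
      calc |x t| ≤ M / k + L₁ / k * φ t := h6
        _ ≤ M / k + M / k * (Real.exp (L₁ / k * t) - 1) := by linarith
        _ = M / k * Real.exp (L₁ / k * t) := by ring
    have hexp : Real.exp (L₁ / k * t) ≤ Real.exp (L₁ * T / k) := by
      apply Real.exp_le_exp.2
      rw [div_mul_eq_mul_div]
      gcongr
      exact ht.2
    calc |x t| ≤ M / k * Real.exp (L₁ / k * t) := hstep
      _ ≤ M / k * Real.exp (L₁ * T / k) :=
          mul_le_mul_of_nonneg_left hexp (div_nonneg hM0 hkpos.le)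
      _ = 1 / k * Real.exp (L₁ * T / k) * M := by ring
end

section
/- Let N ≥ 2 and T > 0. Let F : [0,T] → ℝ be continuous, positive and non-decreasing; for m = 1,…,N let L_m : [0,T] → ℝ be continuous, non-negative and non-decreasing; for m = 2,…,N let M_m : [0,T] → ℝ be continuous, non-negative and non-decreasing. Suppose ψ : [0,T] → ℝ is continuous, non-negative, satisfies Σ_{m=2}^{N} m·M_m(t)·(∫₀ᵗ ψ(s)ds)^{m-1} < 1 for all t ∈ [0,T], and solves ψ(t) = F(t) + ψ(t)·Σ_{m=2}^{N} m·M_m(t)·(∫₀ᵗ ψ(s)ds)^{m-1} + Σ_{m=1}^{N} L_m(t)·(∫₀ᵗ ψ(s)ds)^m for all t ∈ [0,T]. If x : [0,T] → ℝ is continuous and satisfies |x(t)| ≤ F(t) + |x(t)|·Σ_{m=2}^{N} m·M_m(t)·(∫₀ᵗ |x(s)|ds)^{m-1} + Σ_{m=1}^{N} L_m(t)·(∫₀ᵗ |x(s)|ds)^m for all t ∈ [0,T], then |x(t)| ≤ ψ(t) for all t ∈ [0,T]. -/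
open Set intervalIntegral

lemma aux_pow_sub_pow_le {B p q : ℝ} (hp : 0 ≤ p) (hq : 0 ≤ q) (hpB : p ≤ B) (hqB : q ≤ B)
    (n : ℕ) : p ^ n - q ^ n ≤ (n : ℝ) * B ^ (n - 1) * max (p - q) 0 := by
  have hB : 0 ≤ B := le_trans hp hpB
  rcases le_or_gt p q with h | h
  · have h1 : p ^ n ≤ q ^ n := pow_le_pow_left₀ hp h n
    have h2 : (0:ℝ) ≤ (n:ℝ) * B ^ (n-1) * max (p-q) 0 := by positivity
    linarith
  · rw [max_eq_left (by linarith : (0:ℝ) ≤ p - q)]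
    induction n with
    | zero => simp
    | succ k ih =>
      cases k with
      | zero => simp
      | succ k' =>
        have ih' := ih
        have hd : 0 ≤ p ^ (k'+1) - q ^ (k'+1) :=
          sub_nonneg.mpr (pow_le_pow_left₀ hq h.le _)
        have e1 : p * (p ^ (k'+1) - q ^ (k'+1)) ≤ B * (((k'+1:ℕ):ℝ) * B ^ ((k'+1) - 1) * (p - q)) := by
          calc p * (p ^ (k'+1) - q ^ (k'+1)) ≤ B * (p ^ (k'+1) - q ^ (k'+1)) :=
                mul_le_mul_of_nonneg_right hpB hd
            _ ≤ B * (((k'+1:ℕ):ℝ) * B ^ ((k'+1) - 1) * (p - q)) :=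
                mul_le_mul_of_nonneg_left ih' hB
        have e2 : (p - q) * q ^ (k'+1) ≤ (p - q) * B ^ (k'+1) :=
          mul_le_mul_of_nonneg_left (pow_le_pow_left₀ hq hqB _) (by linarith)
        have e3 : p ^ (k'+2) - q ^ (k'+2)
            = p * (p ^ (k'+1) - q ^ (k'+1)) + (p - q) * q ^ (k'+1) := by ring
        have e4 : B * (((k'+1:ℕ):ℝ) * B ^ ((k'+1) - 1) * (p - q)) + (p - q) * B ^ (k'+1)
            = ((k'+2:ℕ):ℝ) * B ^ ((k'+2) - 1) * (p - q) := by
          have h1 : k' + 1 - 1 = k' := rfl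
          have h2 : k' + 2 - 1 = k' + 1 := rfl
          rw [h1, h2]; push_cast; ring
        calc p ^ (k'+2) - q ^ (k'+2)
            ≤ B * (((k'+1:ℕ):ℝ) * B ^ ((k'+1) - 1) * (p - q)) + (p - q) * B ^ (k'+1) := by
              rw [e3]; exact add_le_add e1 e2
          _ = _ := e4

lemma aux_nocross {w w' : ℝ → ℝ} {K T : ℝ} (hK : 0 ≤ K)
    (hw : ∀ t, HasDerivAt w (w' t) t) (h0 : w 0 = 0)
    (hb : ∀ t ∈ Icc (0:ℝ) T, w' t ≤ K * max (w t) 0) :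
    ∀ t ∈ Icc (0:ℝ) T, w t ≤ 0 := by
  intro t₂ ht₂
  by_contra hpos
  push_neg at hpos
  have hwc : Continuous w := continuous_iff_continuousAt.mpr fun t => (hw t).continuousAt
  set S : Set ℝ := Icc (0:ℝ) t₂ ∩ {s | w s ≤ 0} with hSdef
  have hS_closed : IsClosed S := isClosed_Icc.inter (isClosed_le hwc continuous_const)
  have hS_ne : S.Nonempty := ⟨0, ⟨le_refl 0, ht₂.1⟩, h0.le⟩
  have hS_bdd : BddAbove S := (BddAbove.mono Set.inter_subset_left bddAbove_Icc)
  set c := sSup S with hcdef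
  have hcS : c ∈ S := hS_closed.csSup_mem hS_ne hS_bdd
  have hc0 : 0 ≤ c := hcS.1.1
  have hct : c ≤ t₂ := hcS.1.2
  have hwc0 : w c ≤ 0 := hcS.2
  have hclt : c < t₂ := lt_of_le_of_ne hct (by intro hEq; rw [hEq] at hwc0; linarith)
  have hpos' : ∀ s ∈ Ioo c t₂, 0 < w s := by
    intro s hs
    by_contra hns
    push_neg at hns
    have hsS : s ∈ S := ⟨⟨le_trans hc0 hs.1.le, hs.2.le⟩, hns⟩
    exact absurd (le_csSup hS_bdd hsS) (not_le.mpr hs.1)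
  set u : ℝ → ℝ := fun s => w s * Real.exp (-K * s) with hudef
  have hu : ∀ s, HasDerivAt u ((w' s - K * w s) * Real.exp (-K * s)) s := by
    intro s
    have he : HasDerivAt (fun s : ℝ => Real.exp (-K * s)) (Real.exp (-K * s) * (-K)) s := by
      simpa using ((hasDerivAt_id s).const_mul (-K)).exp
    have : HasDerivAt (fun y => w y * Real.exp (-K * y)) _ s := (hw s).mul he
    convert this using 1
    ring
  have hanti : AntitoneOn u (Icc c t₂) := by
    apply antitoneOn_of_deriv_nonpos (convex_Icc c t₂)
      (continuous_iff_continuousAt.mpr fun s => (hu s).continuousAt).continuousOn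
      (fun s _ => (hu s).differentiableAt.differentiableWithinAt)
    intro s hs
    rw [interior_Icc] at hs
    rw [(hu s).deriv]
    have h1 : 0 < w s := hpos' s hs
    have h2 : w' s ≤ K * w s := by
      have := hb s ⟨le_trans hc0 hs.1.le, le_trans hs.2.le ht₂.2⟩
      rwa [max_eq_left h1.le] at this
    have h3 := Real.exp_pos (-K * s)
    nlinarith
  have h4 : u t₂ ≤ u c := hanti ⟨le_refl c, hclt.le⟩ ⟨hclt.le, le_refl t₂⟩ hclt.le
  have h5 : u c ≤ 0 := mul_nonpos_of_nonpos_of_nonneg hwc0 (Real.exp_pos _).le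
  have h6 : 0 < u t₂ := mul_pos hpos (Real.exp_pos _)
  linarith


/-- Majorant principle for the polynomial integral inequality of degree `N`:
any continuous solution `x` of
`|x(t)| ≤ F(t) + |x(t)| Σ_{m=2}^N m M_m(t)(∫₀ᵗ|x|)^{m-1} + Σ_{m=1}^N L_m(t)(∫₀ᵗ|x|)^m`
is bounded by the continuous solution `ψ` of the corresponding majorant equation,
as long as `Σ_{m=2}^N m M_m(t)(∫₀ᵗ ψ)^{m-1} < 1` on `[0,T]`. -/
theorem stmt15 (N : ℕ) (hN : 2 ≤ N) (T : ℝ) (hT : 0 < T)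
    (F : ℝ → ℝ) (L M : ℕ → ℝ → ℝ)
    (hFc : ContinuousOn F (Icc 0 T)) (hFpos : ∀ t ∈ Icc (0:ℝ) T, 0 < F t)
    (hFmono : MonotoneOn F (Icc 0 T))
    (hLc : ∀ m ∈ Finset.Icc 1 N, ContinuousOn (L m) (Icc 0 T))
    (hLnn : ∀ m ∈ Finset.Icc 1 N, ∀ t ∈ Icc (0:ℝ) T, 0 ≤ L m t)
    (hLmono : ∀ m ∈ Finset.Icc 1 N, MonotoneOn (L m) (Icc 0 T))
    (hMc : ∀ m ∈ Finset.Icc 2 N, ContinuousOn (M m) (Icc 0 T))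
    (hMnn : ∀ m ∈ Finset.Icc 2 N, ∀ t ∈ Icc (0:ℝ) T, 0 ≤ M m t)
    (hMmono : ∀ m ∈ Finset.Icc 2 N, MonotoneOn (M m) (Icc 0 T))
    (ψ : ℝ → ℝ) (hψc : ContinuousOn ψ (Icc 0 T))
    (hψnn : ∀ t ∈ Icc (0:ℝ) T, 0 ≤ ψ t)
    (hψlt : ∀ t ∈ Icc (0:ℝ) T,
      (∑ m ∈ Finset.Icc 2 N,
        (m : ℝ) * M m t * (∫ s in (0:ℝ)..t, ψ s) ^ (m - 1)) < 1)
    (hψeq : ∀ t ∈ Icc (0:ℝ) T,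
      ψ t = F t +
        ψ t * (∑ m ∈ Finset.Icc 2 N,
          (m : ℝ) * M m t * (∫ s in (0:ℝ)..t, ψ s) ^ (m - 1)) +
        ∑ m ∈ Finset.Icc 1 N, L m t * (∫ s in (0:ℝ)..t, ψ s) ^ m)
    (x : ℝ → ℝ) (hx : ContinuousOn x (Icc 0 T))
    (hineq : ∀ t ∈ Icc (0:ℝ) T,
      |x t| ≤ F t +
        |x t| * (∑ m ∈ Finset.Icc 2 N,
          (m : ℝ) * M m t * (∫ s in (0:ℝ)..t, |x s|) ^ (m - 1)) +
        ∑ m ∈ Finset.Icc 1 N, L m t * (∫ s in (0:ℝ)..t, |x s|) ^ m) :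
    ∀ t ∈ Icc (0:ℝ) T, |x t| ≤ ψ t := by
  
  have hT0 : (0:ℝ) ≤ T := hT.le
  have h0mem : (0:ℝ) ∈ Icc (0:ℝ) T := ⟨le_refl 0, hT0⟩
  -- projection onto [0,T]
  set pr : ℝ → ℝ := fun t => min (max t 0) T with hprdef
  have hpr_mem : ∀ t, pr t ∈ Icc (0:ℝ) T := fun t =>
    ⟨le_min (le_max_right t 0) hT0, min_le_right _ _⟩
  have hpr_id : ∀ t ∈ Icc (0:ℝ) T, pr t = t := by
    intro t ht
    show min (max t 0) T = t
    rw [max_eq_left ht.1, min_eq_left ht.2]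
  have hpr_cont : Continuous pr := (continuous_id.max continuous_const).min continuous_const
  -- extended integrands
  set xa : ℝ → ℝ := fun t => |x (pr t)| with hxadef
  set ψa : ℝ → ℝ := fun t => ψ (pr t) with hψadef
  have hxac : Continuous xa := (hx.comp_continuous hpr_cont hpr_mem).abs
  have hψac : Continuous ψa := hψc.comp_continuous hpr_cont hpr_mem
  have hxa_eq : ∀ t ∈ Icc (0:ℝ) T, xa t = |x t| := fun t ht => by
    show |x (pr t)| = |x t|; rw [hpr_id t ht]
  have hψa_eq : ∀ t ∈ Icc (0:ℝ) T, ψa t = ψ t := fun t ht => by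
    show ψ (pr t) = ψ t; rw [hpr_id t ht]
  have hxann : ∀ t, 0 ≤ xa t := fun t => abs_nonneg _
  have hψann : ∀ t, 0 ≤ ψa t := fun t => hψnn _ (hpr_mem t)
  -- primitives
  set X : ℝ → ℝ := fun t => ∫ s in (0:ℝ)..t, xa s with hXdef
  set Ψ : ℝ → ℝ := fun t => ∫ s in (0:ℝ)..t, ψa s with hΨdef
  have hXint : ∀ t ∈ Icc (0:ℝ) T, (∫ s in (0:ℝ)..t, |x s|) = X t := by
    intro t ht
    apply intervalIntegral.integral_congr
    intro s hs
    rw [uIcc_of_le ht.1] at hs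
    exact (hxa_eq s ⟨hs.1, le_trans hs.2 ht.2⟩).symm
  have hΨint : ∀ t ∈ Icc (0:ℝ) T, (∫ s in (0:ℝ)..t, ψ s) = Ψ t := by
    intro t ht
    apply intervalIntegral.integral_congr
    intro s hs
    rw [uIcc_of_le ht.1] at hs
    exact (hψa_eq s ⟨hs.1, le_trans hs.2 ht.2⟩).symm
  have hX' : ∀ t, HasDerivAt X (xa t) t := fun t =>
    (hxac.integral_hasStrictDerivAt 0 t).hasDerivAt
  have hΨ' : ∀ t, HasDerivAt Ψ (ψa t) t := fun t =>
    (hψac.integral_hasStrictDerivAt 0 t).hasDerivAt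
  have hXcont : Continuous X := continuous_iff_continuousAt.mpr fun t => (hX' t).continuousAt
  have hΨcont : Continuous Ψ := continuous_iff_continuousAt.mpr fun t => (hΨ' t).continuousAt
  have hXnn : ∀ t ∈ Icc (0:ℝ) T, 0 ≤ X t := fun t ht =>
    intervalIntegral.integral_nonneg ht.1 (fun s _ => hxann s)
  have hΨnn : ∀ t ∈ Icc (0:ℝ) T, 0 ≤ Ψ t := fun t ht =>
    intervalIntegral.integral_nonneg ht.1 (fun s _ => hψann s)
  -- bounds
  obtain ⟨CX, hCX⟩ := isCompact_Icc.exists_bound_of_continuousOn hXcont.continuousOn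
  obtain ⟨CΨ, hCΨ⟩ := isCompact_Icc.exists_bound_of_continuousOn hΨcont.continuousOn
  set B : ℝ := max CX CΨ with hBdef
  have hB0 : 0 ≤ B := le_trans (norm_nonneg (X 0)) (le_trans (hCX 0 h0mem) (le_max_left _ _))
  have hXB : ∀ t ∈ Icc (0:ℝ) T, X t ≤ B := fun t ht =>
    le_trans (le_abs_self _) (le_trans (hCX t ht) (le_max_left _ _))
  have hΨB : ∀ t ∈ Icc (0:ℝ) T, Ψ t ≤ B := fun t ht =>
    le_trans (le_abs_self _) (le_trans (hCΨ t ht) (le_max_right _ _))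
  obtain ⟨Bx, hBx⟩ := isCompact_Icc.exists_bound_of_continuousOn hx
  have hBx0 : 0 ≤ Bx := le_trans (norm_nonneg (x 0)) (hBx 0 h0mem)
  have hBxabs : ∀ t ∈ Icc (0:ℝ) T, |x t| ≤ Bx := fun t ht => hBx t ht
  -- comparison sums
  set SX : ℝ → ℝ := fun t => ∑ m ∈ Finset.Icc 2 N, (m:ℝ) * M m t * (X t) ^ (m - 1) with hSXdef
  set SΨ : ℝ → ℝ := fun t => ∑ m ∈ Finset.Icc 2 N, (m:ℝ) * M m t * (Ψ t) ^ (m - 1) with hSΨdef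
  set AX : ℝ → ℝ := fun t => ∑ m ∈ Finset.Icc 1 N, L m t * (X t) ^ m with hAXdef
  set AΨ : ℝ → ℝ := fun t => ∑ m ∈ Finset.Icc 1 N, L m t * (Ψ t) ^ m with hAΨdef
  set H : ℝ → ℝ := fun t =>
    ∑ m ∈ Finset.Icc 2 N, (m:ℝ) * M m t * (((m - 1 : ℕ):ℝ) * B ^ (m - 2)) with hHdef
  set G : ℝ → ℝ := fun t =>
    ∑ m ∈ Finset.Icc 1 N, L m t * ((m:ℝ) * B ^ (m - 1)) with hGdef
  have hHc : ContinuousOn H (Icc 0 T) := by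
    apply continuousOn_finset_sum
    intro m hm
    exact (continuousOn_const.mul (hMc m hm)).mul continuousOn_const
  have hGc : ContinuousOn G (Icc 0 T) := by
    apply continuousOn_finset_sum
    intro m hm
    exact (hLc m hm).mul continuousOn_const
  have hHnn : ∀ t ∈ Icc (0:ℝ) T, 0 ≤ H t := by
    intro t ht
    apply Finset.sum_nonneg
    intro m hm
    have := hMnn m hm t ht
    positivity
  have hGnn : ∀ t ∈ Icc (0:ℝ) T, 0 ≤ G t := by
    intro t ht
    apply Finset.sum_nonneg
    intro m hm
    have := hLnn m hm t ht
    positivity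
  obtain ⟨CH, hCH⟩ := isCompact_Icc.exists_bound_of_continuousOn hHc
  obtain ⟨CG, hCG⟩ := isCompact_Icc.exists_bound_of_continuousOn hGc
  have hCH0 : 0 ≤ CH := le_trans (norm_nonneg (H 0)) (hCH 0 h0mem)
  have hCG0 : 0 ≤ CG := le_trans (norm_nonneg (G 0)) (hCG 0 h0mem)
  have hCH' : ∀ t ∈ Icc (0:ℝ) T, H t ≤ CH := fun t ht => le_trans (le_abs_self _) (hCH t ht)
  have hCG' : ∀ t ∈ Icc (0:ℝ) T, G t ≤ CG := fun t ht => le_trans (le_abs_self _) (hCG t ht)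
  -- the gap 1 - SΨ is bounded below by a positive constant c
  have hSΨc : ContinuousOn SΨ (Icc 0 T) := by
    apply continuousOn_finset_sum
    intro m hm
    exact (continuousOn_const.mul (hMc m hm)).mul ((hΨcont.continuousOn).pow _)
  have hSΨlt : ∀ t ∈ Icc (0:ℝ) T, SΨ t < 1 := by
    intro t ht
    have := hψlt t ht
    rwa [hΨint t ht] at this
  obtain ⟨t₀, ht₀, hmax⟩ := isCompact_Icc.exists_isMaxOn ⟨0, h0mem⟩ hSΨc
  set c : ℝ := 1 - SΨ t₀ with hcdef
  have hc : 0 < c := sub_pos.mpr (hSΨlt t₀ ht₀)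
  have hcle : ∀ t ∈ Icc (0:ℝ) T, c ≤ 1 - SΨ t := fun t ht => by
    have := hmax ht
    simp only [mem_setOf_eq] at this
    linarith [this]
  set K : ℝ := (Bx * CH + CG) / c with hKdef
  have hK0 : 0 ≤ K := div_nonneg (by positivity) hc.le
  -- master inequality
  have master : ∀ t ∈ Icc (0:ℝ) T,
      (|x t| - ψ t) * (1 - SΨ t) ≤ |x t| * (SX t - SΨ t) + (AX t - AΨ t) := by
    intro t ht
    have h1 := hineq t ht
    have h2 := hψeq t ht
    rw [hXint t ht] at h1
    rw [hΨint t ht] at h2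
    have e1 : (∑ m ∈ Finset.Icc 2 N, (m:ℝ) * M m t * (X t) ^ (m - 1)) = SX t := rfl
    have e2 : (∑ m ∈ Finset.Icc 2 N, (m:ℝ) * M m t * (Ψ t) ^ (m - 1)) = SΨ t := rfl
    have e3 : (∑ m ∈ Finset.Icc 1 N, L m t * (X t) ^ m) = AX t := rfl
    have e4 : (∑ m ∈ Finset.Icc 1 N, L m t * (Ψ t) ^ m) = AΨ t := rfl
    rw [e1, e3] at h1
    rw [e2, e4] at h2
    nlinarith [h1, h2]
  -- bounding the right-hand side of the master inequality
  have hSdiff : ∀ t ∈ Icc (0:ℝ) T, SX t - SΨ t ≤ H t * max (X t - Ψ t) 0 := by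
    intro t ht
    have expand : SX t - SΨ t =
        ∑ m ∈ Finset.Icc 2 N,
          ((m:ℝ) * M m t * (X t) ^ (m - 1) - (m:ℝ) * M m t * (Ψ t) ^ (m - 1)) := by
      rw [Finset.sum_sub_distrib]
    rw [expand, Finset.sum_mul (s := Finset.Icc 2 N)]
    apply Finset.sum_le_sum
    intro m hm
    have hMn := hMnn m hm t ht
    have hpw := aux_pow_sub_pow_le (hXnn t ht) (hΨnn t ht) (hXB t ht) (hΨB t ht) (m - 1)
    calc (m:ℝ) * M m t * (X t) ^ (m - 1) - (m:ℝ) * M m t * (Ψ t) ^ (m - 1)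
        = ((m:ℝ) * M m t) * ((X t) ^ (m - 1) - (Ψ t) ^ (m - 1)) := by ring
      _ ≤ ((m:ℝ) * M m t) * (((m - 1 : ℕ):ℝ) * B ^ ((m - 1) - 1) * max (X t - Ψ t) 0) :=
          mul_le_mul_of_nonneg_left hpw (by positivity)
      _ = (m:ℝ) * M m t * (((m - 1 : ℕ):ℝ) * B ^ (m - 2)) * max (X t - Ψ t) 0 := by
          have : (m - 1) - 1 = m - 2 := by omega
          rw [this]; ring
  have hAdiff : ∀ t ∈ Icc (0:ℝ) T, AX t - AΨ t ≤ G t * max (X t - Ψ t) 0 := by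
    intro t ht
    have expand : AX t - AΨ t =
        ∑ m ∈ Finset.Icc 1 N, (L m t * (X t) ^ m - L m t * (Ψ t) ^ m) := by
      rw [Finset.sum_sub_distrib]
    rw [expand, Finset.sum_mul (s := Finset.Icc 1 N)]
    apply Finset.sum_le_sum
    intro m hm
    have hLn := hLnn m hm t ht
    have hpw := aux_pow_sub_pow_le (hXnn t ht) (hΨnn t ht) (hXB t ht) (hΨB t ht) m
    calc L m t * (X t) ^ m - L m t * (Ψ t) ^ m
        = L m t * ((X t) ^ m - (Ψ t) ^ m) := by ring
      _ ≤ L m t * ((m:ℝ) * B ^ (m - 1) * max (X t - Ψ t) 0) :=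
          mul_le_mul_of_nonneg_left hpw hLn
      _ = L m t * ((m:ℝ) * B ^ (m - 1)) * max (X t - Ψ t) 0 := by ring
  -- key differential inequality
  have key : ∀ t ∈ Icc (0:ℝ) T, xa t - ψa t ≤ K * max (X t - Ψ t) 0 := by
    intro t ht
    rw [hxa_eq t ht, hψa_eq t ht]
    set mw := max (X t - Ψ t) 0 with hmwdef
    have hmw0 : 0 ≤ mw := le_max_right _ _
    have hrhs : |x t| * (SX t - SΨ t) + (AX t - AΨ t) ≤ (Bx * CH + CG) * mw := by
      have r1 : |x t| * (SX t - SΨ t) ≤ Bx * (CH * mw) := by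
        calc |x t| * (SX t - SΨ t) ≤ |x t| * (H t * mw) :=
              mul_le_mul_of_nonneg_left (hSdiff t ht) (abs_nonneg _)
          _ ≤ Bx * (H t * mw) :=
              mul_le_mul_of_nonneg_right (hBxabs t ht)
                (mul_nonneg (hHnn t ht) hmw0)
          _ ≤ Bx * (CH * mw) :=
              mul_le_mul_of_nonneg_left
                (mul_le_mul_of_nonneg_right (hCH' t ht) hmw0) hBx0
      have r2 : AX t - AΨ t ≤ CG * mw :=
        le_trans (hAdiff t ht) (mul_le_mul_of_nonneg_right (hCG' t ht) hmw0)
      nlinarith [r1, r2]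
    have hm := master t ht
    rcases le_or_gt (|x t| - ψ t) 0 with hd | hd
    · have : 0 ≤ K * mw := mul_nonneg hK0 hmw0
      linarith
    · have h3 : (|x t| - ψ t) * c ≤ (|x t| - ψ t) * (1 - SΨ t) :=
        mul_le_mul_of_nonneg_left (hcle t ht) hd.le
      have h4 : (|x t| - ψ t) * c ≤ (Bx * CH + CG) * mw := by linarith
      rw [hKdef, div_mul_eq_mul_div, le_div_iff₀ hc]
      linarith
  -- Grönwall-type conclusion: X ≤ Ψ on [0,T]
  have hXΨ : ∀ t ∈ Icc (0:ℝ) T, X t - Ψ t ≤ 0 := by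
    apply aux_nocross hK0 (w' := fun t => xa t - ψa t)
      (fun t => (hX' t).sub (hΨ' t))
    · show X 0 - Ψ 0 = 0
      simp [hXdef, hΨdef, intervalIntegral.integral_same]
    · exact key
  -- final pointwise estimate
  intro t ht
  have hm := master t ht
  have hPQ : X t ≤ Ψ t := by linarith [hXΨ t ht]
  have hS0 : SX t - SΨ t ≤ 0 := by
    have : SX t ≤ SΨ t := by
      apply Finset.sum_le_sum
      intro m hm'
      apply mul_le_mul_of_nonneg_left _ (by have := hMnn m hm' t ht; positivity)
      exact pow_le_pow_left₀ (hXnn t ht) hPQ _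
    linarith
  have hA0 : AX t - AΨ t ≤ 0 := by
    have : AX t ≤ AΨ t := by
      apply Finset.sum_le_sum
      intro m hm'
      exact mul_le_mul_of_nonneg_left (pow_le_pow_left₀ (hXnn t ht) hPQ _) (hLnn m hm' t ht)
    linarith
  have hrhs : |x t| * (SX t - SΨ t) + (AX t - AΨ t) ≤ 0 := by
    have := mul_nonpos_of_nonneg_of_nonpos (abs_nonneg (x t)) hS0
    linarith
  have hpos : 0 < 1 - SΨ t := sub_pos.mpr (hSΨlt t ht)
  nlinarith [hm, hrhs, hpos]
end

section
/- Let T > 0 and let F, L : [0,T] → ℝ be continuous and non-negative. If x : [0,T] → ℝ is continuous and satisfies |x(t)| ≤ F(t) + L(t)·∫₀ᵗ |x(s)| ds for all t ∈ [0,T], then |x(t)| ≤ F(t) + L(t)·e^{∫₀ᵗ L(s)ds}·∫₀ᵗ F(s)·e^{-∫₀ˢ L(s₁)ds₁} ds for all t ∈ [0,T]. -/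
open Set intervalIntegral

/-- The best possible (unimprovable) estimate for continuous solutions of the
linear integral inequality `|x(t)| ≤ F(t) + L(t) ∫₀ᵗ |x(s)| ds`:
`|x(t)| ≤ F(t) + L(t) e^{∫₀ᵗ L} ∫₀ᵗ F(s) e^{-∫₀ˢ L} ds`. -/
theorem stmt16 (T : ℝ) (hT : 0 < T)
    (F L : ℝ → ℝ)
    (hFc : ContinuousOn F (Icc 0 T)) (hFnn : ∀ t ∈ Icc (0:ℝ) T, 0 ≤ F t)
    (hLc : ContinuousOn L (Icc 0 T)) (hLnn : ∀ t ∈ Icc (0:ℝ) T, 0 ≤ L t)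
    (x : ℝ → ℝ) (hx : ContinuousOn x (Icc 0 T))
    (hineq : ∀ t ∈ Icc (0:ℝ) T, |x t| ≤ F t + L t * ∫ s in (0:ℝ)..t, |x s|) :
    ∀ t ∈ Icc (0:ℝ) T,
      |x t| ≤ F t + L t * Real.exp (∫ s in (0:ℝ)..t, L s) *
        ∫ s in (0:ℝ)..t, F s * Real.exp (-∫ s₁ in (0:ℝ)..s, L s₁) := by
  set A : ℝ → ℝ := fun t => ∫ s in (0:ℝ)..t, L s with hA_def
  set u : ℝ → ℝ := fun t => ∫ s in (0:ℝ)..t, |x s| with hu_def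
  set φ : ℝ → ℝ := fun s => F s * Real.exp (-A s) with hφ_def
  set g : ℝ → ℝ := fun t => (∫ s in (0:ℝ)..t, φ s) - Real.exp (-A t) * u t with hg_def
  have hIccT : uIcc (0:ℝ) T = Icc 0 T := uIcc_of_le hT.le
  have hsub : ∀ t ∈ Icc (0:ℝ) T, uIcc (0:ℝ) t ⊆ Icc 0 T := by
    intro t ht
    rw [uIcc_of_le ht.1]
    exact Icc_subset_Icc le_rfl ht.2
  -- continuity of A on Icc
  have hAc : ContinuousOn A (Icc 0 T) := by
    rw [← hIccT]
    exact intervalIntegral.continuousOn_primitive_interval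
      (by rw [hIccT]; exact hLc.integrableOn_compact isCompact_Icc)
  have hxabs : ContinuousOn (fun s => |x s|) (Icc 0 T) := hx.abs
  have hφc : ContinuousOn φ (Icc 0 T) :=
    hFc.mul ((Real.continuous_exp.comp_continuousOn hAc.neg))
  have huc : ContinuousOn u (Icc 0 T) := by
    rw [← hIccT]
    exact intervalIntegral.continuousOn_primitive_interval
      (by rw [hIccT]; exact hxabs.integrableOn_compact isCompact_Icc)
  have hgc : ContinuousOn g (Icc 0 T) := by
    apply ContinuousOn.sub
    · rw [← hIccT]
      exact intervalIntegral.continuousOn_primitive_interval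
        (by rw [hIccT]; exact hφc.integrableOn_compact isCompact_Icc)
    · exact (Real.continuous_exp.comp_continuousOn hAc.neg).mul huc
  -- derivatives on the interior
  have hIoo : ∀ t ∈ Ioo (0:ℝ) T, Ioo (0:ℝ) T ∈ nhds t := fun t ht => isOpen_Ioo.mem_nhds ht
  have hderiv : ∀ t ∈ Ioo (0:ℝ) T,
      HasDerivAt g (φ t - (Real.exp (-A t) * (-(L t)) * u t + Real.exp (-A t) * |x t|)) t := by
    intro t ht
    have htIcc : t ∈ Icc (0:ℝ) T := Ioo_subset_Icc_self ht
    have hLIoo : ContinuousOn L (Ioo 0 T) := hLc.mono Ioo_subset_Icc_self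
    have hxIoo : ContinuousOn (fun s => |x s|) (Ioo 0 T) := hxabs.mono Ioo_subset_Icc_self
    have hφIoo : ContinuousOn φ (Ioo 0 T) := hφc.mono Ioo_subset_Icc_self
    have hA' : HasDerivAt A (L t) t :=
      intervalIntegral.integral_hasDerivAt_right
        ((hLc.mono (hsub t htIcc)).intervalIntegrable)
        (hLIoo.stronglyMeasurableAtFilter isOpen_Ioo t ht)
        (hLIoo.continuousAt (hIoo t ht))
    have hu' : HasDerivAt u (|x t|) t :=
      intervalIntegral.integral_hasDerivAt_right
        ((hxabs.mono (hsub t htIcc)).intervalIntegrable)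
        (hxIoo.stronglyMeasurableAtFilter isOpen_Ioo t ht)
        (hxIoo.continuousAt (hIoo t ht))
    have hφ' : HasDerivAt (fun r => ∫ s in (0:ℝ)..r, φ s) (φ t) t :=
      intervalIntegral.integral_hasDerivAt_right
        ((hφc.mono (hsub t htIcc)).intervalIntegrable)
        (hφIoo.stronglyMeasurableAtFilter isOpen_Ioo t ht)
        (hφIoo.continuousAt (hIoo t ht))
    have hE : HasDerivAt (fun r => Real.exp (-A r)) (Real.exp (-A t) * (-(L t))) t :=
      (hA'.neg).exp
    exact hφ'.sub (hE.mul hu')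
  -- nonneg of u on Icc
  have hunn : ∀ t ∈ Icc (0:ℝ) T, 0 ≤ u t := by
    intro t ht
    apply intervalIntegral.integral_nonneg ht.1
    intro s _
    exact abs_nonneg _
  -- derivative nonneg
  have hmono : MonotoneOn g (Icc 0 T) := by
    apply monotoneOn_of_deriv_nonneg (convex_Icc 0 T) hgc
    · rw [interior_Icc]
      intro t ht
      exact ((hderiv t ht).differentiableAt).differentiableWithinAt
    · rw [interior_Icc]
      intro t ht
      have htIcc : t ∈ Icc (0:ℝ) T := Ioo_subset_Icc_self ht
      rw [(hderiv t ht).deriv]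
      have hE : (0:ℝ) < Real.exp (-A t) := Real.exp_pos _
      have h1 : |x t| ≤ F t + L t * u t := hineq t htIcc
      have key : φ t - (Real.exp (-A t) * (-(L t)) * u t + Real.exp (-A t) * |x t|)
          = Real.exp (-A t) * (F t + L t * u t - |x t|) := by
        simp only [hφ_def]; ring
      rw [key]
      exact mul_nonneg hE.le (by linarith)
  -- conclude
  intro t ht
  have h0 : (0:ℝ) ∈ Icc (0:ℝ) T := ⟨le_rfl, hT.le⟩
  have hg0 : g 0 = 0 := by
    simp [hg_def, hu_def, hA_def]
  have hgt : 0 ≤ g t := by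
    rw [← hg0]
    exact hmono h0 ht ht.1
  have hEpos : (0:ℝ) < Real.exp (-A t) := Real.exp_pos _
  have hu_le : u t ≤ Real.exp (A t) * ∫ s in (0:ℝ)..t, φ s := by
    have : Real.exp (-A t) * u t ≤ ∫ s in (0:ℝ)..t, φ s := by
      have := hgt
      simp only [hg_def, sub_nonneg] at this
      exact this
    calc u t = Real.exp (A t) * (Real.exp (-A t) * u t) := by
          rw [← mul_assoc, ← Real.exp_add]; simp
      _ ≤ Real.exp (A t) * ∫ s in (0:ℝ)..t, φ s :=
          mul_le_mul_of_nonneg_left this (Real.exp_pos _).le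
  have h1 : |x t| ≤ F t + L t * u t := hineq t ht
  have h2 : L t * u t ≤ L t * (Real.exp (A t) * ∫ s in (0:ℝ)..t, φ s) :=
    mul_le_mul_of_nonneg_left hu_le (hLnn t ht)
  calc |x t| ≤ F t + L t * u t := h1
    _ ≤ F t + L t * (Real.exp (A t) * ∫ s in (0:ℝ)..t, φ s) := by linarith
    _ = F t + L t * Real.exp (∫ s in (0:ℝ)..t, L s) *
        ∫ s in (0:ℝ)..t, F s * Real.exp (-∫ s₁ in (0:ℝ)..s, L s₁) := by
      simp only [hφ_def, hA_def]; ring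
end

section
/- Let B > 0. Then: (i) for every α ∈ (0,B], sup_{β ∈ (0,B]} |β³ - α²·β| ≥ B³/4; and (ii) for α = (√3/2)·B, sup_{β ∈ (0,B]} |β³ - α²·β| = B³/4. Hence α* = (√3/2)B minimizes over α ∈ (0,B] the quantity max_{β∈(0,B]} |β³ - α²β|. -/
open Set

lemma bdd17 (B α : ℝ) (hα : α ∈ Ioc (0:ℝ) B) :
    BddAbove ((fun β => |β ^ 3 - α ^ 2 * β|) '' Ioc 0 B) := by
  obtain ⟨hα0, hαB⟩ := hα
  have hB : (0:ℝ) < B := lt_of_lt_of_le hα0 hαB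
  refine ⟨2 * B ^ 3, ?_⟩
  rintro x ⟨β, ⟨hβ0, hβB⟩, rfl⟩
  have h1 : |β ^ 3 - α ^ 2 * β| ≤ β ^ 3 + α ^ 2 * β := by
    rw [abs_sub_le_iff]
    constructor <;> nlinarith [sq_nonneg α, sq_nonneg β]
  have h2 : β ^ 3 + α ^ 2 * β ≤ 2 * B ^ 3 := by
    nlinarith [pow_le_pow_left₀ hβ0.le hβB 3,
      mul_le_mul (pow_le_pow_left₀ hα0.le hαB 2) hβB hβ0.le (sq_nonneg B)]
  exact le_trans h1 h2

/-- Optimal test-signal amplitude for the quadratic model of the reference system: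
(i) for every `α ∈ (0,B]`, `sup_{β ∈ (0,B]} |β³ - α²β| ≥ B³/4`;
(ii) for `α* = (√3/2)B` the supremum equals `B³/4`;
hence `α* = (√3/2)B` minimizes `max_{β ∈ (0,B]} |β³ - α²β|` over `α ∈ (0,B]`. -/
theorem stmt17 (B : ℝ) (hB : 0 < B) :
    (∀ α ∈ Ioc (0:ℝ) B,
      B ^ 3 / 4 ≤ sSup ((fun β => |β ^ 3 - α ^ 2 * β|) '' Ioc 0 B)) ∧
    sSup ((fun β => |β ^ 3 - (Real.sqrt 3 / 2 * B) ^ 2 * β|) '' Ioc 0 B) = B ^ 3 / 4 := by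
  have hs0 : (0:ℝ) < Real.sqrt 3 := Real.sqrt_pos.mpr (by norm_num)
  have hs2 : (Real.sqrt 3) ^ 2 = 3 := Real.sq_sqrt (by norm_num)
  have hs1 : (1:ℝ) ≤ Real.sqrt 3 := by nlinarith
  set s := Real.sqrt 3
  constructor
  · rintro α ⟨hα0, hαB⟩
    have hbdd := bdd17 B α ⟨hα0, hαB⟩
    by_cases h : α ≤ s / 2 * B
    · -- use β = B
      have hmem : |B ^ 3 - α ^ 2 * B| ∈ (fun β => |β ^ 3 - α ^ 2 * β|) '' Ioc (0:ℝ) B :=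
        ⟨B, ⟨hB, le_refl B⟩, rfl⟩
      refine le_trans ?_ (le_csSup hbdd hmem)
      have hα2 : α ^ 2 ≤ 3 / 4 * B ^ 2 := by nlinarith
      have : B ^ 3 / 4 ≤ B ^ 3 - α ^ 2 * B := by nlinarith
      calc B ^ 3 / 4 ≤ B ^ 3 - α ^ 2 * B := this
        _ ≤ |B ^ 3 - α ^ 2 * B| := le_abs_self _
    · push_neg at h
      -- use β = α / s
      have hβ0 : 0 < α / s := div_pos hα0 hs0
      have hβB : α / s ≤ B := by
        rw [div_le_iff₀ hs0]
        nlinarith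
      have hmem : |(α / s) ^ 3 - α ^ 2 * (α / s)| ∈
          (fun β => |β ^ 3 - α ^ 2 * β|) '' Ioc (0:ℝ) B := ⟨α / s, ⟨hβ0, hβB⟩, rfl⟩
      refine le_trans ?_ (le_csSup hbdd hmem)
      have hval : (α / s) ^ 3 - α ^ 2 * (α / s) = -(2 * α ^ 3 / (3 * s)) := by
        field_simp
        linear_combination (-1) * hs2
      rw [hval, abs_neg, abs_of_pos (by positivity)]
      rw [div_le_div_iff₀ (by norm_num) (by positivity)]
      have hs3 : s ^ 3 = 3 * s := by linear_combination s * hs2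
      nlinarith [mul_nonneg (le_of_lt (sub_pos.mpr (by nlinarith : s * B < 2 * α)))
        (by positivity : (0:ℝ) ≤ 4 * α ^ 2 + 2 * α * (s * B) + (s * B) ^ 2),
        hs3, pow_pos hB 3, mul_pos hs0 (pow_pos hB 3)]
  · have hst : (s / 2 * B) ^ 2 = 3 / 4 * B ^ 2 := by
      rw [mul_pow, div_pow, hs2]; ring
    apply le_antisymm
    · have hne : ((fun β => |β ^ 3 - (s / 2 * B) ^ 2 * β|) '' Ioc (0:ℝ) B).Nonempty :=
        ⟨_, mem_image_of_mem _ ⟨hB, le_refl B⟩⟩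
      apply csSup_le hne
      rintro x ⟨β, ⟨hβ0, hβB⟩, rfl⟩
      simp only [hst]
      rw [abs_le]
      constructor
      · nlinarith [sq_nonneg (β - B / 2), mul_nonneg (le_of_lt hβ0) (sq_nonneg (β - B / 2))]
      · nlinarith [sq_nonneg (β + B / 2), mul_nonneg (sub_nonneg.mpr hβB) (sq_nonneg (β + B / 2))]
    · have hmem : |B ^ 3 - (s / 2 * B) ^ 2 * B| ∈
          (fun β => |β ^ 3 - (s / 2 * B) ^ 2 * β|) '' Ioc (0:ℝ) B := ⟨B, ⟨hB, le_refl B⟩, rfl⟩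
      have hαs : s / 2 * B ∈ Ioc (0:ℝ) B := by
        constructor
        · positivity
        · nlinarith
      refine le_trans ?_ (le_csSup (bdd17 B _ hαs) hmem)
      rw [hst]
      rw [show B ^ 3 - 3 / 4 * B ^ 2 * B = B ^ 3 / 4 by ring, abs_of_pos (by positivity)]
end

section
/- Let B > 0 and set α₁* = (2√3 - 3)·B and α₂* = 2α₁* = (4√3 - 6)·B. Then: (i) sup_{β ∈ (0,B]} |β³ - (α₁* + α₂*)β² + α₁*α₂*·β| = (52 - 30√3)·B³; and (ii) for all α₁, α₂ ∈ (0,B], sup_{β ∈ (0,B]} |β³ - (α₁ + α₂)β² + α₁α₂·β| ≥ (52 - 30√3)·B³. -/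
open Set

/-- Optimal amplitudes for the quadratic product-integration model:
with `α₁* = (2√3 - 3)B` and `α₂* = 2α₁* = (4√3 - 6)B`,
(i) `sup_{β ∈ (0,B]} |β³ - (α₁* + α₂*)β² + α₁*α₂*β| = (52 - 30√3)B³`, and
(ii) for all `α₁, α₂ ∈ (0,B]`,
`sup_{β ∈ (0,B]} |β³ - (α₁+α₂)β² + α₁α₂β| ≥ (52 - 30√3)B³`. -/
theorem stmt18 (B : ℝ) (hB : 0 < B) :
    sSup ((fun β =>
        |β ^ 3 - ((2 * Real.sqrt 3 - 3) * B + (4 * Real.sqrt 3 - 6) * B) * β ^ 2 +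
          ((2 * Real.sqrt 3 - 3) * B) * ((4 * Real.sqrt 3 - 6) * B) * β|) '' Ioc 0 B) =
      (52 - 30 * Real.sqrt 3) * B ^ 3 ∧
    ∀ α₁ ∈ Ioc (0:ℝ) B, ∀ α₂ ∈ Ioc (0:ℝ) B,
      (52 - 30 * Real.sqrt 3) * B ^ 3 ≤
        sSup ((fun β => |β ^ 3 - (α₁ + α₂) * β ^ 2 + α₁ * α₂ * β|) '' Ioc 0 B) := by
  set s := Real.sqrt 3 with hsdef
  have hs : s ^ 2 = 3 := Real.sq_sqrt (by norm_num)
  have hs0 : 0 ≤ s := Real.sqrt_nonneg 3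
  have hs1 : (1.7 : ℝ) < s := by nlinarith
  have hs2 : s < 1.8 := by nlinarith
  have hc : 0 < 52 - 30 * s := by nlinarith
  constructor
  · apply IsGreatest.csSup_eq
    constructor
    · refine ⟨B, ⟨hB, le_refl B⟩, ?_⟩
      have hval : B ^ 3 - ((2 * s - 3) * B + (4 * s - 6) * B) * B ^ 2 +
          ((2 * s - 3) * B) * ((4 * s - 6) * B) * B = (52 - 30 * s) * B ^ 3 := by
        linear_combination (8 * B ^ 3) * hs
      simp only [hval]
      exact abs_of_nonneg (by positivity)
    · rintro y ⟨β, ⟨hβ0, hβB⟩, rfl⟩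
      simp only
      rw [abs_le]
      constructor
      · have key2 : β ^ 3 - ((2 * s - 3) * B + (4 * s - 6) * B) * β ^ 2 +
            ((2 * s - 3) * B) * ((4 * s - 6) * B) * β + (52 - 30 * s) * B ^ 3 =
            (β - (s - 1) * B) ^ 2 * (β - (4 * s - 7) * B) := by
          linear_combination (-15 * B ^ 3 - β * B ^ 2 + 4 * s * B ^ 3) * hs
        have h2 : 0 ≤ (β - (s - 1) * B) ^ 2 * (β - (4 * s - 7) * B) := by
          apply mul_nonneg (sq_nonneg _)
          nlinarith
        linarith
      · have key1 : (52 - 30 * s) * B ^ 3 -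
            (β ^ 3 - ((2 * s - 3) * B + (4 * s - 6) * B) * β ^ 2 +
              ((2 * s - 3) * B) * ((4 * s - 6) * B) * β) =
            (B - β) * (β - (3 * s - 5) * B) ^ 2 := by
          linear_combination (-9 * B ^ 3 + β * B ^ 2) * hs
        have h1 : 0 ≤ (B - β) * (β - (3 * s - 5) * B) ^ 2 :=
          mul_nonneg (by linarith) (sq_nonneg _)
        linarith
  · intro α₁ hα₁ α₂ hα₂
    by_contra hcon
    push_neg at hcon
    have hbdd : BddAbove ((fun β => |β ^ 3 - (α₁ + α₂) * β ^ 2 + α₁ * α₂ * β|) '' Ioc 0 B) := by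
      refine ⟨4 * B ^ 3, ?_⟩
      rintro y ⟨β, ⟨hβ0, hβB⟩, rfl⟩
      simp only
      have e1 : β ^ 3 ≤ B ^ 3 := pow_le_pow_left₀ hβ0.le hβB 3
      have e2 : β ^ 2 ≤ B ^ 2 := pow_le_pow_left₀ hβ0.le hβB 2
      have e3 : (α₁ + α₂) * β ^ 2 ≤ 2 * B * B ^ 2 := by
        apply mul_le_mul (by linarith [hα₁.2, hα₂.2]) e2 (sq_nonneg β) (by positivity)
      have e4 : α₁ * α₂ * β ≤ B * B * B := by
        apply mul_le_mul (mul_le_mul hα₁.2 hα₂.2 hα₂.1.le hB.le) hβB hβ0.le (by positivity)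
      have p1 : 0 ≤ β ^ 3 := by positivity
      have p2 : 0 ≤ (α₁ + α₂) * β ^ 2 := by
        apply mul_nonneg (by linarith [hα₁.1, hα₂.1]) (sq_nonneg β)
      have p3 : 0 ≤ α₁ * α₂ * β := by
        apply mul_nonneg (mul_nonneg hα₁.1.le hα₂.1.le) hβ0.le
      rw [abs_le]
      constructor <;> nlinarith
    have hlt : ∀ β ∈ Ioc (0:ℝ) B,
        |β ^ 3 - (α₁ + α₂) * β ^ 2 + α₁ * α₂ * β| < (52 - 30 * s) * B ^ 3 := by
      intro β hβ
      exact lt_of_le_of_lt (le_csSup hbdd ⟨β, hβ, rfl⟩) hcon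
    set t₁ : ℝ := (3 * s - 5) * B with ht₁def
    set t₂ : ℝ := (s - 1) * B with ht₂def
    have ht₁pos : 0 < t₁ := by
      have : (5:ℝ)/3 < s := by nlinarith
      rw [ht₁def]; nlinarith
    have ht₁₂ : t₁ < t₂ := by rw [ht₁def, ht₂def]; nlinarith
    have ht₂B : t₂ < B := by rw [ht₂def]; nlinarith
    have h1 := hlt t₁ ⟨ht₁pos, by linarith⟩
    have h2 := hlt t₂ ⟨by linarith, ht₂B.le⟩
    have h3 := hlt B ⟨hB, le_refl B⟩
    rw [abs_lt] at h1 h2 h3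
    set D : ℝ := (α₁ + α₂) - (6 * s - 9) * B with hDdef
    set E : ℝ := (2 * s - 3) * (4 * s - 6) * B ^ 2 - α₁ * α₂ with hEdef
    have id1 : t₁ * (D * t₁ + E) =
        (52 - 30 * s) * B ^ 3 - (t₁ ^ 3 - (α₁ + α₂) * t₁ ^ 2 + α₁ * α₂ * t₁) := by
      rw [ht₁def, hDdef, hEdef]
      linear_combination ((14 - 3 * s) * B ^ 3) * hs
    have id2 : t₂ * (D * t₂ + E) =
        -((52 - 30 * s) * B ^ 3) - (t₂ ^ 3 - (α₁ + α₂) * t₂ ^ 2 + α₁ * α₂ * t₂) := by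
      rw [ht₂def, hDdef, hEdef]
      linear_combination ((-14 + 3 * s) * B ^ 3) * hs
    have id3 : B * (D * B + E) =
        (52 - 30 * s) * B ^ 3 - (B ^ 3 - (α₁ + α₂) * B ^ 2 + α₁ * α₂ * B) := by
      rw [hDdef, hEdef]
      linear_combination (8 * B ^ 3) * hs
    have g1 : 0 < t₁ * (D * t₁ + E) := by rw [id1]; linarith [h1.2]
    have g2 : t₂ * (D * t₂ + E) < 0 := by rw [id2]; linarith [h2.1]
    have g3 : 0 < B * (D * B + E) := by rw [id3]; linarith [h3.2]
    have L1 : 0 < D * t₁ + E := by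
      by_contra hL; push_neg at hL
      have := mul_nonneg ht₁pos.le (neg_nonneg.2 hL)
      linarith [g1]
    have L2 : D * t₂ + E < 0 := by
      by_contra hL; push_neg at hL
      have := mul_nonneg (show (0:ℝ) ≤ t₂ by linarith) hL
      linarith [g2]
    have L3 : 0 < D * B + E := by
      by_contra hL; push_neg at hL
      have := mul_nonneg hB.le (neg_nonneg.2 hL)
      linarith [g3]
    linarith [mul_pos (show (0:ℝ) < B - t₂ by linarith) L1,
      mul_pos (show (0:ℝ) < t₂ - t₁ by linarith) L3,
      mul_pos (show (0:ℝ) < B - t₁ by linarith) (neg_pos.2 L2)]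
end
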